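/- arXiv:1608.05409 — 7 statements merged into one kernel-verified Lean document; each statement's English description precedes it below -/
import Mathlib

section
/- Let I = (γ, ∞) with γ ∈ ℝ ∪ {−∞}, and let f : I → ℝ be continuously differentiable with f'(x) > 0 for all x ∈ I, f' strictly monotone increasing on I, and log ∘ f' concave on I. Let x, y ∈ I, let A be the 2×2 complex diagonal matrix diag(x, y), and let B be the 2×2 matrix with all entries equal to 1. Then x ≠ y if and only if there exist a unit vector w ∈ ℂ² and t₀ > 0 such that ⟨f(A)w, w⟩ − ⟨f(A + t₀B)w, w⟩ > 0. -/
open Matrix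


lemma two_log_lt {u : ℝ} (hu : 1 < u) : 2 * Real.log u < u - u⁻¹ := by
  have key : StrictMonoOn (fun v : ℝ => v - v⁻¹ - 2 * Real.log v) (Set.Ici 1) := by
    apply strictMonoOn_of_deriv_pos (convex_Ici 1)
    · apply ContinuousOn.sub
      · exact continuousOn_id.sub (continuousOn_inv₀.mono (fun v hv => by
          simp only [Set.mem_Ici] at hv; simp only [Set.mem_compl_iff, Set.mem_singleton_iff]
          intro h; rw [h] at hv; linarith))
      · exact continuousOn_const.mul (Real.continuousOn_log.mono (fun v hv => by
          simp only [Set.mem_Ici] at hv; simp only [Set.mem_compl_iff, Set.mem_singleton_iff]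
          intro h; rw [h] at hv; linarith))
    · intro v hv
      rw [interior_Ici] at hv
      simp only [Set.mem_Ioi] at hv
      have hv0 : v ≠ 0 := by linarith
      have h1 : HasDerivAt (fun v : ℝ => v - v⁻¹ - 2 * Real.log v)
          (1 - (-(v^2)⁻¹) - 2 * v⁻¹) v := by
        exact ((hasDerivAt_id v).sub (hasDerivAt_inv hv0)).sub
          ((Real.hasDerivAt_log hv0).const_mul 2)
      rw [h1.deriv]
      have hv1 : (0:ℝ) < v := by linarith
      have hv2 : v ≠ 1 := by linarith
      have he : 1 - -(v^2)⁻¹ - 2 * v⁻¹ = (v-1)^2 / v^2 := by field_simp; ring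
      rw [he]
      have : v - 1 ≠ 0 := fun h => hv2 (by linarith)
      positivity
  have h := key (Set.self_mem_Ici) (Set.mem_Ici.mpr hu.le) hu
  simp only [Real.log_one, inv_one] at h
  linarith

lemma log_mean_gt {p q : ℝ} (hp : 0 < p) (hpq : p < q) :
    Real.sqrt (p * q) * (Real.log q - Real.log p) < q - p := by
  have hq : 0 < q := hp.trans hpq
  set u := Real.sqrt (q / p) with hu
  have hu1 : 1 < u := by
    rw [hu]
    have : (1:ℝ) < q / p := (one_lt_div hp).mpr hpq
    calc (1:ℝ) = Real.sqrt 1 := (Real.sqrt_one).symm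
      _ < Real.sqrt (q/p) := Real.sqrt_lt_sqrt zero_le_one this
  have hu0 : 0 < u := by linarith
  have husq : u^2 = q / p := Real.sq_sqrt (le_of_lt (div_pos hq hp))
  have hlog : Real.log q - Real.log p = 2 * Real.log u := by
    rw [hu, Real.log_sqrt (le_of_lt (div_pos hq hp)), Real.log_div hq.ne' hp.ne']
    ring
  have hsqrt : Real.sqrt (p * q) = p * u := by
    rw [hu, ← Real.sqrt_sq hp.le, ← Real.sqrt_mul (sq_nonneg p)]
    congr 1
    field_simp
    ring
    exact Real.sq_sqrt (sq_nonneg _)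
  have h2 := two_log_lt hu1
  rw [hlog, hsqrt]
  have hq' : q = p * u^2 := by rw [husq]; field_simp
  have : p * u * (2 * Real.log u) < p * u * (u - u⁻¹) := by
    apply mul_lt_mul_of_pos_left h2 (mul_pos hp hu0)
  calc p * u * (2 * Real.log u) < p * u * (u - u⁻¹) := this
    _ = p * u^2 - p := by field_simp
    _ = q - p := by rw [← hq']

lemma key_ineq {I : Set ℝ} {f f' : ℝ → ℝ}
    (hderiv : ∀ x ∈ I, HasDerivAt f (f' x) x)
    (hcont : ContinuousOn f' I)
    (hpos : ∀ x ∈ I, 0 < f' x)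
    (hmono : StrictMonoOn f' I)
    (hconc : ∀ x ∈ I, ∀ y ∈ I, ∀ t ∈ Set.Icc (0:ℝ) 1,
      t * Real.log (f' x) + (1 - t) * Real.log (f' y)
        ≤ Real.log (f' (t * x + (1 - t) * y)))
    {x y : ℝ} (hx : x ∈ I) (hy : y ∈ I) (hsub : Set.Icc x y ⊆ I) (hxy : x < y) :
    Real.sqrt (f' x * f' y) < (f y - f x) / (y - x) := by
  set p := f' x with hp'
  set q := f' y with hq'
  have hp : 0 < p := hpos x hx
  have hq : 0 < q := hpos y hy
  have hpq : p < q := hmono hx hy hxy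
  have hyx : 0 < y - x := by linarith
  set m := (Real.log q - Real.log p) / (y - x) with hm'
  have hlogpq : Real.log p < Real.log q := Real.log_lt_log hp hpq
  have hm : 0 < m := div_pos (by linarith) hyx
  -- FTC for f'
  have hInt : IntervalIntegrable f' MeasureTheory.volume x y := by
    apply ContinuousOn.intervalIntegrable
    apply hcont.mono
    rw [Set.uIcc_of_le hxy.le]; exact hsub
  have hFTC : ∫ s in x..y, f' s = f y - f x := by
    apply intervalIntegral.integral_eq_sub_of_hasDerivAt
    · intro s hs
      rw [Set.uIcc_of_le hxy.le] at hs
      exact hderiv s (hsub hs)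
    · exact hInt
  -- the exponential comparison function
  set E : ℝ → ℝ := fun s => Real.exp (Real.log p + m * (s - x)) with hE'
  have hEderiv : ∀ s : ℝ, HasDerivAt (fun s => Real.exp (Real.log p + m * (s - x)) / m) (E s) s := by
    intro s
    have h1 : HasDerivAt (fun s : ℝ => Real.log p + m * (s - x)) m s := by
      simpa using (((hasDerivAt_id s).sub_const x).const_mul m).const_add (Real.log p)
    have h2 := (h1.exp).div_const m
    simpa [hE', mul_div_cancel_right₀ _ hm.ne'] using h2
  have hEInt : IntervalIntegrable E MeasureTheory.volume x y :=
    (Real.continuous_exp.comp (by continuity)).continuousOn.intervalIntegrable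
  have hEFTC : ∫ s in x..y, E s = (q - p) / m := by
    rw [intervalIntegral.integral_eq_sub_of_hasDerivAt (fun s _ => hEderiv s) hEInt]
    have e1 : Real.log p + m * (y - x) = Real.log q := by
      rw [hm']; field_simp; ring
    have e2 : Real.log p + m * (x - x) = Real.log p := by ring_nf
    rw [e1, e2, Real.exp_log hq, Real.exp_log hp]
    ring
  -- pointwise comparison
  have hpoint : ∀ s ∈ Set.Icc x y, E s ≤ f' s := by
    intro s hs
    obtain ⟨hs1, hs2⟩ := hs
    set t := (y - s) / (y - x) with ht'
    have ht0 : 0 ≤ t := div_nonneg (by linarith) hyx.le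
    have ht1 : t ≤ 1 := by
      rw [div_le_one hyx]; linarith
    have hconv : t * x + (1 - t) * y = s := by
      rw [ht']; field_simp; ring
    have hcc := hconc x hx y hy t ⟨ht0, ht1⟩
    rw [hconv] at hcc
    have hsI : s ∈ I := hsub ⟨hs1, hs2⟩
    have hlogE : Real.log p + m * (s - x) = t * Real.log p + (1 - t) * Real.log q := by
      rw [hm', ht']; field_simp; ring
    calc E s = Real.exp (t * Real.log p + (1 - t) * Real.log q) := by rw [hE']; simp [hlogE]
      _ ≤ Real.exp (Real.log (f' s)) := Real.exp_le_exp.mpr hcc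
      _ = f' s := Real.exp_log (hpos s hsI)
  have hcompare : (q - p) / m ≤ f y - f x := by
    rw [← hEFTC, ← hFTC]
    exact intervalIntegral.integral_mono_on hxy.le hEInt hInt hpoint
  have hlm := log_mean_gt hp hpq
  have hmyx : m * (y - x) = Real.log q - Real.log p := by rw [hm']; field_simp
  have h3 : Real.sqrt (p * q) * (m * (y - x)) < q - p := by rw [hmyx]; exact hlm
  have h4 : q - p ≤ m * (f y - f x) := by
    calc q - p = m * ((q - p) / m) := by field_simp
      _ ≤ m * (f y - f x) := mul_le_mul_of_nonneg_left hcompare hm.le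
  have h5 : m * (Real.sqrt (p * q) * (y - x)) < m * (f y - f x) := by
    calc m * (Real.sqrt (p * q) * (y - x)) = Real.sqrt (p * q) * (m * (y - x)) := by ring
      _ < q - p := h3
      _ ≤ m * (f y - f x) := h4
  have h6 : Real.sqrt (p * q) * (y - x) < f y - f x := (mul_lt_mul_iff_right₀ hm).mp h5
  rw [lt_div_iff₀ hyx]
  exact h6


lemma spec_quadratic {M : Matrix (Fin 2) (Fin 2) ℂ} {ρ : ℝ} (h : ρ ∈ spectrum ℝ M) :
    ((ρ:ℂ) - M 0 0) * ((ρ:ℂ) - M 1 1) - M 0 1 * M 1 0 = 0 := by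
  rw [spectrum.mem_iff] at h
  by_contra hd
  apply h
  rw [Matrix.isUnit_iff_isUnit_det, isUnit_iff_ne_zero]
  rw [Matrix.det_fin_two]
  simp only [Matrix.sub_apply, Matrix.algebraMap_matrix_apply]
  simpa using hd

lemma algebraMap_eq_coe_smul_one (r : ℝ) :
    algebraMap ℝ (Matrix (Fin 2) (Fin 2) ℂ) r = (r : ℂ) • (1 : Matrix (Fin 2) (Fin 2) ℂ) := by
  ext i j
  simp [Matrix.algebraMap_matrix_apply, Matrix.one_apply, mul_ite, mul_one, mul_zero,
    Matrix.smul_apply, smul_eq_mul]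

lemma cfc_linear {M : Matrix (Fin 2) (Fin 2) ℂ} (hM : M.IsHermitian) (f : ℝ → ℝ) (a b : ℝ)
    (hs : ∀ ρ ∈ spectrum ℝ M, f ρ = a * ρ + b) :
    hM.cfc f = (a : ℂ) • M + (b : ℂ) • (1 : Matrix (Fin 2) (Fin 2) ℂ) := by
  have hsa : IsSelfAdjoint M := hM
  rw [← Matrix.IsHermitian.cfc_eq]
  have h1 : cfc f M = cfc (fun ρ : ℝ => a * ρ + b) M := cfc_congr hs
  rw [h1,
    cfc_add M (fun ρ : ℝ => a * ρ) (fun _ : ℝ => b) (by fun_prop) (by fun_prop),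
    cfc_const_mul_id a M hsa, cfc_const b M hsa, algebraMap_eq_coe_smul_one]
  ext i j
  simp [Matrix.smul_apply, Complex.real_smul]
lemma deriv_value_id (x y c s P Q δ : ℝ) (hne : y - x ≠ 0) (hcs : c^2 + s^2 = 1) :
    (P - Q)/(y - x) * (x*c^2 + y*s^2 + 0*(c+s)^2) + δ*(c+s)^2
      + (Q - ((P - Q)/(y - x)*x + δ*1))
    = Q*c^2 + P*s^2 + 2*δ*(c*s) := by
  field_simp
  linear_combination ((P - Q)*x + (δ - Q)*(y - x)) * hcs
noncomputable def rr (x y t : ℝ) : ℝ := Real.sqrt ((x-y)^2 + 4*t^2)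
noncomputable def lpf (x y t : ℝ) : ℝ := (x + y + 2*t + rr x y t)/2
noncomputable def lmf (x y t : ℝ) : ℝ := (x + y + 2*t - rr x y t)/2

lemma rr_sq (x y t : ℝ) : rr x y t ^ 2 = (x-y)^2 + 4*t^2 :=
  Real.sq_sqrt (by positivity)

lemma rr_zero (x y : ℝ) : rr x y 0 = |x - y| := by
  unfold rr; norm_num [Real.sqrt_sq_eq_abs]

lemma lpf_sum (x y t : ℝ) : lpf x y t + lmf x y t = x + y + 2*t := by
  unfold lpf lmf; ring

lemma lpf_sub (x y t : ℝ) : lpf x y t - lmf x y t = rr x y t := by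
  unfold lpf lmf; ring

lemma lpf_prod (x y t : ℝ) : lpf x y t * lmf x y t = x*y + t*(x+y) := by
  unfold lpf lmf
  linear_combination -(rr_sq x y t)/4

lemma lpf_zero_lt (x y : ℝ) (h : x < y) : lpf x y 0 = y := by
  unfold lpf; rw [rr_zero, abs_of_neg (by linarith : x - y < 0)]; ring

lemma lpf_zero_gt (x y : ℝ) (h : y < x) : lpf x y 0 = x := by
  unfold lpf; rw [rr_zero, abs_of_pos (by linarith : 0 < x - y)]; ring

lemma lmf_zero_lt (x y : ℝ) (h : x < y) : lmf x y 0 = x := by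
  unfold lmf; rw [rr_zero, abs_of_neg (by linarith : x - y < 0)]; ring

lemma lmf_zero_gt (x y : ℝ) (h : y < x) : lmf x y 0 = y := by
  unfold lmf; rw [rr_zero, abs_of_pos (by linarith : 0 < x - y)]; ring

lemma rr_hasDeriv (x y : ℝ) (hxy : x ≠ y) : HasDerivAt (rr x y) 0 0 := by
  have hd2 : (0:ℝ) < (x - y)^2 :=
    lt_of_le_of_ne (sq_nonneg _) ((pow_ne_zero 2 (sub_ne_zero.mpr hxy)).symm)
  have hu : HasDerivAt (fun t : ℝ => (x-y)^2 + 4*t^2) 0 0 := by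
    have h1 : HasDerivAt (fun t : ℝ => t ^ 2) ((2:ℕ) * (0:ℝ) ^ 1) 0 := hasDerivAt_pow 2 0
    have h2 := (h1.const_mul 4).const_add ((x-y) ^ 2)
    simpa using h2
  have hne : (x-y)^2 + 4*(0:ℝ)^2 ≠ 0 := by
    rw [show (x-y)^2 + 4*(0:ℝ)^2 = (x-y)^2 by ring]
    exact hd2.ne'
  have h1 := (Real.hasDerivAt_sqrt hne).comp 0 hu
  have h2 : HasDerivAt (fun t : ℝ => Real.sqrt ((x-y)^2 + 4*t^2)) 0 0 := by
    simpa [Function.comp_def] using h1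
  exact h2

lemma lpf_hasDeriv (x y : ℝ) (hxy : x ≠ y) : HasDerivAt (lpf x y) 1 0 := by
  have h1 : HasDerivAt (fun t : ℝ => x + y + 2 * t) 2 0 := by
    simpa using ((hasDerivAt_id (0:ℝ)).const_mul 2).const_add (x + y)
  have h2 := (h1.add (rr_hasDeriv x y hxy)).div_const 2
  have h3 : (fun t => (x + y + 2*t + rr x y t)/2) = lpf x y := by
    funext t; rw [lpf]
  rw [← h3]
  simpa using h2

lemma lmf_hasDeriv (x y : ℝ) (hxy : x ≠ y) : HasDerivAt (lmf x y) 1 0 := by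
  have h1 : HasDerivAt (fun t : ℝ => x + y + 2 * t) 2 0 := by
    simpa using ((hasDerivAt_id (0:ℝ)).const_mul 2).const_add (x + y)
  have h2 := (h1.sub (rr_hasDeriv x y hxy)).div_const 2
  have h3 : (fun t => (x + y + 2*t - rr x y t)/2) = lmf x y := by
    funext t; rw [lmf]
  rw [← h3]
  simpa using h2

lemma qform_exists {p q δ : ℝ} (hp : 0 < p) (hq : 0 < q) (hδpos : 0 < δ)
    (hpqδ : p * q < δ ^ 2) :
    ∃ c s : ℝ, c^2 + s^2 = 1 ∧ p*c^2 + q*s^2 + 2*δ*(c*s) < 0 := by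
  have hδ0 : δ ≠ 0 := hδpos.ne'
  set v1 : ℝ := -p / δ with hv1'
  set N : ℝ := 1 + v1 ^ 2 with hN'
  have hN : 0 < N := by positivity
  have hsN : 0 < Real.sqrt N := Real.sqrt_pos.mpr hN
  refine ⟨1 / Real.sqrt N, v1 / Real.sqrt N, ?_, ?_⟩
  · rw [div_pow, div_pow, one_pow, Real.sq_sqrt hN.le, hN']
    field_simp
  · have hsqN : Real.sqrt N * Real.sqrt N = N := Real.mul_self_sqrt hN.le
    have hc2 : (1 / Real.sqrt N) ^ 2 = 1 / N := by rw [div_pow, one_pow, sq, hsqN]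
    have hs2 : (v1 / Real.sqrt N) ^ 2 = v1 ^ 2 / N := by rw [div_pow, sq (Real.sqrt N), hsqN]
    have hcsval : (1 / Real.sqrt N) * (v1 / Real.sqrt N) = v1 / N := by field_simp; rw [Real.sq_sqrt hN.le]; ring
    rw [hc2, hs2, hcsval]
    have hnum : p + q * v1 ^ 2 + 2 * δ * v1 < 0 := by
      rw [hv1']
      have key : q * p ^ 2 < p * δ ^ 2 := by nlinarith
      have hexp : p + q * (-p / δ) ^ 2 + 2 * δ * (-p / δ)
          = (q * p ^ 2 - p * δ ^ 2) / δ ^ 2 := by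
        field_simp
        ring
      rw [hexp]
      exact div_neg_of_neg_of_pos (by linarith) (by positivity)
    calc p * (1/N) + q * (v1^2/N) + 2 * δ * (v1/N)
        = (p + q * v1 ^ 2 + 2 * δ * v1) / N := by ring
      _ < 0 := div_neg_of_neg_of_pos hnum hN

lemma unit_dot (c s : ℝ) (hcs : c^2 + s^2 = 1) :
    star ![(c:ℂ), (s:ℂ)] ⬝ᵥ ![(c:ℂ), (s:ℂ)] = 1 := by
  have h : (c:ℂ)^2 + (s:ℂ)^2 = 1 := by exact_mod_cast hcs
  simp only [dotProduct, Fin.sum_univ_two, Pi.star_apply, Matrix.cons_val_zero,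
    Matrix.cons_val_one, Matrix.head_cons, Complex.star_def, Complex.conj_ofReal]
  linear_combination h

lemma f_affine (f : ℝ → ℝ) (u v : ℝ) (huv : u - v ≠ 0) :
    f u = (f u - f v)/(u - v) * u + (f v - (f u - f v)/(u - v) * v) := by
  field_simp
  ring

lemma deriv_main (f f' : ℝ → ℝ) (x y c s : ℝ) (hxy : x ≠ y)
    (hfp : HasDerivAt f (f' (lpf x y 0)) (lpf x y 0))
    (hfm : HasDerivAt f (f' (lmf x y 0)) (lmf x y 0))
    (hcs : c^2 + s^2 = 1) :
    HasDerivAt (fun t => (f (lpf x y t) - f (lmf x y t))/(lpf x y t - lmf x y t)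
        * (x*c^2 + y*s^2 + t*(c+s)^2)
      + (f (lmf x y t) - (f (lpf x y t) - f (lmf x y t))/(lpf x y t - lmf x y t)
          * lmf x y t))
      (f' x * c^2 + f' y * s^2 + 2*((f x - f y)/(x-y))*(c*s)) 0 := by
  have hd0 : x - y ≠ 0 := sub_ne_zero.mpr hxy
  have hDn : HasDerivAt (fun t => lpf x y t - lmf x y t) (1 - 1) 0 :=
    (lpf_hasDeriv x y hxy).sub (lmf_hasDeriv x y hxy)
  have hDnne : lpf x y 0 - lmf x y 0 ≠ 0 := by
    rw [lpf_sub, rr_zero]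
    exact abs_ne_zero.mpr hd0
  have hNp : HasDerivAt (fun t => f (lpf x y t)) (f' (lpf x y 0) * 1) 0 :=
    hfp.comp 0 (lpf_hasDeriv x y hxy)
  have hNm : HasDerivAt (fun t => f (lmf x y t)) (f' (lmf x y 0) * 1) 0 :=
    hfm.comp 0 (lmf_hasDeriv x y hxy)
  have hAV := (hNp.sub hNm).div hDn hDnne
  have hqf : HasDerivAt (fun t : ℝ => x*c^2 + y*s^2 + t*(c+s)^2) (1*(c+s)^2) 0 :=
    ((hasDerivAt_id (0:ℝ)).mul_const ((c + s) ^ 2)).const_add (x * c ^ 2 + y * s ^ 2)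
  have hBV := hNm.sub (hAV.mul (lmf_hasDeriv x y hxy))
  have htot := (hAV.mul hqf).add hBV
  refine HasDerivAt.congr_deriv htot (Eq.symm ?_)
  simp only [Pi.sub_apply, Pi.div_apply]
  rcases hxy.lt_or_gt with h | h
  · rw [lpf_zero_lt x y h, lmf_zero_lt x y h]
    have hyx : y - x ≠ 0 := fun hh => hxy (by linarith)
    have hδeq : (f x - f y)/(x - y) = (f y - f x)/(y - x) := by
      rw [← neg_sub (f y) (f x), ← neg_sub y x, neg_div_neg_eq]
    rw [hδeq]
    have hfrac : ((f' y * 1 - f' x * 1) * (y - x) - (f y - f x) * (1 - 1)) / (y - x)^2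
        = (f' y - f' x)/(y - x) := by
      field_simp
      ring
    rw [hfrac]
    linear_combination -(deriv_value_id x y c s (f' y) (f' x) ((f y - f x)/(y - x)) hyx hcs)
  · rw [lpf_zero_gt x y h, lmf_zero_gt x y h]
    have hxy' : x - y ≠ 0 := sub_ne_zero.mpr hxy
    have hfrac : ((f' x * 1 - f' y * 1) * (x - y) - (f x - f y) * (1 - 1)) / (x - y)^2
        = (f' x - f' y)/(x - y) := by
      field_simp
      ring
    rw [hfrac]
    have hcs2 : s^2 + c^2 = 1 := by linarith
    linear_combination -(deriv_value_id y x s c (f' x) (f' y) ((f x - f y)/(x - y)) hxy' hcs2)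
lemma rep_lemma (f : ℝ → ℝ) (x y t cc ss lpv lmv av bv : ℝ)
    (A B : Matrix (Fin 2) (Fin 2) ℂ)
    (hA : A = Matrix.diagonal ![(x:ℂ), (y:ℂ)]) (hB : B = !![1,1;1,1])
    (hsum : lpv + lmv = x + y + 2*t) (hprod : lpv * lmv = x*y + t*(x+y))
    (hflp : f lpv = av * lpv + bv) (hflm : f lmv = av * lmv + bv)
    (hunit : cc^2 + ss^2 = 1)
    (M : Matrix (Fin 2) (Fin 2) ℂ) (hM : M.IsHermitian) (hMeq : M = A + t • B) :
    star ![(cc:ℂ), (ss:ℂ)] ⬝ᵥ (hM.cfc f).mulVec ![(cc:ℂ), (ss:ℂ)]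
      = ((av * (x*cc^2 + y*ss^2 + t*(cc+ss)^2) + bv : ℝ) : ℂ) := by
  subst hMeq
  have hM00 : (A + t • B) 0 0 = ((x + t : ℝ) : ℂ) := by
    simp [hA, hB, Complex.real_smul]
  have hM01 : (A + t • B) 0 1 = ((t : ℝ) : ℂ) := by
    simp [hA, hB, Complex.real_smul]
  have hM10 : (A + t • B) 1 0 = ((t : ℝ) : ℂ) := by
    simp [hA, hB, Complex.real_smul]
  have hM11 : (A + t • B) 1 1 = ((y + t : ℝ) : ℂ) := by
    simp [hA, hB, Complex.real_smul]
  have hspec : ∀ ρ ∈ spectrum ℝ (A + t • B), f ρ = av * ρ + bv := by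
    intro ρ hρ
    have hqd := spec_quadratic hρ
    rw [hM00, hM01, hM10, hM11] at hqd
    have hqr : (ρ - (x + t)) * (ρ - (y + t)) - t * t = 0 := by
      exact_mod_cast hqd
    have hfact : (ρ - lpv) * (ρ - lmv) = 0 := by
      linear_combination hqr - ρ * hsum + hprod
    rcases mul_eq_zero.mp hfact with h | h
    · rw [sub_eq_zero.mp h, hflp]
    · rw [sub_eq_zero.mp h, hflm]
  rw [cfc_linear hM f av bv hspec]
  rw [hA, hB]
  have hcast : (cc:ℂ)^2 + (ss:ℂ)^2 = 1 := by exact_mod_cast hunit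
  simp only [Matrix.add_mulVec, Matrix.smul_mulVec, Matrix.mulVec,
    dotProduct, Fin.sum_univ_two, Matrix.add_apply, Matrix.smul_apply,
    Matrix.one_apply, Matrix.diagonal_apply, Pi.star_apply, Matrix.cons_val_zero,
    Matrix.cons_val_one, Matrix.head_cons, Complex.star_def, Complex.conj_ofReal,
    smul_eq_mul, Complex.real_smul, Pi.add_apply, Pi.smul_apply, Matrix.cons_val',
    Matrix.empty_val', Matrix.cons_val_fin_one, Matrix.head_fin_const]
  push_cast
  norm_num [Matrix.one_apply]
  push_cast
  linear_combination (bv : ℂ) * hcast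


lemma exists_pos_lt_of_hasDerivAt_neg {g : ℝ → ℝ} {L : ℝ}
    (h : HasDerivAt g L 0) (hL : L < 0) :
    ∃ t₀ : ℝ, 0 < t₀ ∧ g t₀ < g 0 := by
  have hs := hasDerivAt_iff_tendsto_slope.mp h
  have h2 : ∀ᶠ t in nhdsWithin (0:ℝ) {(0:ℝ)}ᶜ, slope g 0 t < 0 :=
    hs.eventually_lt_const hL
  have h3 : ∀ᶠ t in nhdsWithin (0:ℝ) (Set.Ioi 0), slope g 0 t < 0 :=
    h2.filter_mono (nhdsWithin_mono 0 (fun t ht => ne_of_gt ht))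
  have h4 : ∀ᶠ t in nhdsWithin (0:ℝ) (Set.Ioi 0), 0 < t :=
    eventually_mem_nhdsWithin
  obtain ⟨t₀, hslope, ht₀⟩ := (h3.and h4).exists
  refine ⟨t₀, ht₀, ?_⟩
  rw [slope_def_field] at hslope
  have := div_neg_iff.mp (by simpa using hslope)
  rcases this with ⟨h5, h6⟩ | ⟨h5, h6⟩
  · linarith
  · linarith
set_option maxHeartbeats 1000000 in
/-- **Key Proposition.** Let `f` be continuously differentiable on `I = (γ, ∞)` with positive,
strictly increasing, log-concave derivative, let `A = diag(x, y)` with `x, y ∈ I`, and let `B`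
be the 2×2 all-ones matrix. Then `x ≠ y` if and only if there exist a unit vector `w ∈ ℂ²` and
`t₀ > 0` with `⟨f(A)w, w⟩ − ⟨f(A + t₀B)w, w⟩ > 0`. -/
theorem ne_iff_exists_unit_vector_cfc_decreases
    (γ : EReal) (hγ : γ ≠ ⊤) (I : Set ℝ) (hI : I = {x : ℝ | γ < (x : EReal)})
    (f f' : ℝ → ℝ)
    (hderiv : ∀ x ∈ I, HasDerivAt f (f' x) x)
    (hcont : ContinuousOn f' I)
    (hpos : ∀ x ∈ I, 0 < f' x)
    (hmono : StrictMonoOn f' I)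
    (hconc : ∀ x ∈ I, ∀ y ∈ I, ∀ t ∈ Set.Icc (0:ℝ) 1,
      t * Real.log (f' x) + (1 - t) * Real.log (f' y)
        ≤ Real.log (f' (t * x + (1 - t) * y)))
    (x y : ℝ) (hx : x ∈ I) (hy : y ∈ I)
    (A B : Matrix (Fin 2) (Fin 2) ℂ)
    (hA : A = Matrix.diagonal ![(x : ℂ), (y : ℂ)])
    (hB : B = !![1, 1; 1, 1])
    (hAH : A.IsHermitian)
    (hABH : ∀ t : ℝ, 0 < t → (A + t • B).IsHermitian) :
    x ≠ y ↔
      ∃ (w : Fin 2 → ℂ) (t₀ : ℝ) (ht₀ : 0 < t₀),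
        star w ⬝ᵥ w = 1 ∧
        0 < ((star w ⬝ᵥ (hAH.cfc f).mulVec w)
              - (star w ⬝ᵥ ((hABH t₀ ht₀).cfc f).mulVec w)).re := by
  -- structure of I
  have hIcases : I = Set.univ ∨ ∃ gl : ℝ, I = Set.Ioi gl := by
    induction γ with
    | bot =>
      left; ext z; simp [hI]
    | coe gl =>
      right; exact ⟨gl, by ext z; simp [hI]⟩
    | top => exact absurd rfl hγ
  have hup : ∀ u ∈ I, ∀ v : ℝ, u ≤ v → v ∈ I := by
    rcases hIcases with h | ⟨gl, h⟩
    · intro u _ v _; rw [h]; trivial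
    · intro u hu v huv
      rw [h] at hu ⊢
      exact lt_of_lt_of_le hu huv
  constructor
  · -- forward direction
    intro hxy
    have hδ : Real.sqrt (f' x * f' y) < (f x - f y) / (x - y) := by
      rcases hxy.lt_or_gt with h | h
      · have hsub : Set.Icc x y ⊆ I := fun u hu => hup x hx u hu.1
        have hk := key_ineq hderiv hcont hpos hmono hconc hx hy hsub h
        have heq : (f x - f y) / (x - y) = (f y - f x) / (y - x) := by
          rw [← neg_sub (f y) (f x), ← neg_sub y x, neg_div_neg_eq]
        rw [heq]; exact hk
      · have hsub : Set.Icc y x ⊆ I := fun u hu => hup y hy u hu.1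
        have hk := key_ineq hderiv hcont hpos hmono hconc hy hx hsub h
        rw [mul_comm] at hk
        exact hk
    have hδpos : 0 < (f x - f y) / (x - y) := lt_of_le_of_lt (Real.sqrt_nonneg _) hδ
    have hpqδ : f' x * f' y < ((f x - f y) / (x - y)) ^ 2 := by
      have h1 := mul_self_lt_mul_self (Real.sqrt_nonneg (f' x * f' y)) hδ
      rw [Real.mul_self_sqrt (mul_nonneg (hpos x hx).le (hpos y hy).le)] at h1
      nlinarith
    obtain ⟨c, s, hcs, hqform⟩ := qform_exists (hpos x hx) (hpos y hy) hδpos hpqδ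
    -- endpoints in I
    have hlpI : lpf x y 0 ∈ I := by
      rcases hxy.lt_or_gt with h | h
      · rw [lpf_zero_lt x y h]; exact hy
      · rw [lpf_zero_gt x y h]; exact hx
    have hlmI : lmf x y 0 ∈ I := by
      rcases hxy.lt_or_gt with h | h
      · rw [lmf_zero_lt x y h]; exact hx
      · rw [lmf_zero_gt x y h]; exact hy
    have hgd := deriv_main f f' x y c s hxy (hderiv _ hlpI) (hderiv _ hlmI) hcs
    obtain ⟨t₀, ht₀, hgt⟩ := exists_pos_lt_of_hasDerivAt_neg hgd hqform
    have hrrne : ∀ t : ℝ, lpf x y t - lmf x y t ≠ 0 := by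
      intro t
      rw [lpf_sub]
      unfold rr
      have hd2 : (0:ℝ) < (x - y)^2 :=
        lt_of_le_of_ne (sq_nonneg _) ((pow_ne_zero 2 (sub_ne_zero.mpr hxy)).symm)
      positivity
    refine ⟨![(c:ℂ), (s:ℂ)], t₀, ht₀, unit_dot c s hcs, ?_⟩
    have e0 := rep_lemma f x y 0 c s (lpf x y 0) (lmf x y 0)
      ((f (lpf x y 0) - f (lmf x y 0)) / (lpf x y 0 - lmf x y 0))
      (f (lmf x y 0) - (f (lpf x y 0) - f (lmf x y 0)) / (lpf x y 0 - lmf x y 0) * lmf x y 0)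
      A B hA hB (lpf_sum x y 0) (lpf_prod x y 0)
      (f_affine f (lpf x y 0) (lmf x y 0) (hrrne 0)) (by ring) hcs
      A hAH (by simp)
    have e1 := rep_lemma f x y t₀ c s (lpf x y t₀) (lmf x y t₀)
      ((f (lpf x y t₀) - f (lmf x y t₀)) / (lpf x y t₀ - lmf x y t₀))
      (f (lmf x y t₀) - (f (lpf x y t₀) - f (lmf x y t₀)) / (lpf x y t₀ - lmf x y t₀)
        * lmf x y t₀)
      A B hA hB (lpf_sum x y t₀) (lpf_prod x y t₀)
      (f_affine f (lpf x y t₀) (lmf x y t₀) (hrrne t₀)) (by ring) hcs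
      (A + t₀ • B) (hABH t₀ ht₀) rfl
    rw [Complex.sub_re, e0, e1, Complex.ofReal_re, Complex.ofReal_re]
    have hgt' : (f (lpf x y t₀) - f (lmf x y t₀)) / (lpf x y t₀ - lmf x y t₀)
          * (x*c^2 + y*s^2 + t₀*(c+s)^2)
        + (f (lmf x y t₀) - (f (lpf x y t₀) - f (lmf x y t₀)) / (lpf x y t₀ - lmf x y t₀)
            * lmf x y t₀)
        < (f (lpf x y 0) - f (lmf x y 0)) / (lpf x y 0 - lmf x y 0)
          * (x*c^2 + y*s^2 + 0*(c+s)^2)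
        + (f (lmf x y 0) - (f (lpf x y 0) - f (lmf x y 0)) / (lpf x y 0 - lmf x y 0)
            * lmf x y 0) := hgt
    linarith
  · -- reverse direction
    rintro ⟨w, t₀, ht₀, hwunit, hlt⟩
    intro hcon
    subst hcon
    -- now y is replaced by x
    have hA1 : A = (x : ℂ) • (1 : Matrix (Fin 2) (Fin 2) ℂ) := by
      rw [hA]
      ext i j
      fin_cases i <;> fin_cases j <;>
        simp [Matrix.diagonal_apply, Matrix.one_apply]
    -- f is monotone on I
    have hfmono : StrictMonoOn f I := by
      have hconv : Convex ℝ I := by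
        rcases hIcases with h | ⟨gl, h⟩
        · rw [h]; exact convex_univ
        · rw [h]; exact convex_Ioi gl
      have hIopen : IsOpen I := by
        rcases hIcases with h | ⟨gl, h⟩
        · rw [h]; exact isOpen_univ
        · rw [h]; exact isOpen_Ioi
      apply strictMonoOn_of_deriv_pos hconv
      · exact fun z hz => (hderiv z hz).continuousAt.continuousWithinAt
      · intro z hz
        rw [hIopen.interior_eq] at hz
        rw [(hderiv z hz).deriv]
        exact hpos z hz
    have hx2I : x + 2 * t₀ ∈ I := hup x hx _ (by linarith)
    have hanneg : 0 ≤ (f (x + 2 * t₀) - f x) / (2 * t₀) := by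
      apply div_nonneg _ (by linarith)
      have := hfmono.monotoneOn hx hx2I (by linarith)
      linarith
    -- cfc of A
    have hspecA : ∀ ρ ∈ spectrum ℝ A, f ρ = 0 * ρ + f x := by
      intro ρ hρ
      have hqd := spec_quadratic hρ
      rw [hA] at hqd
      simp only [Matrix.diagonal_apply, Matrix.cons_val_zero, Matrix.cons_val_one,
        Matrix.head_cons] at hqd
      norm_num at hqd
      have h2 : ρ - x = 0 := by exact_mod_cast hqd
      have : ρ = x := by linarith
      rw [this]; ring
    have hcfcA : hAH.cfc f = ((f x : ℝ) : ℂ) • (1 : Matrix (Fin 2) (Fin 2) ℂ) := by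
      rw [cfc_linear hAH f 0 (f x) hspecA]
      norm_num
    -- cfc of A + t₀ B
    have hM := hABH t₀ ht₀
    have ht₀ne : (2:ℝ) * t₀ ≠ 0 := by positivity
    have hfx2 : f (x + 2*t₀) = (f (x + 2*t₀) - f x) / (2*t₀) * (x + 2*t₀)
        + (f x - (f (x + 2*t₀) - f x) / (2*t₀) * x) := by
      field_simp
      ring
    have hspecM : ∀ ρ ∈ spectrum ℝ (A + t₀ • B),
        f ρ = (f (x + 2*t₀) - f x) / (2*t₀) * ρ
          + (f x - (f (x + 2*t₀) - f x) / (2*t₀) * x) := by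
      intro ρ hρ
      have hqd := spec_quadratic hρ
      have hM00 : (A + t₀ • B) 0 0 = ((x + t₀ : ℝ) : ℂ) := by
        simp [hA, hB, Complex.real_smul]
      have hM01 : (A + t₀ • B) 0 1 = ((t₀ : ℝ) : ℂ) := by
        simp [hA, hB, Complex.real_smul]
      have hM10 : (A + t₀ • B) 1 0 = ((t₀ : ℝ) : ℂ) := by
        simp [hA, hB, Complex.real_smul]
      have hM11 : (A + t₀ • B) 1 1 = ((x + t₀ : ℝ) : ℂ) := by
        simp [hA, hB, Complex.real_smul]
      rw [hM00, hM01, hM10, hM11] at hqd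
      have hqr : (ρ - (x + t₀)) * (ρ - (x + t₀)) - t₀ * t₀ = 0 := by
        exact_mod_cast hqd
      have hfact : (ρ - x) * (ρ - (x + 2 * t₀)) = 0 := by linear_combination hqr
      rcases mul_eq_zero.mp hfact with h | h
      · rw [sub_eq_zero.mp h]; ring
      · rw [sub_eq_zero.mp h, ← hfx2]
    have hcfcM := cfc_linear hM f ((f (x + 2*t₀) - f x) / (2*t₀))
      (f x - (f (x + 2*t₀) - f x) / (2*t₀) * x) hspecM
    -- compute the two quadratic forms
    have hformA : star w ⬝ᵥ (hAH.cfc f).mulVec w = ((f x : ℝ) : ℂ) := by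
      rw [hcfcA]
      simp only [Matrix.smul_mulVec, Matrix.one_mulVec, dotProduct_smul,
        hwunit, smul_eq_mul, mul_one]
    have hSB : star w ⬝ᵥ B.mulVec w
        = ((Complex.normSq (w 0 + w 1) : ℝ) : ℂ) := by
      have h1 : star w ⬝ᵥ B.mulVec w = (starRingEnd ℂ) (w 0 + w 1) * (w 0 + w 1) := by
        rw [hB]
        simp [Matrix.mulVec, dotProduct, Fin.sum_univ_two, Complex.star_def,
          map_add]
        ring
      rw [h1, Complex.normSq_eq_conj_mul_self]
    have hB' : t₀ • B = ((t₀ : ℝ) : ℂ) • B := by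
      ext i j; simp [Complex.real_smul]
    set a : ℝ := (f (x + 2*t₀) - f x) / (2*t₀) with ha'
    set b : ℝ := f x - a * x with hb'
    set nz : ℝ := Complex.normSq (w 0 + w 1) with hnz'
    have hformM : star w ⬝ᵥ (hM.cfc f).mulVec w
        = (a : ℂ) * ((x : ℂ) + (t₀ : ℂ) * (nz : ℂ)) + (b : ℂ) := by
      rw [hcfcM, hB', hA1]
      simp only [Matrix.add_mulVec, Matrix.smul_mulVec, Matrix.one_mulVec,
        dotProduct_add, dotProduct_smul, hwunit, hSB,
        smul_eq_mul, mul_one]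
    rw [Complex.sub_re, hformA, hformM] at hlt
    have hre : ((a : ℂ) * ((x : ℂ) + (t₀ : ℂ) * (nz : ℂ)) + (b : ℂ)).re
        = a * (x + t₀ * nz) + b := by
      have : ((a : ℂ) * ((x : ℂ) + (t₀ : ℂ) * (nz : ℂ)) + (b : ℂ))
          = ((a * (x + t₀ * nz) + b : ℝ) : ℂ) := by push_cast; ring
      rw [this, Complex.ofReal_re]
    rw [hre, Complex.ofReal_re, hb'] at hlt
    have hnznn : 0 ≤ nz := by rw [hnz']; exact Complex.normSq_nonneg _
    nlinarith [mul_nonneg (mul_nonneg hanneg ht₀.le) hnznn]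
end

section
/- Let I = (γ, ∞) with γ ∈ ℝ ∪ {−∞}, and let f : I → ℝ be continuously differentiable with f'(x) > 0 for all x ∈ I, f' strictly monotone increasing on I, and log ∘ f' concave on I. Let x, y ∈ I with x ≠ y, let A = diag(x, y), and let B be the 2×2 matrix with all entries equal to 1. Then there exist a unit vector w ∈ ℂ² and t₀ > 0 such that ⟨f(A + t₀B)w, w⟩ < ⟨f(A)w, w⟩. -/
open Matrix


-- 2 r log r < r^2 - 1 for r > 1
lemma aux_rlog {r : ℝ} (hr : 1 < r) : 2 * r * Real.log r < r ^ 2 - 1 := by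
  have key : StrictMonoOn (fun r : ℝ => r ^ 2 - 1 - 2 * r * Real.log r) (Set.Ici 1) := by
    apply strictMonoOn_of_deriv_pos (convex_Ici 1)
    · apply ContinuousOn.sub
      · fun_prop
      · apply ContinuousOn.mul (by fun_prop)
        exact Real.continuousOn_log.mono (fun x hx => by simp; intro h; simp [h] at hx; linarith)
    · intro z hz
      rw [interior_Ici] at hz
      have hz1 : (1:ℝ) < z := hz
      have hz0 : z ≠ 0 := by positivity
      have : HasDerivAt (fun r : ℝ => r ^ 2 - 1 - 2 * r * Real.log r)
          (2 * z - (2 * Real.log z + 2 * z * z⁻¹)) z := by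
        have h1 : HasDerivAt (fun r : ℝ => r ^ 2 - 1) (2 * z) z := by
          simpa using ((hasDerivAt_pow 2 z).sub_const 1)
        have h2 : HasDerivAt (fun r : ℝ => 2 * r * Real.log r)
            (2 * Real.log z + 2 * z * z⁻¹) z := by
          have := ((hasDerivAt_id z).const_mul 2).mul (Real.hasDerivAt_log hz0)
          exact this.congr_deriv (by simp only [id, mul_one])
        exact h1.sub h2
      rw [this.deriv]
      have hlog : Real.log z < z - 1 := by
        have := Real.log_lt_sub_one_of_pos (by linarith) (by linarith : z ≠ 1)
        linarith
      have : z * z⁻¹ = 1 := mul_inv_cancel₀ hz0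
      nlinarith
  have h := key (Set.self_mem_Ici) (Set.mem_Ici.mpr hr.le) hr
  simp at h
  linarith

-- log mean > geometric mean: for 0 < b < a, sqrt(ab) * log(a/b) < a - b
lemma aux_logmean {a b : ℝ} (hb : 0 < b) (hab : b < a) :
    Real.sqrt (a * b) * (Real.log a - Real.log b) < a - b := by
  have ha : 0 < a := hb.trans hab
  set u := Real.sqrt a with hu
  set v := Real.sqrt b with hv
  have hu0 : 0 < u := Real.sqrt_pos.mpr ha
  have hv0 : 0 < v := Real.sqrt_pos.mpr hb
  have hua : u ^ 2 = a := Real.sq_sqrt ha.le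
  have hvb : v ^ 2 = b := Real.sq_sqrt hb.le
  have huv : v < u := by
    rw [hu, hv]; exact Real.sqrt_lt_sqrt hb.le hab
  have hr : 1 < u / v := (one_lt_div hv0).mpr huv
  have key := aux_rlog hr
  have hsqrtab : Real.sqrt (a * b) = u * v := by
    rw [hu, hv, Real.sqrt_mul ha.le]
  have hlog : Real.log a - Real.log b = 2 * Real.log (u / v) := by
    rw [Real.log_div (by positivity) (by positivity), ← hua, ← hvb,
      Real.log_pow, Real.log_pow]
    push_cast; ring
  rw [hsqrtab, hlog]
  have h2 : (u/v)^2 - 1 = (u^2 - v^2)/v^2 := by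
    field_simp
  rw [h2] at key
  have := mul_lt_mul_of_pos_left key (by positivity : (0:ℝ) < v^2)
  calc u * v * (2 * Real.log (u/v)) = v^2 * (2 * (u/v) * Real.log (u/v)) := by
        field_simp
    _ < v^2 * ((u^2 - v^2)/v^2) := this
    _ = u^2 - v^2 := by field_simp
    _ = a - b := by rw [hua, hvb]

lemma aux_keyD (γ : EReal) (I : Set ℝ) (hI : I = {x : ℝ | γ < (x : EReal)})
    (f f' : ℝ → ℝ)
    (hderiv : ∀ x ∈ I, HasDerivAt f (f' x) x)
    (hcont : ContinuousOn f' I)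
    (hpos : ∀ x ∈ I, 0 < f' x)
    (hmono : StrictMonoOn f' I)
    (hconc : ∀ x ∈ I, ∀ y ∈ I, ∀ t ∈ Set.Icc (0:ℝ) 1,
      t * Real.log (f' x) + (1 - t) * Real.log (f' y)
        ≤ Real.log (f' (t * x + (1 - t) * y)))
    {p q : ℝ} (hp : p ∈ I) (hq : q ∈ I) (hpq : q < p) :
    Real.sqrt (f' p * f' q) * (p - q) < f p - f q := by
  have hup : ∀ z : ℝ, q ≤ z → z ∈ I := by
    intro z hz
    rw [hI]; rw [hI] at hq
    exact lt_of_lt_of_le hq (EReal.coe_le_coe_iff.mpr hz)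
  set a := f' p with ha
  set b := f' q with hb
  have hb0 : 0 < b := hpos q hq
  have hba : b < a := hmono hq hp hpq
  have ha0 : 0 < a := hb0.trans hba
  set L := Real.log a - Real.log b with hL
  have hL0 : 0 < L := sub_pos.mpr (Real.log_lt_log hb0 hba)
  -- the affine path
  have hmem : ∀ t ∈ Set.Icc (0:ℝ) 1, q + t * (p - q) ∈ I := by
    intro t ht
    exact hup _ (by nlinarith [ht.1])
  -- FTC: f p - f q = integral
  have hftc : ∫ t in (0:ℝ)..1, (p - q) * f' (q + t * (p - q)) = f p - f q := by
    have := intervalIntegral.integral_eq_sub_of_hasDerivAt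
      (f := fun t : ℝ => f (q + t * (p - q)))
      (f' := fun t : ℝ => (p - q) * f' (q + t * (p - q))) (a := 0) (b := 1)
      ?h1 ?h2
    · simpa using this
    · intro t ht
      rw [Set.uIcc_of_le zero_le_one] at ht
      have hinner : HasDerivAt (fun t : ℝ => q + t * (p - q)) (p - q) t := by
        simpa using ((hasDerivAt_id t).mul_const (p - q)).const_add q
      have := (hderiv _ (hmem t ht)).comp t hinner
      exact this.congr_deriv (mul_comm _ _)
    · apply ContinuousOn.intervalIntegrable
      rw [Set.uIcc_of_le zero_le_one]
      exact (continuousOn_const.mul (hcont.comp (by fun_prop) hmem))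
  -- lower bound integrand
  have hptwise : ∀ t ∈ Set.Icc (0:ℝ) 1,
      (p - q) * (b * Real.exp (t * L)) ≤ (p - q) * f' (q + t * (p - q)) := by
    intro t ht
    apply mul_le_mul_of_nonneg_left _ (by linarith)
    have hc := hconc p hp q hq t ht
    have harg : t * p + (1 - t) * q = q + t * (p - q) := by ring
    rw [harg] at hc
    have : b * Real.exp (t * L) = Real.exp (t * Real.log a + (1 - t) * Real.log b) := by
      rw [show t * Real.log a + (1 - t) * Real.log b
          = Real.log b + t * (Real.log a - Real.log b) by ring,
        Real.exp_add, Real.exp_log hb0, hL]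
    rw [this]
    calc Real.exp (t * Real.log a + (1 - t) * Real.log b)
        ≤ Real.exp (Real.log (f' (q + t * (p - q)))) := Real.exp_le_exp.mpr hc
      _ = f' (q + t * (p - q)) := Real.exp_log (hpos _ (hmem t ht))
  -- value of the exponential integral
  have hexp : ∫ t in (0:ℝ)..1, (p - q) * (b * Real.exp (t * L)) = (p - q) * ((a - b) / L) := by
    have := intervalIntegral.integral_eq_sub_of_hasDerivAt
      (f := fun t : ℝ => (p - q) * (b / L * Real.exp (t * L)))
      (f' := fun t : ℝ => (p - q) * (b * Real.exp (t * L))) (a := 0) (b := 1)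
      ?hh1 ?hh2
    · rw [this]
      have heL : Real.exp L = a / b := by
        rw [hL, Real.exp_sub, Real.exp_log ha0, Real.exp_log hb0]
      simp only [one_mul, zero_mul, Real.exp_zero, heL]
      field_simp
    · intro t ht
      have h1 : HasDerivAt (fun t : ℝ => t * L) L t := by
        simpa using (hasDerivAt_id t).mul_const L
      have h2 := (Real.hasDerivAt_exp (t * L)).comp t h1
      have := (h2.const_mul (b / L)).const_mul (p - q)
      refine this.congr_deriv ?_
      field_simp
    · apply ContinuousOn.intervalIntegrable
      fun_prop
  -- comparison
  have hcomp : (p - q) * ((a - b) / L) ≤ f p - f q := by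
    rw [← hexp, ← hftc]
    apply intervalIntegral.integral_mono_on zero_le_one
    · apply ContinuousOn.intervalIntegrable; rw [Set.uIcc_of_le zero_le_one]; fun_prop
    · apply ContinuousOn.intervalIntegrable; rw [Set.uIcc_of_le zero_le_one]
      exact (continuousOn_const.mul (hcont.comp (by fun_prop) hmem))
    · exact hptwise
  have hgm : Real.sqrt (a * b) * (p - q) < (p - q) * ((a - b) / L) := by
    have h1 := aux_logmean hb0 hba
    rw [← hL] at h1
    have h2 : Real.sqrt (a * b) < (a - b) / L := (lt_div_iff₀ hL0).mpr h1
    have := mul_lt_mul_of_pos_left h2 (by linarith : (0:ℝ) < p - q)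
    linarith
  linarith

open Matrix

lemma aux_mem_spectrum (M : Matrix (Fin 2) (Fin 2) ℂ) (z : ℝ) :
    z ∈ spectrum ℝ M ↔ ((z : ℂ) • (1 : Matrix (Fin 2) (Fin 2) ℂ) - M).det = 0 := by
  rw [← spectrum.algebraMap_mem_iff ℂ, spectrum.mem_iff, Algebra.algebraMap_eq_smul_one,
    Matrix.isUnit_iff_isUnit_det, isUnit_iff_ne_zero, not_not]
  norm_num

-- spectrum of explicit symmetric 2x2 with eigenvalues lp, lq
lemma aux_spectrum_explicit (a b c lp lq : ℝ)
    (hsum : lp + lq = a + c) (hprod : lp * lq = a * c - b * b) :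
    spectrum ℝ (!![(a:ℂ), b; b, c]) = {lp, lq} := by
  ext z
  rw [aux_mem_spectrum]
  have h1 : ((z : ℂ) • (1 : Matrix (Fin 2) (Fin 2) ℂ) - !![(a:ℂ), b; b, c])
      = !![(z : ℂ) - a, -b; -b, (z : ℂ) - c] := by
    ext i j
    fin_cases i <;> fin_cases j <;>
      simp [Matrix.one_apply, Matrix.smul_apply] <;> ring
  have h2 : ((lp : ℂ) + lq) = (a : ℂ) + c := by exact_mod_cast hsum
  have h3 : ((lp : ℂ) * lq) = (a : ℂ) * c - (b : ℂ) * b := by exact_mod_cast hprod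
  have hdet : ((z : ℂ) • (1 : Matrix (Fin 2) (Fin 2) ℂ) - !![(a:ℂ), b; b, c]).det
      = ((z : ℂ) - lp) * ((z : ℂ) - lq) := by
    rw [h1, Matrix.det_fin_two_of]
    linear_combination (z : ℂ) * h2 - h3
  rw [hdet, mul_eq_zero, sub_eq_zero, sub_eq_zero]
  simp [Complex.ofReal_inj]

-- cfc of a function that is affine on the spectrum
lemma aux_cfc_affine {M : Matrix (Fin 2) (Fin 2) ℂ} (hM : M.IsHermitian) (f : ℝ → ℝ) (c d : ℝ)
    (h : ∀ z ∈ spectrum ℝ M, f z = c + d * z) :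
    hM.cfc f = (c : ℂ) • (1 : Matrix (Fin 2) (Fin 2) ℂ) + (d : ℂ) • M := by
  have hsa : IsSelfAdjoint M := hM
  rw [← Matrix.IsHermitian.cfc_eq]
  rw [cfc_congr (g := fun z : ℝ => c + d * z) (fun z hz => h z hz)]
  rw [cfc_const_add _ _ _ (by fun_prop) hsa, cfc_const_mul_id _ _ hsa]
  rw [Algebra.algebraMap_eq_smul_one]
  norm_num [← Complex.coe_smul]

open Filter Topology

lemma aux_exists_pos {G : ℝ → ℝ} {g0 : ℝ} (hG : HasDerivAt G g0 0) (hneg : g0 < 0) :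
    ∃ t : ℝ, 0 < t ∧ G t < G 0 := by
  have h := hasDerivAt_iff_tendsto_slope.mp hG
  have hev : ∀ᶠ t in 𝓝[≠] (0:ℝ), slope G 0 t < 0 := h.eventually (Iio_mem_nhds hneg)
  have hmono : 𝓝[>] (0:ℝ) ≤ 𝓝[≠] (0:ℝ) :=
    nhdsWithin_mono 0 (fun t ht => ne_of_gt ht)
  rcases ((hev.filter_mono hmono).and self_mem_nhdsWithin).exists with ⟨t', hs, ht'⟩
  refine ⟨t', ht', ?_⟩
  have ht'0 : (0:ℝ) < t' := ht'
  rw [slope_def_field, div_neg_iff] at hs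
  rcases hs with ⟨h1, h2⟩ | ⟨h1, h2⟩
  · linarith
  · linarith

lemma aux_hasDeriv (f f' : ℝ → ℝ) (p q s r : ℝ) (hqp : q < p)
    (hfp : HasDerivAt f (f' p) p) (hfq : HasDerivAt f (f' q) q) :
    HasDerivAt (fun t : ℝ =>
      f ((p+q)/2 + t - Real.sqrt (((p-q)/2)^2 + t^2))
      + (f ((p+q)/2 + t + Real.sqrt (((p-q)/2)^2 + t^2))
          - f ((p+q)/2 + t - Real.sqrt (((p-q)/2)^2 + t^2)))
        * ((s*p + (1-s)*q + t*r) - ((p+q)/2 + t - Real.sqrt (((p-q)/2)^2 + t^2)))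
        / (2 * Real.sqrt (((p-q)/2)^2 + t^2)))
    (f' q + ((f' p - f' q) * s + (f p - f q)/(p-q) * (r - 1))) 0 := by
  set d : ℝ := (p - q)/2 with hd
  have hd0 : 0 < d := by rw [hd]; linarith
  have hsq : Real.sqrt (d^2 + 0^2) = d := by
    simp [Real.sqrt_sq hd0.le]
  have he : HasDerivAt (fun t : ℝ => Real.sqrt (d^2 + t^2)) 0 0 := by
    have hinner : HasDerivAt (fun t : ℝ => d^2 + t^2) (2 * 0 ^ 1) 0 := by
      simpa using (hasDerivAt_pow 2 (0:ℝ)).const_add (d^2)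
    have := (Real.hasDerivAt_sqrt (by positivity : d^2 + (0:ℝ)^2 ≠ 0)).comp 0 hinner
    exact this.congr_deriv (by simp)
  have hlq : HasDerivAt (fun t : ℝ => (p+q)/2 + t - Real.sqrt (d^2 + t^2)) 1 0 := by
    exact (((hasDerivAt_id (0:ℝ)).const_add ((p+q)/2)).sub he).congr_deriv (by norm_num)
  have hlp : HasDerivAt (fun t : ℝ => (p+q)/2 + t + Real.sqrt (d^2 + t^2)) 1 0 := by
    exact (((hasDerivAt_id (0:ℝ)).const_add ((p+q)/2)).add he).congr_deriv (by norm_num)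
  have hlq0 : (p+q)/2 + 0 - Real.sqrt (d^2 + 0^2) = q := by rw [hsq, hd]; ring
  have hlp0 : (p+q)/2 + 0 + Real.sqrt (d^2 + 0^2) = p := by rw [hsq, hd]; ring
  have hfq' : HasDerivAt (fun t : ℝ => f ((p+q)/2 + t - Real.sqrt (d^2 + t^2))) (f' q * 1) 0 := by
    refine HasDerivAt.comp 0 ?_ hlq
    show HasDerivAt f (f' q) ((p+q)/2 + 0 - Real.sqrt (d^2 + 0^2))
    rw [hlq0]; exact hfq
  have hfp' : HasDerivAt (fun t : ℝ => f ((p+q)/2 + t + Real.sqrt (d^2 + t^2))) (f' p * 1) 0 := by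
    refine HasDerivAt.comp 0 ?_ hlp
    show HasDerivAt f (f' p) ((p+q)/2 + 0 + Real.sqrt (d^2 + 0^2))
    rw [hlp0]; exact hfp
  have hmu : HasDerivAt (fun t : ℝ => s*p + (1-s)*q + t*r) r 0 := by
    simpa using ((hasDerivAt_id (0:ℝ)).mul_const r).const_add (s*p + (1-s)*q)
  have hQ : HasDerivAt (fun t : ℝ => 2 * Real.sqrt (d^2 + t^2)) (2 * 0) 0 := he.const_mul 2
  have hQ0 : 2 * Real.sqrt (d^2 + 0^2) ≠ 0 := by rw [hsq]; positivity
  have hN := (hfp'.sub hfq').mul (hmu.sub hlq)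
  have hG := hfq'.add ((hN.div hQ hQ0))
  refine hG.congr_deriv ?_
  simp only [Pi.sub_apply, Pi.mul_apply, hlq0, hlp0, hsq]
  have hpq : p - q ≠ 0 := by linarith
  field_simp
  rw [hd]
  ring
open Matrix

lemma aux_inner (c d u v m00 m01 m11 : ℝ) :
    (star ![(u:ℂ), (v:ℂ)] ⬝ᵥ
      (((c:ℂ) • (1 : Matrix (Fin 2) (Fin 2) ℂ) + (d:ℂ) • !![(m00:ℂ), m01; m01, m11]).mulVec
        ![(u:ℂ), (v:ℂ)])).re
    = c*(u^2+v^2) + d*(m00*u^2 + 2*m01*u*v + m11*v^2) := by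
  have h : ((c:ℂ) • (1 : Matrix (Fin 2) (Fin 2) ℂ) + (d:ℂ) • !![(m00:ℂ), m01; m01, m11])
      = !![(c:ℂ) + d*m00, d*m01; d*m01, (c:ℂ) + d*m11] := by
    ext i j
    fin_cases i <;> fin_cases j <;> simp [Matrix.one_apply] <;> ring
  rw [h]
  simp [Matrix.mulVec, dotProduct, Fin.sum_univ_two, Matrix.star_apply]
  push_cast
  ring_nf

lemma aux_unit (u v : ℝ) (h : u^2 + v^2 = 1) :
    star ![(u:ℂ), (v:ℂ)] ⬝ᵥ ![(u:ℂ), (v:ℂ)] = 1 := by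
  simp [dotProduct, Fin.sum_univ_two]
  have : ((u:ℂ))^2 + ((v:ℂ))^2 = 1 := by exact_mod_cast congrArg Complex.ofReal h
  linear_combination this

set_option maxHeartbeats 2000000 in
/-- Let `f` be continuously differentiable on `I = (γ, ∞)` with positive, strictly increasing,
log-concave derivative, let `A = diag(x, y)` with distinct `x, y ∈ I`, and let `B` be the 2×2
all-ones matrix. Then there exist a unit vector `w ∈ ℂ²` and `t₀ > 0` with
`⟨f(A + t₀B)w, w⟩ < ⟨f(A)w, w⟩`. -/
theorem exists_unit_vector_cfc_decreases
    (γ : EReal) (hγ : γ ≠ ⊤) (I : Set ℝ) (hI : I = {x : ℝ | γ < (x : EReal)})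
    (f f' : ℝ → ℝ)
    (hderiv : ∀ x ∈ I, HasDerivAt f (f' x) x)
    (hcont : ContinuousOn f' I)
    (hpos : ∀ x ∈ I, 0 < f' x)
    (hmono : StrictMonoOn f' I)
    (hconc : ∀ x ∈ I, ∀ y ∈ I, ∀ t ∈ Set.Icc (0:ℝ) 1,
      t * Real.log (f' x) + (1 - t) * Real.log (f' y)
        ≤ Real.log (f' (t * x + (1 - t) * y)))
    (x y : ℝ) (hx : x ∈ I) (hy : y ∈ I) (hxy : x ≠ y)
    (A B : Matrix (Fin 2) (Fin 2) ℂ)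
    (hA : A = Matrix.diagonal ![(x : ℂ), (y : ℂ)])
    (hB : B = !![1, 1; 1, 1])
    (hAH : A.IsHermitian)
    (hABH : ∀ t : ℝ, 0 < t → (A + t • B).IsHermitian) :
    ∃ (w : Fin 2 → ℂ) (t₀ : ℝ) (ht₀ : 0 < t₀),
      star w ⬝ᵥ w = 1 ∧
      (star w ⬝ᵥ ((hABH t₀ ht₀).cfc f).mulVec w).re
        < (star w ⬝ᵥ (hAH.cfc f).mulVec w).re := by
  -- orientation
  set p := max x y with hpdef
  set q := min x y with hqdef
  have hqp : q < p := min_lt_max.mpr hxy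
  have hor : (p = x ∧ q = y) ∨ (p = y ∧ q = x) := by
    rcases le_total y x with h | h
    · exact Or.inl ⟨max_eq_left h, min_eq_right h⟩
    · exact Or.inr ⟨max_eq_right h, min_eq_left h⟩
  have hp : p ∈ I := by rcases hor with ⟨h1, _⟩ | ⟨h1, _⟩ <;> rw [h1] <;> assumption
  have hq : q ∈ I := by rcases hor with ⟨_, h1⟩ | ⟨_, h1⟩ <;> rw [h1] <;> assumption
  have hsum : p + q = x + y := by rcases hor with ⟨h1, h2⟩ | ⟨h1, h2⟩ <;> rw [h1, h2] <;> ring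
  have hprod : p * q = x * y := by rcases hor with ⟨h1, h2⟩ | ⟨h1, h2⟩ <;> rw [h1, h2] <;> ring
  have hup : ∀ z : ℝ, q ≤ z → z ∈ I := by
    intro z hz
    rw [hI]; rw [hI] at hq
    exact lt_of_lt_of_le hq (EReal.coe_le_coe_iff.mpr hz)
  -- derivative data
  set a := f' p with hadef
  set b := f' q with hbdef
  have hb0 : 0 < b := hpos q hq
  have hba : b < a := hmono hq hp hqp
  have ha0 : 0 < a := hb0.trans hba
  -- the weight s and vector components
  set s := b / (a + b) with hsdef
  have hs0 : 0 < s := by positivity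
  have hs1 : s < 1 := by
    rw [hsdef, div_lt_one (by positivity)]; linarith
  set α := Real.sqrt s with hαdef
  set β := Real.sqrt (1 - s) with hβdef
  have hα2 : α ^ 2 = s := Real.sq_sqrt hs0.le
  have hβ2 : β ^ 2 = 1 - s := Real.sq_sqrt (by linarith)
  have hαβ : α * β = Real.sqrt (a * b) / (a + b) := by
    rw [hαdef, hβdef, ← Real.sqrt_mul hs0.le]
    rw [show s * (1 - s) = a * b * ((a + b)⁻¹) ^ 2 by rw [hsdef]; field_simp; ring]
    rw [Real.sqrt_mul (by positivity), Real.sqrt_sq (by positivity)]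
    field_simp
  set r := (α - β) ^ 2 with hrdef
  have hr1 : r - 1 = -(2 * (α * β)) := by rw [hrdef]; linear_combination hα2 + hβ2
  -- the key inequality
  have hkey := aux_keyD γ I hI f f' hderiv hcont hpos hmono hconc hp hq hqp
  set D := (f p - f q) / (p - q) with hDdef
  have hpq0 : (0:ℝ) < p - q := by linarith
  have hDgt : Real.sqrt (a * b) < D := by
    rw [hDdef, lt_div_iff₀ hpq0]; exact hkey
  -- negativity of the derivative
  set g0 := f' q + ((f' p - f' q) * s + (f p - f q) / (p - q) * (r - 1)) with hg0def
  have hg0 : g0 < 0 := by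
    have hsab : Real.sqrt (a * b) ^ 2 = a * b := Real.sq_sqrt (by positivity)
    have hsabpos : 0 < Real.sqrt (a * b) := Real.sqrt_pos.mpr (by positivity)
    have heq : g0 = (2 * (a * b) - 2 * Real.sqrt (a * b) * D) / (a + b) := by
      rw [hg0def, ← hDdef, hr1, hαβ, hsdef, ← hadef, ← hbdef]
      field_simp
      ring
    rw [heq]
    apply div_neg_of_neg_of_pos _ (by positivity)
    nlinarith [hDgt, hsabpos]
  -- derivative and descent
  have hG := aux_hasDeriv f f' p q s r hqp (hderiv p hp) (hderiv q hq)
  obtain ⟨t₀, ht₀, hGlt⟩ := aux_exists_pos hG hg0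
  -- vector components
  obtain ⟨u, v, hu1, hu2, hu3⟩ : ∃ u v : ℝ, u ^ 2 + v ^ 2 = 1 ∧
      x * u ^ 2 + y * v ^ 2 = s * p + (1 - s) * q ∧ 2 * (u * v) = r - 1 := by
    rcases hor with ⟨h1, h2⟩ | ⟨h1, h2⟩
    · exact ⟨α, -β, by linear_combination hα2 + hβ2,
        by rw [h1, h2]; linear_combination x * hα2 + y * hβ2,
        by rw [hr1]; ring⟩
    · exact ⟨-β, α, by linear_combination hβ2 + hα2,
        by rw [h1, h2]; linear_combination x * hβ2 + y * hα2,
        by rw [hr1]; ring⟩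
  -- beta reduce and name the eigenvalues
  have hGlt' := hGlt
  beta_reduce at hGlt'
  have h0 : Real.sqrt (((p - q)/2)^2 + 0^2) = (p - q)/2 := by
    rw [show ((p - q)/2)^2 + 0^2 = ((p-q)/2)^2 by ring]
    exact Real.sqrt_sq (by linarith)
  have e1 : (p + q)/2 + 0 - (p - q)/2 = q := by ring
  have e2 : (p + q)/2 + 0 + (p - q)/2 = p := by ring
  rw [h0, e1, e2] at hGlt'
  set E := Real.sqrt (((p - q)/2)^2 + t₀^2) with hEdef
  have hE2 : E^2 = ((p - q)/2)^2 + t₀^2 := Real.sq_sqrt (by positivity)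
  have hEpos : 0 < E := Real.sqrt_pos.mpr (by positivity)
  set lp := (p + q)/2 + t₀ + E with hlpdef
  set lq := (p + q)/2 + t₀ - E with hlqdef
  have hlpq : lq < lp := by rw [hlpdef, hlqdef]; linarith
  -- explicit matrices
  have hAeq : A = !![(x:ℂ), ((0:ℝ):ℂ); ((0:ℝ):ℂ), (y:ℂ)] := by
    rw [hA]; ext i j; fin_cases i <;> fin_cases j <;> simp [Matrix.diagonal]
  have hMeq : A + t₀ • B = !![((x + t₀ :ℝ):ℂ), ((t₀:ℝ):ℂ); ((t₀:ℝ):ℂ), ((y + t₀:ℝ):ℂ)] := by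
    rw [hA, hB]; ext i j
    fin_cases i <;> fin_cases j <;> simp [Matrix.diagonal] <;> push_cast <;> ring
  -- spectra
  have hspecA : spectrum ℝ A = {p, q} := by
    rw [hAeq]
    exact aux_spectrum_explicit x 0 y p q (by linarith) (by rw [hprod]; ring)
  have hspecM : spectrum ℝ (A + t₀ • B) = {lp, lq} := by
    rw [hMeq]
    refine aux_spectrum_explicit (x + t₀) t₀ (y + t₀) lp lq ?_ ?_
    · rw [hlpdef, hlqdef]; linarith
    · rw [hlpdef, hlqdef]; linear_combination (-1) * hE2 + hprod + t₀ * hsum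
  -- cfc as affine combinations
  set d1 := (f lp - f lq) / (lp - lq) with hd1def
  set c1 := f lq - d1 * lq with hc1def
  have hlpq0 : lp - lq ≠ 0 := by linarith
  have hcfc1 : (hABH t₀ ht₀).cfc f
      = (c1:ℂ) • (1 : Matrix (Fin 2) (Fin 2) ℂ) + (d1:ℂ) • (A + t₀ • B) := by
    apply aux_cfc_affine _ f c1 d1
    rw [hspecM]
    intro z hz
    rcases hz with hz | hz
    · rw [hz, hc1def, hd1def]; field_simp; ring
    · rw [Set.mem_singleton_iff] at hz
      rw [hz, hc1def, hd1def]; field_simp; ring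
  set c0 := f q - D * q with hc0def
  have hcfc0 : hAH.cfc f
      = (c0:ℂ) • (1 : Matrix (Fin 2) (Fin 2) ℂ) + (D:ℂ) • A := by
    apply aux_cfc_affine _ f c0 D
    rw [hspecA]
    intro z hz
    rcases hz with hz | hz
    · rw [hz, hc0def, hDdef]; field_simp; ring
    · rw [Set.mem_singleton_iff] at hz
      rw [hz, hc0def, hDdef]; field_simp; ring
  -- conclude
  refine ⟨![(u:ℂ), (v:ℂ)], t₀, ht₀, aux_unit u v hu1, ?_⟩
  rw [hcfc1, hcfc0, hMeq, hAeq, aux_inner c1 d1 u v (x + t₀) t₀ (y + t₀),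
    aux_inner c0 D u v x 0 y]
  have hmu : (x + t₀) * u^2 + 2*t₀*(u*v) + (y + t₀)*v^2 = s*p + (1-s)*q + t₀*r := by
    linear_combination hu2 + t₀ * hu1 + t₀ * hu3
  have hbase : x*u^2 + 2*0*(u*v) + y*v^2 = s*p + (1-s)*q := by linear_combination hu2
  rw [hu1]
  rw [show (x + t₀) * u ^ 2 + 2 * t₀ * u * v + (y + t₀) * v ^ 2
      = s*p + (1-s)*q + t₀*r by linear_combination hmu]
  rw [show x * u ^ 2 + 2 * 0 * u * v + y * v ^ 2 = s*p + (1-s)*q by linear_combination hbase]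
  have hGt0eq : f lq + (f lp - f lq) * ((s*p + (1-s)*q + t₀*r) - lq) / (2*E)
      = c1 + d1 * (s*p + (1-s)*q + t₀*r) := by
    rw [hc1def, hd1def, show lp - lq = 2*E by rw [hlpdef, hlqdef]; ring]
    field_simp
    ring
  have hG0eq : f q + (f p - f q) * ((s*p + (1-s)*q + 0*r) - q) / (2*((p-q)/2))
      = c0 + D * (s*p + (1-s)*q) := by
    rw [hc0def, hDdef]
    field_simp
    ring
  rw [hGt0eq, hG0eq] at hGlt'
  linarith
end

section
/- Let I = (γ, ∞) with γ ∈ ℝ ∪ {−∞}, and let f : I → ℝ be continuously differentiable with f'(x) > 0 for all x ∈ I, f' strictly monotone increasing on I, and log ∘ f' concave on I. Then for all x, y ∈ I with x ≠ y, one has f'(x)·f'(y) < ((f(x) − f(y))/(x − y))². -/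
private lemma amgm_strict' (a b : ℝ) (ha : 0 < a) (hb : 0 < b) (hab : a ≠ b) :
    2 * Real.sqrt (a * b) < a + b := by
  have h1 : Real.sqrt a ^ 2 = a := Real.sq_sqrt ha.le
  have h2 : Real.sqrt b ^ 2 = b := Real.sq_sqrt hb.le
  have hs : Real.sqrt a ≠ Real.sqrt b := fun h => hab (by rw [← h1, ← h2, h])
  have hmul : Real.sqrt (a * b) = Real.sqrt a * Real.sqrt b := Real.sqrt_mul ha.le b
  have hpos : 0 < (Real.sqrt a - Real.sqrt b) ^ 2 :=
    lt_of_le_of_ne (sq_nonneg _) (Ne.symm (pow_ne_zero 2 (sub_ne_zero.2 hs)))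
  nlinarith

/-- If `f` is continuously differentiable on `I = (γ, ∞)` with positive, strictly increasing,
log-concave derivative, then `f'(x)·f'(y) < ((f(x) − f(y))/(x − y))²` for distinct `x, y ∈ I`. -/
theorem deriv_mul_deriv_lt_sq_divided_difference
    (γ : EReal) (hγ : γ ≠ ⊤) (I : Set ℝ) (hI : I = {x : ℝ | γ < (x : EReal)})
    (f f' : ℝ → ℝ)
    (hderiv : ∀ x ∈ I, HasDerivAt f (f' x) x)
    (hcont : ContinuousOn f' I)
    (hpos : ∀ x ∈ I, 0 < f' x)
    (hmono : StrictMonoOn f' I)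
    (hconc : ∀ x ∈ I, ∀ y ∈ I, ∀ t ∈ Set.Icc (0:ℝ) 1,
      t * Real.log (f' x) + (1 - t) * Real.log (f' y)
        ≤ Real.log (f' (t * x + (1 - t) * y))) :
    ∀ x ∈ I, ∀ y ∈ I, x ≠ y → f' x * f' y < ((f x - f y) / (x - y)) ^ 2 := by
  have hup : ∀ x ∈ I, ∀ z : ℝ, x ≤ z → z ∈ I := by
    intro x hx z hz
    rw [hI] at hx ⊢
    simp only [Set.mem_setOf_eq] at hx ⊢
    exact lt_of_lt_of_le hx (by exact_mod_cast hz)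
  have key : ∀ x ∈ I, ∀ y ∈ I, x < y → f' x * f' y < ((f y - f x) / (y - x)) ^ 2 := by
    intro x hx y hy hxy
    have hL : (0:ℝ) < y - x := sub_pos.2 hxy
    set m : ℝ := (x + y) / 2 with hm
    set c : ℝ := (y - x) / 2 with hc
    have hcpos : 0 < c := by positivity
    set P : ℝ := f' x * f' y with hP
    have hPpos : 0 < P := mul_pos (hpos x hx) (hpos y hy)
    have hsqP : Real.sqrt P ^ 2 = P := Real.sq_sqrt hPpos.le
    have hmem : ∀ s : ℝ, 0 ≤ s → s ≤ c → (m - s ∈ I ∧ m + s ∈ I) := by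
      intro s hs0 hs1
      constructor
      · exact hup x hx _ (by rw [hm]; rw [hc] at hs1; linarith)
      · exact hup x hx _ (by rw [hm]; linarith)
    -- product lower bound from log-concavity
    have hprod : ∀ s : ℝ, 0 ≤ s → s ≤ c → P ≤ f' (m - s) * f' (m + s) := by
      intro s hs0 hs1
      obtain ⟨h1, h2⟩ := hmem s hs0 hs1
      set t : ℝ := (c - s) / (y - x) with ht
      have ht0 : 0 ≤ t := div_nonneg (by linarith) hL.le
      have ht1 : t ≤ 1 := by
        rw [ht, div_le_one hL]; rw [hc] at hs1 ⊢; linarith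
      have e1 : t * x + (1 - t) * y = m + s := by
        rw [ht, hm, hc]; field_simp; ring
      have e2 : (1 - t) * x + (1 - (1 - t)) * y = m - s := by
        rw [ht, hm, hc]; field_simp; ring
      have c1 := hconc x hx y hy t ⟨ht0, ht1⟩
      have c2 := hconc x hx y hy (1 - t) ⟨by linarith, by linarith⟩
      rw [e1] at c1
      rw [e2] at c2
      have hsum : Real.log (f' x) + Real.log (f' y)
          ≤ Real.log (f' (m - s)) + Real.log (f' (m + s)) := by
        have : Real.log (f' x) + Real.log (f' y)
            = (t * Real.log (f' x) + (1 - t) * Real.log (f' y))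
              + ((1 - t) * Real.log (f' x) + (1 - (1 - t)) * Real.log (f' y)) := by ring
        rw [this]
        linarith
    -- convert sum of logs to product
      have hlogle : Real.log P ≤ Real.log (f' (m - s) * f' (m + s)) := by
        rw [hP, Real.log_mul (hpos x hx).ne' (hpos y hy).ne',
          Real.log_mul (hpos _ h1).ne' (hpos _ h2).ne']
        exact hsum
      exact (Real.log_le_log_iff hPpos (mul_pos (hpos _ h1) (hpos _ h2))).1 hlogle
    -- the auxiliary function and its derivative
    set F : ℝ → ℝ := fun s => f (m + s) - f (m - s) - 2 * s * Real.sqrt P with hF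
    have hFd : ∀ s ∈ Set.Icc (0:ℝ) c,
        HasDerivAt F (f' (m + s) + f' (m - s) - 2 * Real.sqrt P) s := by
      intro s hs
      obtain ⟨h1, h2⟩ := hmem s hs.1 hs.2
      have d1 : HasDerivAt (fun s : ℝ => f (m + s)) (f' (m + s)) s := by
        have := (hderiv _ h2).comp s ((hasDerivAt_id s).const_add m)
        simpa [Function.comp_def] using this
      have d2 : HasDerivAt (fun s : ℝ => f (m - s)) (-f' (m - s)) s := by
        have := (hderiv _ h1).comp s ((hasDerivAt_id s).const_sub m)
        simpa [Function.comp_def] using this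
      have d3 : HasDerivAt (fun s : ℝ => 2 * s * Real.sqrt P) (2 * Real.sqrt P) s := by
        simpa using ((hasDerivAt_id s).const_mul (2:ℝ)).mul_const (Real.sqrt P)
      have := (d1.sub d2).sub d3
      rw [show f' (m + s) + f' (m - s) - 2 * Real.sqrt P = f' (m + s) - -f' (m - s) - 2 * Real.sqrt P by ring]
      exact this
    have hFmono : StrictMonoOn F (Set.Icc 0 c) := by
      apply strictMonoOn_of_deriv_pos (convex_Icc 0 c)
      · exact fun s hs => (hFd s hs).continuousAt.continuousWithinAt
      · intro s hs
        rw [interior_Icc] at hs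
        rw [(hFd s ⟨hs.1.le, hs.2.le⟩).deriv]
        obtain ⟨h1, h2⟩ := hmem s hs.1.le hs.2.le
        have hlt : m - s < m + s := by linarith [hs.1]
        have hflt : f' (m - s) < f' (m + s) := hmono h1 h2 hlt
        have hag := amgm_strict' (f' (m - s)) (f' (m + s)) (hpos _ h1) (hpos _ h2) hflt.ne
        have hsle : Real.sqrt P ≤ Real.sqrt (f' (m - s) * f' (m + s)) :=
          Real.sqrt_le_sqrt (hprod s hs.1.le hs.2.le)
        linarith
    have hF0 : F 0 < F c :=
      hFmono (Set.left_mem_Icc.2 hcpos.le) (Set.right_mem_Icc.2 hcpos.le) hcpos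
    have hmc1 : m + c = y := by rw [hm, hc]; ring
    have hmc2 : m - c = x := by rw [hm, hc]; ring
    have hF0' : F 0 = 0 := by simp [hF]
    have hFc : F c = f y - f x - 2 * c * Real.sqrt P := by rw [hF]; simp [hmc1, hmc2]
    have hkey : (y - x) * Real.sqrt P < f y - f x := by
      rw [hF0', hFc] at hF0
      have h2c : (y - x) = 2 * c := by rw [hc]; ring
      rw [h2c]
      linarith
    have hdiv : Real.sqrt P < (f y - f x) / (y - x) := (lt_div_iff₀ hL).2 (by linarith)
    calc P = Real.sqrt P ^ 2 := hsqP.symm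
      _ < ((f y - f x) / (y - x)) ^ 2 := by
          apply pow_lt_pow_left₀ hdiv (Real.sqrt_nonneg _)
          norm_num
  intro x hx y hy hxy
  rcases lt_trichotomy x y with h | h | h
  · have := key x hx y hy h
    have heq : (f x - f y) / (x - y) = (f y - f x) / (y - x) := by
      rw [← neg_sub (f y) (f x), ← neg_sub y x, neg_div_neg_eq]
    rw [heq]
    exact this
  · exact absurd h hxy
  · have := key y hy x hx h
    rw [mul_comm] at this
    exact this
end

section
/- Let I = (γ, ∞) with γ ∈ ℝ ∪ {−∞}, and let f : I → ℝ be continuously differentiable with f'(x) > 0 for all x ∈ I, f' strictly monotone increasing on I, and log ∘ f' concave on I. Then for all x, y ∈ I with x ≠ y, one has log f'(x) + log f'(y) < 2·log(∫₀¹ f'(tx + (1−t)y) dt). -/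
private lemma exp_mid_aux {a b : ℝ} (h : b < a) :
    Real.exp ((a + b) / 2) < (Real.exp a - Real.exp b) / (a - b) := by
  have hu : 0 < (a - b) / 2 := by linarith
  have hs := (Real.self_lt_sinh_iff.mpr hu)
  rw [Real.sinh_eq] at hs
  have ea : Real.exp a = Real.exp ((a + b) / 2) * Real.exp ((a - b) / 2) := by
    rw [← Real.exp_add]; ring_nf
  have eb : Real.exp b = Real.exp ((a + b) / 2) * Real.exp (-((a - b) / 2)) := by
    rw [← Real.exp_add]; ring_nf
  rw [lt_div_iff₀ (by linarith : (0:ℝ) < a - b)]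
  nlinarith [Real.exp_pos ((a + b) / 2)]

private lemma exp_mid {a b : ℝ} (h : a ≠ b) :
    Real.exp ((a + b) / 2) < (Real.exp a - Real.exp b) / (a - b) := by
  rcases h.lt_or_gt with h | h
  · have := exp_mid_aux h
    have he : (Real.exp b - Real.exp a) / (b - a) = (Real.exp a - Real.exp b) / (a - b) := by
      rw [← neg_sub (Real.exp a), ← neg_sub a b, neg_div_neg_eq]
    have hm : (b + a) / 2 = (a + b) / 2 := by ring
    rwa [he, hm] at this
  · exact exp_mid_aux h

/-- If `f` is continuously differentiable on `I = (γ, ∞)` with positive, strictly increasing,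
log-concave derivative, then for distinct `x, y ∈ I` one has
`log f'(x) + log f'(y) < 2 log (∫₀¹ f'(tx + (1−t)y) dt)`. -/
theorem log_deriv_add_log_deriv_lt
    (γ : EReal) (hγ : γ ≠ ⊤) (I : Set ℝ) (hI : I = {x : ℝ | γ < (x : EReal)})
    (f f' : ℝ → ℝ)
    (hderiv : ∀ x ∈ I, HasDerivAt f (f' x) x)
    (hcont : ContinuousOn f' I)
    (hpos : ∀ x ∈ I, 0 < f' x)
    (hmono : StrictMonoOn f' I)
    (hconc : ∀ x ∈ I, ∀ y ∈ I, ∀ t ∈ Set.Icc (0:ℝ) 1,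
      t * Real.log (f' x) + (1 - t) * Real.log (f' y)
        ≤ Real.log (f' (t * x + (1 - t) * y))) :
    ∀ x ∈ I, ∀ y ∈ I, x ≠ y →
      Real.log (f' x) + Real.log (f' y)
        < 2 * Real.log (∫ t in (0:ℝ)..1, f' (t * x + (1 - t) * y)) := by
  intro x hx y hy hxy
  set a := Real.log (f' x) with ha
  set b := Real.log (f' y) with hb
  have hab : a ≠ b := by
    intro h
    apply hxy
    apply hmono.injOn hx hy
    calc f' x = Real.exp a := (Real.exp_log (hpos x hx)).symm
      _ = Real.exp b := by rw [h]
      _ = f' y := Real.exp_log (hpos y hy)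
  -- membership of the segment in I
  have hmem : ∀ t ∈ Set.Icc (0:ℝ) 1, t * x + (1 - t) * y ∈ I := by
    intro t ht
    rw [hI] at hx hy ⊢
    rcases ht with ⟨h0, h1⟩
    have hmin : min x y ≤ t * x + (1 - t) * y := by
      rcases le_total x y with h | h
      · rw [min_eq_left h]; nlinarith
      · rw [min_eq_right h]; nlinarith
    have hγmin : γ < ((min x y : ℝ) : EReal) := by
      rcases min_cases x y with ⟨he, _⟩ | ⟨he, _⟩ <;> rw [he]
      · exact hx
      · exact hy
    exact lt_of_lt_of_le hγmin (EReal.coe_le_coe_iff.mpr hmin)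
  -- pointwise lower bound
  have hpt : ∀ t ∈ Set.Icc (0:ℝ) 1,
      Real.exp ((a - b) * t + b) ≤ f' (t * x + (1 - t) * y) := by
    intro t ht
    have h1 := hconc x hx y hy t ht
    have harg : (a - b) * t + b = t * a + (1 - t) * b := by ring
    rw [harg]
    calc Real.exp (t * a + (1 - t) * b)
        ≤ Real.exp (Real.log (f' (t * x + (1 - t) * y))) := Real.exp_le_exp.mpr h1
      _ = f' (t * x + (1 - t) * y) := Real.exp_log (hpos _ (hmem t ht))
  -- integrability
  have hcontline : Continuous fun t : ℝ => t * x + (1 - t) * y := by continuity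
  have hi1 : IntervalIntegrable (fun t => f' (t * x + (1 - t) * y))
      MeasureTheory.volume 0 1 := by
    apply ContinuousOn.intervalIntegrable
    apply hcont.comp hcontline.continuousOn
    intro t ht
    rw [Set.uIcc_of_le zero_le_one] at ht
    exact hmem t ht
  have hi2 : IntervalIntegrable (fun t => Real.exp ((a - b) * t + b))
      MeasureTheory.volume 0 1 := (by continuity : Continuous _).intervalIntegrable 0 1
  have hle : (∫ t in (0:ℝ)..1, Real.exp ((a - b) * t + b))
      ≤ ∫ t in (0:ℝ)..1, f' (t * x + (1 - t) * y) := by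
    apply intervalIntegral.integral_mono_on zero_le_one hi2 hi1
    exact hpt
  -- compute the exponential integral
  have hval : (∫ t in (0:ℝ)..1, Real.exp ((a - b) * t + b))
      = (Real.exp a - Real.exp b) / (a - b) := by
    have hc : a - b ≠ 0 := sub_ne_zero.mpr hab
    have hd : ∀ t ∈ Set.uIcc (0:ℝ) 1,
        HasDerivAt (fun t => Real.exp ((a - b) * t + b) / (a - b))
          (Real.exp ((a - b) * t + b)) t := by
      intro t _
      have h1 : HasDerivAt (fun t : ℝ => (a - b) * t + b) (a - b) t := by
        simpa using ((hasDerivAt_id t).const_mul (a - b)).add_const b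
      have h3 := (h1.exp).div_const (a - b)
      have : Real.exp ((a - b) * t + b) * (a - b) / (a - b)
          = Real.exp ((a - b) * t + b) := by field_simp
      rwa [this] at h3
    rw [intervalIntegral.integral_eq_sub_of_hasDerivAt hd hi2]
    rw [show (a - b) * 1 + b = a by ring, show (a - b) * 0 + b = b by ring]
    ring
  have hJ : Real.exp ((a + b) / 2) < ∫ t in (0:ℝ)..1, f' (t * x + (1 - t) * y) := by
    calc Real.exp ((a + b) / 2) < (Real.exp a - Real.exp b) / (a - b) := exp_mid hab
      _ = ∫ t in (0:ℝ)..1, Real.exp ((a - b) * t + b) := hval.symm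
      _ ≤ _ := hle
  have hJpos : 0 < ∫ t in (0:ℝ)..1, f' (t * x + (1 - t) * y) :=
    lt_trans (Real.exp_pos _) hJ
  have := (Real.lt_log_iff_exp_lt hJpos).mpr hJ
  linarith
end

section
/- Let I = (γ, ∞) with γ ∈ ℝ ∪ {−∞} and let g : I → ℝ be continuous, positive, strictly monotone increasing, with log ∘ g concave on I. Then the 2×2 real symmetric matrix [[g(x), c], [c, g(y)]], where c = (1/(x−y))·∫ from y to x of g, has negative determinant for all x, y ∈ I with x ≠ y, and hence has a negative eigenvalue. -/
open intervalIntegral in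
private lemma eig_aux (a d c : ℝ) (hc : c ≠ 0) (h : a * d < c ^ 2) :
    ∃ μ : ℝ, μ < 0 ∧ ∃ v : Fin 2 → ℝ, v ≠ 0 ∧
      (!![a, c; c, d]).mulVec v = μ • v := by
  set D : ℝ := (a - d) ^ 2 + 4 * c ^ 2 with hD
  have hD0 : 0 ≤ D := by positivity
  have hsq : Real.sqrt D ^ 2 = D := Real.sq_sqrt hD0
  have h1 : (a + d) ^ 2 < D := by nlinarith
  have hs : a + d < Real.sqrt D := by
    have h2 : Real.sqrt ((a + d) ^ 2) < Real.sqrt D := Real.sqrt_lt_sqrt (by positivity) h1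
    rw [Real.sqrt_sq_eq_abs] at h2
    calc a + d ≤ |a + d| := le_abs_self _
      _ < Real.sqrt D := h2
  refine ⟨(a + d - Real.sqrt D) / 2, by linarith, ![c, (a + d - Real.sqrt D) / 2 - a], ?_, ?_⟩
  · intro hv
    have := congrFun hv 0
    simp at this
    exact hc this
  · set μ : ℝ := (a + d - Real.sqrt D) / 2 with hμ
    have hchar : μ ^ 2 - (a + d) * μ + (a * d - c ^ 2) = 0 := by
      rw [hμ]; nlinarith [hsq]
    funext i
    fin_cases i <;>
      simp [Matrix.mulVec, dotProduct, Fin.sum_univ_two] <;> nlinarith [hchar]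

private lemma key_aux (γ : EReal) (I : Set ℝ) (hI : I = {x : ℝ | γ < (x : EReal)})
    (g : ℝ → ℝ)
    (hcont : ContinuousOn g I)
    (hpos : ∀ x ∈ I, 0 < g x)
    (hmono : StrictMonoOn g I)
    (hconc : ∀ x ∈ I, ∀ y ∈ I, ∀ t ∈ Set.Icc (0:ℝ) 1,
      t * Real.log (g x) + (1 - t) * Real.log (g y)
        ≤ Real.log (g (t * x + (1 - t) * y)))
    (x : ℝ) (hx : x ∈ I) (y : ℝ) (hy : y ∈ I) (hyx : y < x) :
    Real.sqrt (g x * g y) < (x - y)⁻¹ * ∫ u in y..x, g u := by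
  have hIcc : Set.Icc y x ⊆ I := by
    rw [hI]; intro z hz
    rw [hI] at hy
    exact lt_of_lt_of_le hy (EReal.coe_le_coe_iff.mpr hz.1)
  have hpmem : ∀ s ∈ Set.Icc (0:ℝ) 1, s * x + (1 - s) * y ∈ Set.Icc y x := by
    intro s hs
    constructor <;> nlinarith [hs.1, hs.2]
  have hpI : ∀ s ∈ Set.Icc (0:ℝ) 1, s * x + (1 - s) * y ∈ I :=
    fun s hs => hIcc (hpmem s hs)
  have hgx := hpos x hx
  have hgy := hpos y hy
  set m : ℝ := Real.sqrt (g x * g y) with hm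
  have hm2 : m ^ 2 = g x * g y := Real.sq_sqrt (by positivity)
  have hmpos : 0 < m := Real.sqrt_pos.mpr (by positivity)
  -- pointwise estimates
  have hweak : ∀ s ∈ Set.Icc (0:ℝ) 1,
      2 * m ≤ g (s * x + (1 - s) * y) + g ((1 - s) * x + s * y) := by
    intro s hs
    have hs1 : (1 - s) ∈ Set.Icc (0:ℝ) 1 := ⟨by linarith [hs.2], by linarith [hs.1]⟩
    have h1 := hconc x hx y hy s hs
    have h2 := hconc x hx y hy (1 - s) hs1
    rw [sub_sub_cancel] at h2
    have hp := hpos _ (hpI s hs)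
    have hq := hpos _ (hpI (1 - s) hs1)
    rw [sub_sub_cancel] at hq
    have hlog : Real.log (g x * g y)
        ≤ Real.log (g (s * x + (1 - s) * y) * g ((1 - s) * x + s * y)) := by
      rw [Real.log_mul (ne_of_gt hgx) (ne_of_gt hgy),
        Real.log_mul (ne_of_gt hp) (ne_of_gt hq)]
      linarith
    have hprod : g x * g y ≤ g (s * x + (1 - s) * y) * g ((1 - s) * x + s * y) :=
      (Real.log_le_log_iff (by positivity) (by positivity)).mp hlog
    nlinarith [sq_nonneg (g (s * x + (1 - s) * y) - g ((1 - s) * x + s * y)), hp, hq, hmpos, hm2]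
  have hstrict : ∀ s ∈ Set.Ioo (0:ℝ) (1/2),
      2 * m < g (s * x + (1 - s) * y) + g ((1 - s) * x + s * y) := by
    intro s hs
    have hs' : s ∈ Set.Icc (0:ℝ) 1 := ⟨hs.1.le, by linarith [hs.2]⟩
    have hs1 : (1 - s) ∈ Set.Icc (0:ℝ) 1 := ⟨by linarith [hs'.2], by linarith [hs'.1]⟩
    have h1 := hconc x hx y hy s hs'
    have h2 := hconc x hx y hy (1 - s) hs1
    rw [sub_sub_cancel] at h2
    have hp := hpos _ (hpI s hs')
    have hq' := hpI (1 - s) hs1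
    rw [sub_sub_cancel] at hq'
    have hq := hpos _ hq'
    have hlog : Real.log (g x * g y)
        ≤ Real.log (g (s * x + (1 - s) * y) * g ((1 - s) * x + s * y)) := by
      rw [Real.log_mul (ne_of_gt hgx) (ne_of_gt hgy),
        Real.log_mul (ne_of_gt hp) (ne_of_gt hq)]
      linarith
    have hprod : g x * g y ≤ g (s * x + (1 - s) * y) * g ((1 - s) * x + s * y) :=
      (Real.log_le_log_iff (by positivity) (by positivity)).mp hlog
    have hlt : s * x + (1 - s) * y < (1 - s) * x + s * y := by nlinarith [hs.1, hs.2]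
    have hne : g (s * x + (1 - s) * y) < g ((1 - s) * x + s * y) :=
      hmono (hpI s hs') hq' hlt
    nlinarith [sq_nonneg (g (s * x + (1 - s) * y) - g ((1 - s) * x + s * y)), hp, hq, hmpos, hm2]
  -- continuity and integrability
  have haff1 : ∀ s ∈ Set.Icc (0:ℝ) 1, (1 - s) * x + s * y ∈ Set.Icc y x := by
    intro s hs
    have := hpmem (1 - s) ⟨by linarith [hs.2], by linarith [hs.1]⟩
    rw [sub_sub_cancel] at this
    exact this
  have hc1 : ContinuousOn (fun s : ℝ => g (s * x + (1 - s) * y)) (Set.Icc 0 1) :=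
    (hcont.mono hIcc).comp (by fun_prop) hpmem
  have hc2 : ContinuousOn (fun s : ℝ => g ((1 - s) * x + s * y)) (Set.Icc 0 1) :=
    (hcont.mono hIcc).comp (by fun_prop) haff1
  set f : ℝ → ℝ := fun s => g (s * x + (1 - s) * y) + g ((1 - s) * x + s * y) - 2 * m with hf
  have hfc : ContinuousOn f (Set.Icc 0 1) := (hc1.add hc2).sub continuousOn_const
  have hfi1 : IntervalIntegrable f MeasureTheory.volume 0 (1/2) :=
    (hfc.mono (by rw [Set.uIcc_of_le (by norm_num)]; intro z hz; exact ⟨hz.1, by linarith [hz.2]⟩)).intervalIntegrable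
  have hfi2 : IntervalIntegrable f MeasureTheory.volume (1/2) 1 :=
    (hfc.mono (by rw [Set.uIcc_of_le (by norm_num)]; intro z hz; exact ⟨by linarith [hz.1], hz.2⟩)).intervalIntegrable
  have hpos1 : 0 < ∫ s in (0:ℝ)..(1/2), f s :=
    intervalIntegral.intervalIntegral_pos_of_pos_on hfi1
      (fun s hs => by simp only [hf]; linarith [hstrict s hs]) (by norm_num)
  have hpos2 : 0 ≤ ∫ s in (1/2:ℝ)..1, f s :=
    intervalIntegral.integral_nonneg (by norm_num)
      (fun s hs => by
        simp only [hf]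
        linarith [hweak s ⟨by linarith [hs.1], hs.2⟩])
  have hsum : 0 < ∫ s in (0:ℝ)..1, f s := by
    rw [← intervalIntegral.integral_add_adjacent_intervals hfi1 hfi2]
    linarith
  have hip : IntervalIntegrable (fun s : ℝ => g (s * x + (1 - s) * y)) MeasureTheory.volume 0 1 :=
    (hc1.mono (by rw [Set.uIcc_of_le (by norm_num)])).intervalIntegrable
  have hiq : IntervalIntegrable (fun s : ℝ => g ((1 - s) * x + s * y)) MeasureTheory.volume 0 1 :=
    (hc2.mono (by rw [Set.uIcc_of_le (by norm_num)])).intervalIntegrable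
  have hrefl : (∫ s in (0:ℝ)..1, g ((1 - s) * x + s * y))
      = ∫ s in (0:ℝ)..1, g (s * x + (1 - s) * y) := by
    have := intervalIntegral.integral_comp_sub_left
      (a := (0:ℝ)) (b := 1) (fun s => g (s * x + (1 - s) * y)) 1
    norm_num [sub_sub_cancel] at this
    exact this
  have hintf : (∫ s in (0:ℝ)..1, f s)
      = 2 * (∫ s in (0:ℝ)..1, g (s * x + (1 - s) * y)) - 2 * m := by
    simp only [hf]
    rw [intervalIntegral.integral_sub (hip.add hiq) intervalIntegrable_const,
      intervalIntegral.integral_add hip hiq, hrefl, intervalIntegral.integral_const]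
    simp
    ring
  have hlt : m < ∫ s in (0:ℝ)..1, g (s * x + (1 - s) * y) := by
    rw [hintf] at hsum; linarith
  -- change of variables
  have hxy : x - y ≠ 0 := sub_ne_zero.mpr (ne_of_gt hyx)
  have hcv : (∫ s in (0:ℝ)..1, g (s * x + (1 - s) * y))
      = (x - y)⁻¹ * ∫ u in y..x, g u := by
    have h0 : ∀ s : ℝ, s * x + (1 - s) * y = (x - y) * s + y := by intro s; ring
    simp only [h0]
    rw [intervalIntegral.integral_comp_mul_add g hxy y]
    norm_num
  rw [← hcv]
  exact hlt

/-- If `g` is continuous, positive, strictly increasing and log-concave on `I = (γ, ∞)`, then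
for distinct `x, y ∈ I` the symmetric matrix `[[g x, c], [c, g y]]`, where
`c = (x − y)⁻¹ ∫_y^x g`, has negative determinant and hence a negative eigenvalue. -/
theorem det_neg_and_exists_neg_eigenvalue
    (γ : EReal) (hγ : γ ≠ ⊤) (I : Set ℝ) (hI : I = {x : ℝ | γ < (x : EReal)})
    (g : ℝ → ℝ)
    (hcont : ContinuousOn g I)
    (hpos : ∀ x ∈ I, 0 < g x)
    (hmono : StrictMonoOn g I)
    (hconc : ∀ x ∈ I, ∀ y ∈ I, ∀ t ∈ Set.Icc (0:ℝ) 1,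
      t * Real.log (g x) + (1 - t) * Real.log (g y)
        ≤ Real.log (g (t * x + (1 - t) * y))) :
    ∀ x ∈ I, ∀ y ∈ I, x ≠ y →
      ∀ c : ℝ, c = (x - y)⁻¹ * (∫ u in y..x, g u) →
        (Matrix.det !![g x, c; c, g y] < 0 ∧
          ∃ μ : ℝ, μ < 0 ∧ ∃ v : Fin 2 → ℝ, v ≠ 0 ∧
            (!![g x, c; c, g y]).mulVec v = μ • v) := by
  intro x hx y hy hne c hc
  have hgx := hpos x hx
  have hgy := hpos y hy
  have hmain : Real.sqrt (g x * g y) < c := by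
    rcases hne.lt_or_gt with h | h
    · -- x < y
      have key := key_aux γ I hI g hcont hpos hmono hconc y hy x hx h
      have hceq : c = (y - x)⁻¹ * ∫ u in x..y, g u := by
        rw [hc, intervalIntegral.integral_symm]
        have h1 : (x - y)⁻¹ = -(y - x)⁻¹ := by
          rw [← inv_neg, neg_sub]
        rw [h1]; ring
      rw [hceq, mul_comm (g x) (g y)]
      exact key
    · -- y < x
      have key := key_aux γ I hI g hcont hpos hmono hconc x hx y hy h
      rw [hc]; exact key
  have hmpos : 0 < Real.sqrt (g x * g y) := Real.sqrt_pos.mpr (by positivity)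
  have hm2 : Real.sqrt (g x * g y) ^ 2 = g x * g y := Real.sq_sqrt (by positivity)
  have hdet : g x * g y < c ^ 2 := by nlinarith
  constructor
  · rw [Matrix.det_fin_two_of]; nlinarith
  · exact eig_aux (g x) (g y) c (hmpos.trans hmain).ne' hdet
end

section
/- Let H be a complex Hilbert space and T ∈ B(H) a bounded self-adjoint operator. Let x, y ∈ ℝ and let (uₙ) and (vₙ) be sequences of unit vectors in H with ⟨uₘ, vₙ⟩ = 0 for all m, n, such that ‖T uₙ − x uₙ‖ → 0 and ‖T vₙ − y vₙ‖ → 0. For each n let Kₙ = span{uₙ, vₙ}, let Eₙ be the orthogonal projection onto Kₙ^⊥, and set ψₙ := x·(uₙ ⊗ uₙ) + y·(vₙ ⊗ vₙ) + Eₙ T Eₙ. Then ‖ψₙ − T‖ ≤ 2(‖T uₙ − x uₙ‖ + ‖T vₙ − y vₙ‖); in particular ψₙ → T in the operator norm topology. -/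
open scoped InnerProductSpace

/-- The rank-one operator `φ ⊗ ψ : ξ ↦ ⟨ξ, ψ⟩ φ` on a complex Hilbert space. -/
noncomputable def rankOneOp {H : Type*} [NormedAddCommGroup H] [InnerProductSpace ℂ H]
    (φ ψ : H) : H →L[ℂ] H :=
  (innerSL ℂ ψ).smulRight φ

set_option synthInstance.maxHeartbeats 1000000

section aux
variable {H : Type*} [NormedAddCommGroup H] [InnerProductSpace ℂ H]

lemma rankOneOp_apply (φ ψ ξ : H) : rankOneOp φ ψ ξ = ⟪ψ, ξ⟫_ℂ • φ := rfl

lemma comp_rankOneOp (A : H →L[ℂ] H) (φ ψ : H) :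
    A ∘L rankOneOp φ ψ = rankOneOp (A φ) ψ := by
  ext ξ; simp [rankOneOp_apply]

lemma norm_rankOneOp_le (φ ψ : H) : ‖rankOneOp φ ψ‖ ≤ ‖φ‖ * ‖ψ‖ := by
  rw [rankOneOp, ContinuousLinearMap.norm_smulRight_apply, innerSL_apply_norm, mul_comm]

end aux

/-- If `(uₙ)`, `(vₙ)` are mutually orthogonal approximate eigenvectors of a self-adjoint
operator `T` for `x` and `y` respectively, and
`ψₙ = x·(uₙ ⊗ uₙ) + y·(vₙ ⊗ vₙ) + Eₙ T Eₙ`, with `Eₙ` the orthogonal projection onto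
`(span{uₙ, vₙ})ᗮ`, then `‖ψₙ − T‖ ≤ 2(‖Tuₙ − x uₙ‖ + ‖Tvₙ − y vₙ‖)`; in particular
`ψₙ → T` in operator norm. -/
theorem psi_tendsto_of_approx_eigenvectors
    {H : Type*} [NormedAddCommGroup H] [InnerProductSpace ℂ H] [CompleteSpace H]
    (T : H →L[ℂ] H) (hT : IsSelfAdjoint T) (x y : ℝ)
    (u v : ℕ → H) (hu : ∀ n, ‖u n‖ = 1) (hv : ∀ n, ‖v n‖ = 1)
    (huv : ∀ m n : ℕ, ⟪u m, v n⟫_ℂ = 0)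
    (hux : Filter.Tendsto (fun n => ‖T (u n) - (x : ℂ) • u n‖) Filter.atTop (nhds 0))
    (hvy : Filter.Tendsto (fun n => ‖T (v n) - (y : ℂ) • v n‖) Filter.atTop (nhds 0))
    (K : ℕ → Submodule ℂ H) (hK : ∀ n, K n = Submodule.span ℂ {u n, v n})
    (E : ℕ → H →L[ℂ] H)
    (hE : ∀ n, E n = ((K n)ᗮ).subtypeL.comp (Submodule.orthogonalProjectionOnto ((K n)ᗮ)))
    (ψ : ℕ → H →L[ℂ] H)
    (hψ : ∀ n, ψ n = (x : ℂ) • rankOneOp (u n) (u n) + (y : ℂ) • rankOneOp (v n) (v n)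
        + (E n).comp (T.comp (E n))) :
    (∀ n, ‖ψ n - T‖ ≤ 2 * (‖T (u n) - (x : ℂ) • u n‖ + ‖T (v n) - (y : ℂ) • v n‖)) ∧
    Filter.Tendsto ψ Filter.atTop (nhds T) := by
  have main : ∀ n, ‖ψ n - T‖ ≤ 2 * (‖T (u n) - (x : ℂ) • u n‖ + ‖T (v n) - (y : ℂ) • v n‖) := by
    intro n
    set un := u n with hun
    set vn := v n with hvn
    set a := T un - (x : ℂ) • un with ha
    set b := T vn - (y : ℂ) • vn with hb
    have huu : ⟪un, un⟫_ℂ = 1 := by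
      rw [inner_self_eq_norm_sq_to_K, hu n]; norm_num
    have hvv : ⟪vn, vn⟫_ℂ = 1 := by
      rw [inner_self_eq_norm_sq_to_K, hv n]; norm_num
    have huv0 : ⟪un, vn⟫_ℂ = 0 := huv n n
    have hvu0 : ⟪vn, un⟫_ℂ = 0 := inner_eq_zero_symm.mpr huv0
    -- explicit formula for E n
    have h1 : ∀ w : H, E n w = w - ⟪un, w⟫_ℂ • un - ⟪vn, w⟫_ℂ • vn := by
      intro w
      rw [hE n]
      have hcK : ⟪un, w⟫_ℂ • un + ⟪vn, w⟫_ℂ • vn ∈ K n := by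
        rw [hK n]
        exact Submodule.add_mem _
          (Submodule.smul_mem _ _ (Submodule.subset_span (Or.inl rfl)))
          (Submodule.smul_mem _ _ (Submodule.subset_span (Or.inr rfl)))
      have hm : w - (⟪un, w⟫_ℂ • un + ⟪vn, w⟫_ℂ • vn) ∈ (K n)ᗮ := by
        rw [hK n, Submodule.mem_orthogonal]
        intro k hk
        induction hk using Submodule.span_induction with
        | mem z hz =>
          rcases hz with rfl | rfl
          · simp [inner_sub_right, inner_add_right, inner_smul_right, ← hun, ← hvn, huu, huv0, show ‖un‖ = 1 from hu n]
          · simp [inner_sub_right, inner_add_right, inner_smul_right, ← hun, ← hvn, hvv, hvu0, show ‖vn‖ = 1 from hv n]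
        | zero => simp
        | add z₁ z₂ _ _ h₁ h₂ => rw [inner_add_left, h₁, h₂, add_zero]
        | smul c z _ h => rw [inner_smul_left, h, mul_zero]
      have := Submodule.eq_starProjection_of_mem_orthogonal (K := (K n)ᗮ)
        (u := w) (v := w - (⟪un, w⟫_ℂ • un + ⟪vn, w⟫_ℂ • vn)) hm
        (by simpa using (K n).le_orthogonal_orthogonal hcK)
      rw [sub_sub]; exact this
    have hEu : E n un = 0 := by rw [h1]; rw [huu, hvu0]; simp
    have hEv : E n vn = 0 := by rw [h1]; rw [huv0, hvv]; simp
    have hEnorm : ∀ w : H, ‖E n w‖ ≤ ‖w‖ := by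
      intro w
      rw [hE n]
      simpa using Submodule.orthogonalProjectionOnto_norm_le ((K n)ᗮ) |>.trans (le_refl 1) |> fun h =>
        (ContinuousLinearMap.le_of_opNorm_le _ h w).trans (by simp)
    -- self-adjointness of E n
    have hEsa : IsSelfAdjoint (E n) := by
      rw [hE n]; exact isSelfAdjoint_starProjection ((K n)ᗮ)
    -- P = 1 - E n equals u⊗u + v⊗v
    have hP : (1 : H →L[ℂ] H) - E n = rankOneOp un un + rankOneOp vn vn := by
      ext ξ
      simp [h1, rankOneOp_apply, sub_sub]
    -- key decomposition
    have key : ψ n - T = -(rankOneOp a un + rankOneOp b vn)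
        - ((1 : H →L[ℂ] H) - E n) ∘L (T ∘L E n) := by
      rw [hψ n]
      ext ξ
      simp only [ContinuousLinearMap.sub_apply, ContinuousLinearMap.add_apply,
        ContinuousLinearMap.smul_apply, ContinuousLinearMap.comp_apply,
        ContinuousLinearMap.neg_apply, ContinuousLinearMap.one_apply, rankOneOp_apply]
      have hTE : T (E n ξ) = T ξ - ⟪un, ξ⟫_ℂ • T un - ⟪vn, ξ⟫_ℂ • T vn := by
        rw [h1]; simp [map_sub, map_smul]
      rw [hTE, ha, hb]
      module
    -- norm bounds
    have hETP : E n ∘L (T ∘L ((1 : H →L[ℂ] H) - E n))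
        = rankOneOp (E n a) un + rankOneOp (E n b) vn := by
      rw [hP, ← ContinuousLinearMap.comp_assoc]
      have : (E n ∘L T) ∘L (rankOneOp un un + rankOneOp vn vn)
          = rankOneOp ((E n ∘L T) un) un + rankOneOp ((E n ∘L T) vn) vn := by
        ext ξ
        simp [rankOneOp_apply, ContinuousLinearMap.comp_apply, map_add, map_smul]
      rw [this]
      have h2 : (E n ∘L T) un = E n a := by
        have : T un = (x : ℂ) • un + a := by rw [ha]; abel
        simp [ContinuousLinearMap.comp_apply, this, map_add, map_smul, hEu]
      have h3 : (E n ∘L T) vn = E n b := by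
        have : T vn = (y : ℂ) • vn + b := by rw [hb]; abel
        simp [ContinuousLinearMap.comp_apply, this, map_add, map_smul, hEv]
      rw [h2, h3]
    have hPsa : IsSelfAdjoint ((1 : H →L[ℂ] H) - E n) := (IsSelfAdjoint.one _).sub hEsa
    have hnormPTE : ‖((1 : H →L[ℂ] H) - E n) ∘L (T ∘L E n)‖ ≤ ‖a‖ + ‖b‖ := by
      have hadj : ContinuousLinearMap.adjoint (E n ∘L (T ∘L ((1 : H →L[ℂ] H) - E n)))
          = ((1 : H →L[ℂ] H) - E n) ∘L (T ∘L E n) := by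
        rw [ContinuousLinearMap.adjoint_comp, ContinuousLinearMap.adjoint_comp,
          hEsa.adjoint_eq, hT.adjoint_eq, hPsa.adjoint_eq, ContinuousLinearMap.comp_assoc]
      rw [← hadj]
      have : ‖ContinuousLinearMap.adjoint (E n ∘L (T ∘L ((1 : H →L[ℂ] H) - E n)))‖
          = ‖E n ∘L (T ∘L ((1 : H →L[ℂ] H) - E n))‖ :=
        LinearIsometryEquiv.norm_map ContinuousLinearMap.adjoint _
      rw [this, hETP]
      calc ‖rankOneOp (E n a) un + rankOneOp (E n b) vn‖
          ≤ ‖rankOneOp (E n a) un‖ + ‖rankOneOp (E n b) vn‖ := norm_add_le _ _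
        _ ≤ ‖E n a‖ * ‖un‖ + ‖E n b‖ * ‖vn‖ :=
            add_le_add (norm_rankOneOp_le _ _) (norm_rankOneOp_le _ _)
        _ ≤ ‖a‖ + ‖b‖ := by
            rw [hu n, hv n, mul_one, mul_one]
            exact add_le_add (hEnorm a) (hEnorm b)
    calc ‖ψ n - T‖
        ≤ ‖-(rankOneOp a un + rankOneOp b vn)‖
          + ‖((1 : H →L[ℂ] H) - E n) ∘L (T ∘L E n)‖ := by
          rw [key]; exact norm_sub_le _ _
      _ ≤ (‖a‖ + ‖b‖) + (‖a‖ + ‖b‖) := by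
          refine add_le_add ?_ hnormPTE
          rw [norm_neg]
          calc ‖rankOneOp a un + rankOneOp b vn‖
              ≤ ‖rankOneOp a un‖ + ‖rankOneOp b vn‖ := norm_add_le _ _
            _ ≤ ‖a‖ * ‖un‖ + ‖b‖ * ‖vn‖ :=
                add_le_add (norm_rankOneOp_le _ _) (norm_rankOneOp_le _ _)
            _ = ‖a‖ + ‖b‖ := by rw [hu n, hv n, mul_one, mul_one]
      _ = 2 * (‖a‖ + ‖b‖) := by ring
  refine ⟨main, ?_⟩
  rw [tendsto_iff_norm_sub_tendsto_zero]
  have hb : Filter.Tendsto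
      (fun n => 2 * (‖T (u n) - (x : ℂ) • u n‖ + ‖T (v n) - (y : ℂ) • v n‖))
      Filter.atTop (nhds 0) := by
    have := (hux.add hvy).const_mul (2 : ℝ)
    simpa using this
  exact squeeze_zero (fun n => norm_nonneg _) main hb
end

section
/- A unital C*-algebra A is commutative if and only if for all self-adjoint a, b ∈ A, a ≤ b implies exp(a) ≤ exp(b). -/
open NormedSpace (exp)
open ComplexStarModule

section RealHelpers

noncomputable def tent (c δ v : ℝ) : ℝ := max 0 (1 - |v - c|/δ)

lemma tent_cont (c δ : ℝ) : Continuous (tent c δ) := by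
  unfold tent; fun_prop

lemma tent_nonneg (c δ v : ℝ) : 0 ≤ tent c δ v := le_max_left _ _

lemma tent_le_one {δ : ℝ} (hδ : 0 < δ) (c v : ℝ) : tent c δ v ≤ 1 := by
  unfold tent
  apply max_le zero_le_one
  have : 0 ≤ |v - c|/δ := by positivity
  linarith

lemma tent_eq_zero {c δ v : ℝ} (hδ : 0 < δ) (h : δ ≤ |v - c|) : tent c δ v = 0 := by
  unfold tent
  apply max_eq_left
  rw [sub_nonpos, le_div_iff₀ hδ, one_mul]
  exact h

lemma tent_support {c δ v : ℝ} (hδ : 0 < δ) (h : tent c δ v ≠ 0) : |v - c| < δ := by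
  by_contra hc
  exact h (tent_eq_zero hδ (not_lt.mp hc))

-- the unit-grid tents sum to 1

lemma tentsum_unit : ∀ (n : ℕ) (u : ℝ), 0 ≤ u → u ≤ n →
    ∑ i ∈ Finset.range (n+1), max 0 (1 - |u - i|) = 1 := by
  intro n
  induction n with
  | zero =>
    intro u h0 h1
    have hu : u = 0 := le_antisymm (by exact_mod_cast h1) h0
    simp [hu]
  | succ n ih =>
    intro u h0 h1
    rw [Finset.sum_range_succ]
    by_cases hc : u ≤ n
    · rw [ih u h0 hc]
      have hz : max 0 (1 - |u - (n+1 : ℕ)|) = 0 := by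
        apply max_eq_left
        have h2 : |u - ((n:ℝ)+1)| = (n:ℝ)+1 - u := by
          rw [abs_of_nonpos (by linarith)]; ring
        push_cast
        rw [h2]
        linarith
      rw [hz, add_zero]
    · push_neg at hc
      rw [Finset.sum_range_succ]
      have hz : ∑ i ∈ Finset.range n, max 0 (1 - |u - i|) = 0 := by
        apply Finset.sum_eq_zero
        intro i hi
        have h3 : i + 1 ≤ n := Finset.mem_range.mp hi
        have hi' : (i:ℝ) + 1 ≤ (n:ℝ) := by exact_mod_cast h3
        apply max_eq_left
        have h4 : |u - i| = u - i := by rw [abs_of_nonneg (by linarith)]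
        rw [h4]
        linarith
      rw [hz, zero_add]
      have e1 : |u - (n:ℕ)| = u - n := by rw [abs_of_nonneg (by push_cast; linarith)]
      have e2 : |u - ((n:ℕ)+1:ℕ)| = (n:ℝ)+1 - u := by
        push_cast
        rw [abs_of_nonpos (by push_cast at h1 ⊢; linarith)]
        ring
      push_cast at e1 e2 ⊢
      rw [e1, e2]
      rw [max_eq_right (by push_cast at h1; linarith), max_eq_right (by linarith)]
      ring

lemma tent_grid_sum {K : ℝ} (hK : 0 < K) (n : ℕ) (hn : 1 ≤ n) (v : ℝ)
    (hv1 : -K ≤ v) (hv2 : v ≤ K) :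
    ∑ i ∈ Finset.range (n+1), tent (-K + i*(2*K/n)) (2*K/n) v = 1 := by
  set δ : ℝ := 2*K/n with hδdef
  have hδ : 0 < δ := by positivity
  set u : ℝ := (v + K)/δ with hudef
  have h0 : 0 ≤ u := div_nonneg (by linarith) hδ.le
  have hn0 : (n:ℝ) ≠ 0 := by positivity
  have h1 : u ≤ n := by
    rw [hudef, div_le_iff₀ hδ]
    have : (n:ℝ) * δ = 2*K := by rw [hδdef]; field_simp
    linarith [this]
  have key : ∀ i : ℕ, tent (-K + i*δ) δ v = max 0 (1 - |u - i|) := by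
    intro i
    unfold tent
    congr 2
    have e : u - i = (v - (-K + i*δ))/δ := by rw [hudef]; field_simp; ring
    rw [e, abs_div, abs_of_pos hδ]
  calc ∑ i ∈ Finset.range (n+1), tent (-K + i*δ) δ v
      = ∑ i ∈ Finset.range (n+1), max 0 (1 - |u - i|) :=
        Finset.sum_congr rfl (fun i _ => key i)
    _ = 1 := tentsum_unit n u h0 h1

lemma sum_ind_le (N a w : ℕ) (M : ℝ) (hM : 0 ≤ M) (f : ℕ → ℝ)
    (hfM : ∀ i, f i ≤ M)
    (hz : ∀ i, ¬(i ≤ a + w ∧ a ≤ i + w) → f i = 0) :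
    ∑ i ∈ Finset.range N, f i ≤ (2*w+1 : ℝ) * M := by
  classical
  have h1 : ∑ i ∈ Finset.range N, f i
      = ∑ i ∈ (Finset.range N) ∩ (Finset.Icc (a - w) (a + w)), f i := by
    refine (Finset.sum_subset Finset.inter_subset_left ?_).symm
    intro i hiN hi
    apply hz
    intro hcond
    apply hi
    refine Finset.mem_inter.mpr ⟨hiN, Finset.mem_Icc.mpr ⟨by omega, hcond.1⟩⟩
  rw [h1]
  calc ∑ i ∈ (Finset.range N) ∩ (Finset.Icc (a - w) (a + w)), f i
      ≤ ((Finset.range N) ∩ (Finset.Icc (a - w) (a + w))).card • M :=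
        Finset.sum_le_card_nsmul _ _ _ (fun i _ => hfM i)
    _ ≤ (2*w+1 : ℕ) • M := by
        apply nsmul_le_nsmul_left hM
        calc ((Finset.range N) ∩ (Finset.Icc (a - w) (a + w))).card
            ≤ (Finset.Icc (a - w) (a + w)).card :=
              Finset.card_le_card Finset.inter_subset_right
          _ ≤ 2*w+1 := by rw [Nat.card_Icc]; omega
    _ = (2*w+1 : ℝ) * M := by rw [nsmul_eq_mul]; push_cast; ring

lemma clamp_asc (p q : ℝ) (hpq : p < q) : ∃ θ : ℝ → ℝ, Continuous θ ∧
    (∀ v, 0 ≤ θ v ∧ θ v ≤ 1) ∧ (∀ v, v ≤ p → θ v = 0) ∧ (∀ v, q ≤ v → θ v = 1) := by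
  refine ⟨fun v => max 0 (min 1 ((v - p)/(q - p))), by fun_prop, ?_, ?_, ?_⟩
  · intro v
    exact ⟨le_max_left _ _, max_le zero_le_one (min_le_left _ _)⟩
  · intro v hv
    apply max_eq_left
    have hx : (v-p)/(q-p) ≤ 0 := div_nonpos_of_nonpos_of_nonneg (by linarith) (by linarith)
    exact le_trans (min_le_right _ _) hx
  · intro v hv
    have hx : (1:ℝ) ≤ (v-p)/(q-p) := by
      rw [le_div_iff₀ (by linarith)]
      linarith
    show max 0 (min 1 ((v - p)/(q - p))) = 1
    rw [min_eq_left hx]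
    exact max_eq_right zero_le_one

lemma clamp_desc (p q : ℝ) (hpq : q < p) : ∃ θ : ℝ → ℝ, Continuous θ ∧
    (∀ v, 0 ≤ θ v ∧ θ v ≤ 1) ∧ (∀ v, p ≤ v → θ v = 0) ∧ (∀ v, v ≤ q → θ v = 1) := by
  obtain ⟨θ, hc, h01, h0, h1⟩ := clamp_asc (-p) (-q) (by linarith)
  exact ⟨fun v => θ (-v), hc.comp continuous_neg, fun v => h01 _,
    fun v hv => h0 _ (by linarith), fun v hv => h1 _ (by linarith)⟩

end RealHelpers

section CStarHelpers
variable {A : Type*} [CStarAlgebra A] [Nontrivial A]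

lemma tele (X Z : A) : ∀ n : ℕ, Z^(n+1) - X^(n+1)
    = ∑ j ∈ Finset.range (n+1), X^j * (Z - X) * Z^(n-j) := by
  intro n
  induction n with
  | zero => simp
  | succ n ih =>
    have h1 : Z^(n+2) - X^(n+2) = X * (Z^(n+1) - X^(n+1)) + (Z - X) * Z^(n+1) := by
      rw [mul_sub, sub_mul, ← pow_succ', ← pow_succ']
      abel
    rw [h1, ih, Finset.mul_sum, Finset.sum_range_succ' (fun j => X^j * (Z-X) * Z^(n+1-j)) (n+1)]
    congr 1
    · refine Finset.sum_congr rfl fun j hj => ?_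
      rw [← mul_assoc, ← mul_assoc, ← pow_succ']
      congr 2
      omega
    · simp

lemma norm_pow_sub_pow (X Z : A) {R : ℝ} (hX : ‖X‖ ≤ R) (hZ : ‖Z‖ ≤ R) (n : ℕ) :
    ‖Z^(n+1) - X^(n+1)‖ ≤ (n+1) * ‖Z - X‖ * R^n := by
  have hR : 0 ≤ R := le_trans (norm_nonneg X) hX
  rw [tele X Z n]
  calc ‖∑ j ∈ Finset.range (n+1), X^j * (Z - X) * Z^(n-j)‖
      ≤ ∑ j ∈ Finset.range (n+1), ‖X^j * (Z - X) * Z^(n-j)‖ := norm_sum_le _ _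
    _ ≤ ∑ j ∈ Finset.range (n+1), ‖Z - X‖ * R^n := by
        refine Finset.sum_le_sum fun j hj => ?_
        have hj' : j ≤ n := by simp at hj; omega
        calc ‖X^j * (Z - X) * Z^(n-j)‖ ≤ ‖X^j‖ * ‖Z - X‖ * ‖Z^(n-j)‖ := by
              exact le_trans (norm_mul_le _ _) (by gcongr; exact norm_mul_le _ _)
          _ ≤ R^j * ‖Z - X‖ * R^(n-j) := by
              gcongr
              · exact le_trans (norm_pow_le _ _) (by gcongr)
              · exact le_trans (norm_pow_le _ _) (by gcongr)
          _ = ‖Z - X‖ * R^n := by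
              rw [show R^j * ‖Z-X‖ * R^(n-j) = ‖Z-X‖ * (R^j * R^(n-j)) by ring, ← pow_add]
              congr 2
              omega
    _ = (n+1) * ‖Z - X‖ * R^n := by
        rw [Finset.sum_const, Finset.card_range]; push_cast; ring

lemma exp_tsum_real (Z : A) : exp Z = ∑' n : ℕ, ((n.factorial : ℝ))⁻¹ • Z^n := by
  rw [NormedSpace.exp_eq_tsum (𝕂 := ℂ)]
  exact tsum_congr fun n => by
    rw [show ((n.factorial:ℂ))⁻¹ = (((n.factorial:ℝ)⁻¹ : ℝ) : ℂ) by push_cast; ring,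
      Complex.coe_smul]

lemma summable_exp_real (Z : A) : Summable (fun n : ℕ => ((n.factorial : ℝ))⁻¹ • Z^n) :=
  NormedSpace.expSeries_summable' (𝕂 := ℝ) Z

lemma real_exp_tsum (R : ℝ) : ∑' m : ℕ, R^m / (m.factorial : ℝ) = Real.exp R := by
  rw [Real.exp_eq_exp_ℝ, NormedSpace.exp_eq_tsum_div]

lemma summable_pow_fact (R : ℝ) : Summable (fun m : ℕ => R^m / (m.factorial:ℝ)) :=
  Real.summable_pow_div_factorial R

lemma norm_triple (u v w : A) : ‖u * v * w‖ ≤ ‖u‖*‖v‖*‖w‖ :=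
  le_trans (norm_mul_le _ _) (by gcongr; exact norm_mul_le _ _)

lemma fact_succ_div (m : ℕ) : ((m+1:ℝ)) / (((m+1).factorial:ℝ)) = 1 / (m.factorial:ℝ) := by
  rw [Nat.factorial_succ]
  push_cast
  rw [div_mul_eq_div_div, div_self (by exact_mod_cast Nat.succ_ne_zero m)]

end CStarHelpers

section Corner
variable {A : Type*} [CStarAlgebra A] [Nontrivial A]

set_option maxHeartbeats 1000000 in
lemma corner_machine (a c x y : A) (t s : ℝ) (ht : 0 < t) (hs : 0 < s)
    (hxa : x * a = 0) (hax : a * x = 0) (hay : a * y = y)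
    (hnx : ‖x‖ ≤ 1) (hny : ‖y‖ ≤ 1) (hna : ‖a‖ ≤ 1) :
    ‖x * (exp (t•a + s•c) - exp (t•a)) * x‖
        ≤ s * (‖c‖ + s * ‖c‖^2 * (1 + Real.exp (t + s*‖c‖))) ∧
    ‖y * (exp (t•a + s•c) - exp (t•a)) * y‖
        ≤ s * (‖c‖ * Real.exp (t + s*‖c‖)) ∧
    s * ((Real.exp t - 1)/t * ‖x*c*y‖ - s * ‖c‖^2 * (1 + Real.exp (t + s*‖c‖)))
        ≤ ‖x * (exp (t•a + s•c) - exp (t•a)) * y‖ := by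
  have hc0 : (0:ℝ) ≤ ‖c‖ := norm_nonneg c
  set X : A := t • a with hXdef
  set Z : A := t • a + s • c with hZdef
  set R : ℝ := t + s * ‖c‖ with hRdef
  set P : A := exp Z - exp X with hPdef
  have hsc : ‖s • c‖ = s * ‖c‖ := by
    rw [norm_smul, Real.norm_eq_abs, abs_of_pos hs]
  have hRt : t ≤ R := by rw [hRdef]; nlinarith
  have hR0 : 0 < R := lt_of_lt_of_le ht hRt
  have hXn : ‖X‖ ≤ R := by
    rw [hXdef, norm_smul, Real.norm_eq_abs, abs_of_pos ht]
    nlinarith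
  have hZn : ‖Z‖ ≤ R := by
    calc ‖Z‖ ≤ ‖t • a‖ + ‖s • c‖ := norm_add_le _ _
      _ ≤ t * 1 + s * ‖c‖ := by
          rw [hsc, norm_smul, Real.norm_eq_abs, abs_of_pos ht]; gcongr
      _ = R := by rw [hRdef]; ring
  have hZX : Z - X = s • c := by rw [hZdef, hXdef, add_sub_cancel_left]
  have hxX : x * X = 0 := by rw [hXdef, mul_smul_comm, hxa, smul_zero]
  have hXx : X * x = 0 := by rw [hXdef, smul_mul_assoc, hax, smul_zero]
  have hXy : X * y = t • y := by rw [hXdef, smul_mul_assoc, hay]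
  have hxXp : ∀ j : ℕ, x * X^(j+1) = 0 := by
    intro j; rw [pow_succ', ← mul_assoc, hxX, zero_mul]
  have hXpx : ∀ j : ℕ, X^(j+1) * x = 0 := by
    intro j; rw [pow_succ, mul_assoc, hXx, mul_zero]
  have hXpy : ∀ m : ℕ, X^m * y = (t^m) • y := by
    intro m; induction m with
    | zero => simp
    | succ m ih =>
        rw [pow_succ', mul_assoc, ih, mul_smul_comm, hXy, smul_smul, pow_succ, mul_comm]
  have SX := summable_exp_real X
  have SZ := summable_exp_real Z
  have HP : HasSum (fun n : ℕ => ((n.factorial:ℝ))⁻¹ • (Z^n - X^n)) P := by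
    have h := SZ.hasSum.sub SX.hasSum
    rw [← exp_tsum_real, ← exp_tsum_real] at h
    simpa [smul_sub] using h
  have HG : HasSum (fun m : ℕ => (((m+1).factorial:ℝ))⁻¹ • (Z^(m+1) - X^(m+1))) P := by
    have h := (hasSum_nat_add_iff' (f := fun n : ℕ => ((n.factorial:ℝ))⁻¹ • (Z^n - X^n)) 1).mpr HP
    simpa using h
  have hZm : ∀ m : ℕ, ‖Z^m‖ ≤ R^m :=
    fun m => le_trans (norm_pow_le _ _) (pow_le_pow_left₀ (norm_nonneg _) hZn m)
  have hXm : ∀ m : ℕ, ‖X^m‖ ≤ R^m :=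
    fun m => le_trans (norm_pow_le _ _) (pow_le_pow_left₀ (norm_nonneg _) hXn m)
  have hfact_le : ∀ m : ℕ, (((m+1).factorial:ℝ))⁻¹ ≤ ((m.factorial:ℝ))⁻¹ := by
    intro m
    apply inv_anti₀ (by positivity)
    exact_mod_cast Nat.factorial_le (Nat.le_succ m)
  have hSbd : ∀ W : A, (∀ m : ℕ, ‖W^m‖ ≤ R^m) →
      Summable (fun m : ℕ => (((m+1).factorial:ℝ))⁻¹ • W^m) := by
    intro W hW
    refine Summable.of_norm_bounded (g := fun m => R^m / (m.factorial:ℝ)) (summable_pow_fact R)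
      fun m => ?_
    rw [norm_smul, Real.norm_eq_abs, abs_of_pos (by positivity)]
    calc (((m+1).factorial:ℝ))⁻¹ * ‖W^m‖ ≤ ((m.factorial:ℝ))⁻¹ * R^m :=
          mul_le_mul (hfact_le m) (hW m) (norm_nonneg _) (by positivity)
      _ = R^m / (m.factorial:ℝ) := by rw [div_eq_mul_inv, mul_comm]
  have Sζ := hSbd Z hZm
  have Sζ₀ := hSbd X hXm
  set ζ : A := ∑' m : ℕ, (((m+1).factorial:ℝ))⁻¹ • Z^m with hζdef
  set ζ₀ : A := ∑' m : ℕ, (((m+1).factorial:ℝ))⁻¹ • X^m with hζ₀def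
  have Hζ : HasSum (fun m : ℕ => (((m+1).factorial:ℝ))⁻¹ • Z^m) ζ := Sζ.hasSum
  have Hζ₀ : HasSum (fun m : ℕ => (((m+1).factorial:ℝ))⁻¹ • X^m) ζ₀ := Sζ₀.hasSum
  -- distance between ζ and ζ₀
  have hnζ : ‖ζ - ζ₀‖ ≤ s * ‖c‖ * (1 + Real.exp R) := by
    have hsub : ζ - ζ₀ = ∑' m : ℕ, (((m+1).factorial:ℝ))⁻¹ • (Z^m - X^m) := by
      rw [hζdef, hζ₀def, ← Sζ.tsum_sub Sζ₀]
      exact tsum_congr fun m => (smul_sub _ _ _).symm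
    set u : ℕ → ℝ := fun m => s * ‖c‖ * (if m = 0 then 1 else R^(m-1) / ((m-1).factorial:ℝ))
      with hudef
    have hvsum : Summable (fun m : ℕ =>
        (if m = 0 then (1:ℝ) else R^(m-1) / ((m-1).factorial:ℝ))) := by
      refine (summable_nat_add_iff 1).mp ?_
      simpa using summable_pow_fact R
    have hSu : Summable u := hvsum.mul_left _
    have hbound : ∀ m : ℕ, ‖(((m+1).factorial:ℝ))⁻¹ • (Z^m - X^m)‖ ≤ u m := by
      intro m
      match m with
      | 0 =>
        simp only [pow_zero, sub_self, smul_zero, norm_zero, hudef]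
        norm_num
        exact mul_nonneg hs.le hc0
      | (k+1) =>
        rw [norm_smul, Real.norm_eq_abs, abs_of_pos (by positivity)]
        have h1 : ‖Z^(k+1) - X^(k+1)‖ ≤ (k+1) * (s*‖c‖) * R^k := by
          have h := norm_pow_sub_pow X Z hXn hZn k
          rwa [hZX, hsc] at h
        have hfdiv : ((k:ℝ)+1) / ((((k+1)+1)).factorial:ℝ) ≤ 1/(k.factorial:ℝ) := by
          calc ((k:ℝ)+1)/((((k+1)+1)).factorial:ℝ) ≤ ((k:ℝ)+1)/(((k+1)).factorial:ℝ) := by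
                gcongr
                · omega
            _ = 1/(k.factorial:ℝ) := fact_succ_div k
        calc ((((k+1)+1).factorial:ℝ))⁻¹ * ‖Z^(k+1) - X^(k+1)‖
            ≤ ((((k+1)+1).factorial:ℝ))⁻¹ * ((k+1) * (s*‖c‖) * R^k) := by gcongr
          _ = (s*‖c‖) * R^k * (((k:ℝ)+1) / ((((k+1)+1).factorial:ℝ))) := by
              push_cast; ring
          _ ≤ (s*‖c‖) * R^k * (1/(k.factorial:ℝ)) :=
              mul_le_mul_of_nonneg_left hfdiv
                (mul_nonneg (mul_nonneg hs.le hc0) (by positivity))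
          _ = u (k+1) := by simp [hudef]; ring
    have hSnorm : Summable (fun m : ℕ => ‖(((m+1).factorial:ℝ))⁻¹ • (Z^m - X^m)‖) :=
      Summable.of_nonneg_of_le (fun m => norm_nonneg _) hbound hSu
    calc ‖ζ - ζ₀‖ = ‖∑' m : ℕ, (((m+1).factorial:ℝ))⁻¹ • (Z^m - X^m)‖ := by rw [hsub]
      _ ≤ ∑' m : ℕ, ‖(((m+1).factorial:ℝ))⁻¹ • (Z^m - X^m)‖ := norm_tsum_le_tsum_norm hSnorm
      _ ≤ ∑' m : ℕ, u m := Summable.tsum_le_tsum hbound hSnorm hSu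
      _ = s * ‖c‖ * (1 + Real.exp R) := by
          rw [hudef, tsum_mul_left]
          congr 1
          rw [hvsum.tsum_eq_zero_add]
          simp only [if_pos rfl]
          congr 1
          rw [← real_exp_tsum R]
          exact tsum_congr fun m => by simp
  -- corner collapse for x on the left
  have hterm : ∀ (w : A) (m : ℕ), x * (Z^(m+1) - X^(m+1)) * w = s • (x * c * (Z^m * w)) := by
    intro w m
    rw [tele X Z m, Finset.mul_sum, Finset.sum_mul]
    rw [Finset.sum_eq_single_of_mem 0 (Finset.mem_range.mpr (Nat.succ_pos m))]
    · simp only [pow_zero, one_mul, Nat.sub_zero, hZX]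
      simp [mul_assoc, smul_mul_assoc, mul_smul_comm]
    · intro j hj hj0
      obtain ⟨j', rfl⟩ := Nat.exists_eq_succ_of_ne_zero hj0
      simp only [← mul_assoc]
      rw [hxXp j', zero_mul, zero_mul, zero_mul]
  have HWPW : ∀ w w' : A, HasSum
      (fun m : ℕ => (((m+1).factorial:ℝ))⁻¹ • (w * (Z^(m+1) - X^(m+1)) * w')) (w * P * w') := by
    intro w w'
    have h := (HG.mul_left w).mul_right w'
    simpa [smul_mul_assoc, mul_smul_comm] using h
  have hxPw : ∀ w : A, x * P * w = s • (x * c * (ζ * w)) := by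
    intro w
    have h1 := HWPW x w
    have h2 := ((Hζ.mul_right w).mul_left (x*c)).const_smul s
    have e : (fun m : ℕ => (((m+1).factorial:ℝ))⁻¹ • (x * (Z^(m+1) - X^(m+1)) * w))
        = (fun m : ℕ => s • (x * c * ((((m+1).factorial:ℝ))⁻¹ • Z^m * w))) := by
      funext m
      rw [hterm w m, smul_comm]
      congr 1
      rw [smul_mul_assoc, mul_smul_comm, mul_assoc]
    rw [e] at h1
    exact h1.unique h2
  have hζ₀x : ζ₀ * x = x := by
    have h1 := Hζ₀.mul_right x
    have e : (fun m : ℕ => ((((m+1).factorial:ℝ))⁻¹ • X^m) * x)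
        = (fun m : ℕ => if m = 0 then x else 0) := by
      funext m
      match m with
      | 0 => simp
      | (k+1) => simp [smul_mul_assoc, hXpx k]
    rw [e] at h1
    exact h1.unique (hasSum_ite_eq 0 x)
  have hζ₀y : ζ₀ * y = ((Real.exp t - 1)/t) • y := by
    have hσ : HasSum (fun m : ℕ => t^m / (((m+1).factorial:ℝ))) ((Real.exp t - 1)/t) := by
      have h0 : HasSum (fun n : ℕ => t^n / (n.factorial:ℝ)) (Real.exp t) := by
        have h := (summable_pow_fact t).hasSum
        rwa [real_exp_tsum t] at h
      have h1 := (hasSum_nat_add_iff' (f := fun n : ℕ => t^n/(n.factorial:ℝ)) 1).mpr h0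
      have h2 := h1.div_const t
      have e : (fun m : ℕ => t^(m+1) / (((m+1).factorial:ℝ)) / t)
          = (fun m : ℕ => t^m / (((m+1).factorial:ℝ))) := by
        funext m
        rw [pow_succ]
        field_simp
      rw [e] at h2
      simpa using h2
    have h1 := Hζ₀.mul_right y
    have e : (fun m : ℕ => ((((m+1).factorial:ℝ))⁻¹ • X^m) * y)
        = fun m : ℕ => (t^m / (((m+1).factorial:ℝ))) • y := by
      funext m
      rw [smul_mul_assoc, hXpy m, smul_smul, div_eq_mul_inv, mul_comm]
    rw [e] at h1
    exact h1.unique (hσ.smul_const y)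
  -- bound (1)
  have hζx : ζ * x = x + (ζ - ζ₀) * x := by rw [sub_mul, hζ₀x]; abel
  have hb1 : ‖x * P * x‖ ≤ s * (‖c‖ + s * ‖c‖^2 * (1 + Real.exp R)) := by
    rw [hxPw x, norm_smul, Real.norm_eq_abs, abs_of_pos hs]
    have h1 : x * c * (ζ * x) = x*c*x + x*c*((ζ - ζ₀)*x) := by rw [hζx, mul_add]
    rw [h1]
    have h2 : ‖x*c*x‖ ≤ ‖c‖ := by
      calc ‖x*c*x‖ ≤ ‖x‖*‖c‖*‖x‖ := norm_triple _ _ _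
        _ ≤ 1*‖c‖*1 := mul_le_mul (mul_le_mul hnx (le_refl ‖c‖) hc0 zero_le_one) hnx
            (norm_nonneg _) (by positivity)
        _ = ‖c‖ := by ring
    have h5 : ‖(ζ - ζ₀)*x‖ ≤ s * ‖c‖ * (1 + Real.exp R) := by
      calc ‖(ζ - ζ₀)*x‖ ≤ ‖ζ - ζ₀‖ * ‖x‖ := norm_mul_le _ _
        _ ≤ (s * ‖c‖ * (1 + Real.exp R)) * 1 :=
            mul_le_mul hnζ hnx (norm_nonneg _)
              (mul_nonneg (mul_nonneg hs.le hc0) (by positivity))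
        _ = s * ‖c‖ * (1 + Real.exp R) := by ring
    have h3 : ‖x*c*((ζ - ζ₀)*x)‖ ≤ s * ‖c‖^2 * (1 + Real.exp R) := by
      calc ‖x*c*((ζ - ζ₀)*x)‖ ≤ ‖x‖*‖c‖*‖(ζ - ζ₀)*x‖ := norm_triple _ _ _
        _ ≤ 1*‖c‖*(s * ‖c‖ * (1 + Real.exp R)) :=
            mul_le_mul (mul_le_mul hnx (le_refl ‖c‖) hc0 zero_le_one) h5 (norm_nonneg _)
              (by positivity)
        _ = s * ‖c‖^2 * (1 + Real.exp R) := by ring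
    have hfin : ‖x*c*x + x*c*((ζ - ζ₀)*x)‖ ≤ ‖c‖ + s * ‖c‖^2 * (1 + Real.exp R) :=
      le_trans (norm_add_le _ _) (add_le_add h2 h3)
    exact mul_le_mul_of_nonneg_left hfin hs.le
  -- bound (2)
  have hb2 : ‖y * P * y‖ ≤ s * (‖c‖ * Real.exp R) := by
    have H := HWPW y y
    have hbound : ∀ m : ℕ, ‖(((m+1).factorial:ℝ))⁻¹ • (y * (Z^(m+1) - X^(m+1)) * y)‖
        ≤ s * ‖c‖ * (R^m / (m.factorial:ℝ)) := by
      intro m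
      rw [norm_smul, Real.norm_eq_abs, abs_of_pos (by positivity)]
      have h3 : ‖Z^(m+1) - X^(m+1)‖ ≤ (m+1) * (s*‖c‖) * R^m := by
        have h := norm_pow_sub_pow X Z hXn hZn m
        rwa [hZX, hsc] at h
      have hnn : (0:ℝ) ≤ (m+1) * (s*‖c‖) * R^m :=
        mul_nonneg (mul_nonneg (by positivity) (mul_nonneg hs.le hc0)) (by positivity)
      have h1 : ‖y * (Z^(m+1) - X^(m+1)) * y‖ ≤ (m+1) * (s*‖c‖) * R^m := by
        calc ‖y * (Z^(m+1) - X^(m+1)) * y‖ ≤ ‖y‖ * ‖Z^(m+1) - X^(m+1)‖ * ‖y‖ :=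
              norm_triple _ _ _
          _ ≤ 1 * ((m+1) * (s*‖c‖) * R^m) * 1 :=
              mul_le_mul (mul_le_mul hny h3 (norm_nonneg _) zero_le_one) hny (norm_nonneg _)
                (by nlinarith)
          _ = (m+1) * (s*‖c‖) * R^m := by ring
      calc (((m+1).factorial:ℝ))⁻¹ * ‖y * (Z^(m+1) - X^(m+1)) * y‖
          ≤ (((m+1).factorial:ℝ))⁻¹ * ((m+1) * (s*‖c‖) * R^m) := by gcongr
        _ = s * ‖c‖ * R^m * ((m+1:ℝ) / (((m+1).factorial:ℝ))) := by push_cast; ring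
        _ = s * ‖c‖ * R^m * (1 / ((m.factorial:ℝ))) := by rw [fact_succ_div m]
        _ = s * ‖c‖ * (R^m / (m.factorial:ℝ)) := by ring
    have hSmaj : Summable (fun m : ℕ => s * ‖c‖ * (R^m / (m.factorial:ℝ))) :=
      (summable_pow_fact R).mul_left _
    have hSnorm : Summable
        (fun m : ℕ => ‖(((m+1).factorial:ℝ))⁻¹ • (y * (Z^(m+1) - X^(m+1)) * y)‖) :=
      Summable.of_nonneg_of_le (fun m => norm_nonneg _) hbound hSmaj
    calc ‖y * P * y‖
        = ‖∑' m : ℕ, (((m+1).factorial:ℝ))⁻¹ • (y * (Z^(m+1) - X^(m+1)) * y)‖ := by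
          rw [H.tsum_eq]
      _ ≤ ∑' m : ℕ, ‖(((m+1).factorial:ℝ))⁻¹ • (y * (Z^(m+1) - X^(m+1)) * y)‖ :=
          norm_tsum_le_tsum_norm hSnorm
      _ ≤ ∑' m : ℕ, s * ‖c‖ * (R^m / (m.factorial:ℝ)) := Summable.tsum_le_tsum hbound hSnorm hSmaj
      _ = s * (‖c‖ * Real.exp R) := by rw [tsum_mul_left, real_exp_tsum]; ring
  -- bound (3)
  have hσpos : (0:ℝ) ≤ (Real.exp t - 1)/t := by
    have h := Real.one_le_exp ht.le
    apply div_nonneg (by linarith) ht.le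
  have hb3 : s * ((Real.exp t - 1)/t * ‖x*c*y‖ - s * ‖c‖^2 * (1 + Real.exp R))
      ≤ ‖x * P * y‖ := by
    rw [hxPw y, norm_smul, Real.norm_eq_abs, abs_of_pos hs]
    have hζy : ζ * y = ((Real.exp t - 1)/t) • y + (ζ - ζ₀) * y := by
      rw [sub_mul, hζ₀y]; abel
    have h1 : x * c * (ζ * y) = ((Real.exp t - 1)/t) • (x*c*y) + x*c*((ζ - ζ₀)*y) := by
      rw [hζy, mul_add, mul_smul_comm]
    rw [h1]
    have h5 : ‖(ζ - ζ₀)*y‖ ≤ s * ‖c‖ * (1 + Real.exp R) := by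
      calc ‖(ζ - ζ₀)*y‖ ≤ ‖ζ - ζ₀‖ * ‖y‖ := norm_mul_le _ _
        _ ≤ (s * ‖c‖ * (1 + Real.exp R)) * 1 :=
            mul_le_mul hnζ hny (norm_nonneg _)
              (mul_nonneg (mul_nonneg hs.le hc0) (by positivity))
        _ = s * ‖c‖ * (1 + Real.exp R) := by ring
    have h2 : ‖x*c*((ζ - ζ₀)*y)‖ ≤ s * ‖c‖^2 * (1 + Real.exp R) := by
      calc ‖x*c*((ζ - ζ₀)*y)‖ ≤ ‖x‖*‖c‖*‖(ζ - ζ₀)*y‖ := norm_triple _ _ _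
        _ ≤ 1*‖c‖*(s * ‖c‖ * (1 + Real.exp R)) :=
            mul_le_mul (mul_le_mul hnx (le_refl ‖c‖) hc0 zero_le_one) h5 (norm_nonneg _)
              (by positivity)
        _ = s * ‖c‖^2 * (1 + Real.exp R) := by ring
    have h6 : ‖((Real.exp t - 1)/t) • (x*c*y)‖ = ((Real.exp t - 1)/t) * ‖x*c*y‖ := by
      rw [norm_smul, Real.norm_eq_abs, abs_of_nonneg hσpos]
    have h7 : ((Real.exp t - 1)/t) * ‖x*c*y‖ - ‖x*c*((ζ - ζ₀)*y)‖
        ≤ ‖((Real.exp t - 1)/t) • (x*c*y) + x*c*((ζ - ζ₀)*y)‖ := by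
      have h8 := norm_add_le (((Real.exp t - 1)/t) • (x*c*y) + x*c*((ζ - ζ₀)*y))
        (-(x*c*((ζ - ζ₀)*y)))
      rw [add_neg_cancel_right, norm_neg, h6] at h8
      linarith
    have h9 : ((Real.exp t - 1)/t) * ‖x*c*y‖ - s * ‖c‖^2 * (1 + Real.exp R)
        ≤ ‖((Real.exp t - 1)/t) • (x*c*y) + x*c*((ζ - ζ₀)*y)‖ := by linarith
    exact mul_le_mul_of_nonneg_left h9 hs.le
  exact ⟨hb1, hb2, hb3⟩

end Corner

section Partition
variable {A : Type*} [CStarAlgebra A] [Nontrivial A]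

set_option maxHeartbeats 4000000 in
lemma bump_witness (h k : A) (hh : IsSelfAdjoint h) (hksa : IsSelfAdjoint k)
    (hne : h * k ≠ k * h) :
    ∃ F G θ : ℝ → ℝ, Continuous F ∧ Continuous G ∧ Continuous θ ∧
      (∀ v, 0 ≤ F v ∧ F v ≤ 1) ∧ (∀ v, 0 ≤ G v ∧ G v ≤ 1) ∧ (∀ v, 0 ≤ θ v ∧ θ v ≤ 1) ∧
      (∀ v, θ v * F v = 0) ∧ (∀ v, θ v * G v = G v) ∧ (∀ v, F v * G v = 0) ∧
      cfc F h * k * cfc G h ≠ 0 := by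
  by_contra hcon
  push_neg at hcon
  refine hne ?_
  have hk0 : h ≠ 0 := by
    intro h0
    exact hne (by rw [h0, zero_mul, mul_zero])
  set K : ℝ := ‖h‖ with hKdef
  have hK : 0 < K := norm_pos_iff.mpr hk0
  have hspec : ∀ v ∈ spectrum ℝ h, -K ≤ v ∧ v ≤ K := by
    intro v hv
    have h1 := spectrum.norm_le_norm_of_mem hv
    rw [Real.norm_eq_abs] at h1
    exact abs_le.mp h1
  have hbound : ∀ n : ℕ, 2*K ≤ n →
      ‖h*k - k*h‖^2 ≤ 10560*K^2*‖k‖^2*(n+1)/n^2 := by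
    intro n hn2K
    have hn1 : 1 ≤ n := by
      by_contra hc
      push_neg at hc
      interval_cases n
      · simp at hn2K; linarith
    have hnR : (0:ℝ) < n := by exact_mod_cast hn1
    set δ : ℝ := 2*K/n with hδdef
    have hδ : 0 < δ := by positivity
    have hδ1 : δ ≤ 1 := by rw [hδdef, div_le_one hnR]; linarith
    set lam : ℕ → ℝ := fun i => -K + i*δ with hlamdef
    set f : ℕ → ℝ → ℝ := fun i => tent (lam i) δ with hfdef
    set Dp : ℕ → ℝ → ℝ := fun i v => (v - lam i) * f i v with hDpdef
    have hfc : ∀ i, Continuous (f i) := fun i => tent_cont _ _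
    have hDc : ∀ i, Continuous (Dp i) := fun i =>
      (continuous_id.sub continuous_const).mul (hfc i)
    have hidc : ∀ i, Continuous (fun v : ℝ => v * f i v) :=
      fun i => continuous_id.mul (hfc i)
    set u : ℕ → A := fun i => cfc (f i) h with hudef
    set w : ℕ → A := fun i => cfc (Dp i) h with hwdef
    set d : ℕ → A := fun i => cfc (fun v => v * f i v) h with hddef
    have hu_sa : ∀ i, IsSelfAdjoint (u i) := fun i => cfc_predicate _ h
    have hd_sa : ∀ i, IsSelfAdjoint (d i) := fun i => cfc_predicate _ h
    -- separation facts
    have hlam_sep : ∀ (i j : ℕ) (c : ℕ), (i + c ≤ j ∨ j + c ≤ i) → (c:ℝ)*δ ≤ |lam i - lam j| := by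
      intro i j c hij
      have e : lam i - lam j = ((i:ℝ) - j)*δ := by rw [hlamdef]; push_cast; ring
      rw [e, abs_mul, abs_of_pos hδ]
      have hcij : (c:ℝ) ≤ |(i:ℝ) - j| := by
        rcases hij with hij | hij
        · have h1 : (i:ℝ) + c ≤ j := by exact_mod_cast hij
          have h2 : (0:ℝ) ≤ c := Nat.cast_nonneg c
          rw [abs_sub_comm, abs_of_nonneg (by linarith : (0:ℝ) ≤ (j:ℝ) - i)]
          linarith
        · have h1 : (j:ℝ) + c ≤ i := by exact_mod_cast hij
          have h2 : (0:ℝ) ≤ c := Nat.cast_nonneg c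
          rw [abs_of_nonneg (by linarith : (0:ℝ) ≤ (i:ℝ) - j)]
          linarith
      nlinarith
    -- partition of unity
    have hone : ∑ i ∈ Finset.range (n+1), u i = 1 := by
      rw [hudef]
      rw [← cfc_sum (fun i => f i) h _ (fun i _ => (hfc i).continuousOn)]
      have e : Set.EqOn (∑ i ∈ Finset.range (n+1), f i) (fun _ => 1) (spectrum ℝ h) := by
        intro v hv
        obtain ⟨hv1, hv2⟩ := hspec v hv
        have h2 := tent_grid_sum hK n hn1 v hv1 hv2
        simpa [hfdef, hlamdef, hδdef, Finset.sum_apply] using h2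
      rw [cfc_congr e]
      exact cfc_const_one ℝ h hh
    have hdu : ∀ i, h * u i = d i := by
      intro i
      conv_lhs => rw [← cfc_id' ℝ h hh]
      rw [hudef, hddef, ← cfc_mul (fun v : ℝ => v) (f i) h (by fun_prop) (hfc i).continuousOn]
    have hud : ∀ i, u i * h = d i := by
      intro i
      conv_lhs => rw [← cfc_id' ℝ h hh]
      rw [hudef, hddef, ← cfc_mul (f i) (fun v : ℝ => v) h (hfc i).continuousOn (by fun_prop)]
      exact cfc_congr (fun v _ => mul_comm _ _)
    have hdw : ∀ i, d i = w i + lam i • u i := by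
      intro i
      rw [hddef, hwdef, hudef, ← cfc_smul (lam i) (f i) h (hfc i).continuousOn,
        ← cfc_add h _ _ ((hDc i).continuousOn) (by fun_prop)]
      exact cfc_congr (fun v _ => by rw [hDpdef]; simp; ring)
    -- norms
    have hu_norm : ∀ i, ‖u i‖ ≤ 1 := by
      intro i
      apply norm_cfc_le zero_le_one
      intro v hv
      rw [Real.norm_eq_abs, hfdef, abs_of_nonneg (tent_nonneg _ _ _)]
      exact tent_le_one hδ _ _
    have hDabs : ∀ i v, |Dp i v| ≤ δ := by
      intro i v
      rw [hDpdef]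
      by_cases hz : f i v = 0
      · simp [hz, hδ.le]
      · have h1 := tent_support hδ hz
        simp only [abs_mul]
        calc |v - lam i| * |f i v| ≤ δ * 1 := by
              apply mul_le_mul h1.le _ (abs_nonneg _) hδ.le
              rw [hfdef, abs_of_nonneg (tent_nonneg _ _ _)]
              exact tent_le_one hδ _ _
          _ = δ := mul_one δ
    have hw_norm : ∀ i, ‖w i‖ ≤ δ := by
      intro i
      apply norm_cfc_le hδ.le
      intro v hv
      rw [Real.norm_eq_abs]
      exact hDabs i v
    -- support facts
    have hfsupp : ∀ i v, f i v ≠ 0 → |v - lam i| < δ := fun i v hv => tent_support hδ hv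
    have hDsupp : ∀ i v, Dp i v ≠ 0 → |v - lam i| < δ := by
      intro i v hv
      apply hfsupp i v
      intro h0
      apply hv
      rw [hDpdef]
      simp [h0]
    have hdsupp : ∀ i v, v * f i v ≠ 0 → |v - lam i| < δ := by
      intro i v hv
      apply hfsupp i v
      intro h0
      apply hv
      simp [h0]
    -- vanishing of separated corners (distance ≥ 3)
    have hvanish : ∀ (F G : ℝ → ℝ) (i j : ℕ), (i+3 ≤ j ∨ j+3 ≤ i) → Continuous F → Continuous G →
        (∀ v, 0 ≤ F v ∧ F v ≤ 1) → (∀ v, 0 ≤ G v ∧ G v ≤ 1) →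
        (∀ v, F v ≠ 0 → |v - lam i| < δ) → (∀ v, G v ≠ 0 → |v - lam j| < δ) →
        cfc F h * k * cfc G h = 0 := by
      intro F G i j hij hFc hGc hF01 hG01 hFs hGs
      have hFG : ∀ v, F v * G v = 0 := by
        intro v
        by_cases hFv : F v = 0
        · rw [hFv, zero_mul]
        · have h1 := hFs v hFv
          have hGv : G v = 0 := by
            by_contra hGv
            have h2 := hGs v hGv
            have h3 : |lam i - lam j| < 2*δ := by
              calc |lam i - lam j| = |(lam i - v) + (v - lam j)| := by ring_nf
                _ ≤ |lam i - v| + |v - lam j| := abs_add_le _ _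
                _ < δ + δ := by
                    rw [abs_sub_comm]
                    exact add_lt_add h1 h2
                _ = 2*δ := by ring
            have h4 := hlam_sep i j 3 hij
            push_cast at h4
            linarith
          rw [hGv, mul_zero]
      rcases hij with hij | hij
      · obtain ⟨θ, hθc, hθ01, hθ0, hθ1⟩ := clamp_asc (lam i + δ) (lam j - δ) (by
          have h4 := hlam_sep i j 3 (Or.inl hij)
          have h5 : lam i ≤ lam j := by
            rw [hlamdef]
            push_cast
            have : (i:ℝ) ≤ j := by exact_mod_cast le_trans (Nat.le_add_right i 3) hij
            nlinarith
          push_cast at h4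
          rw [abs_of_nonpos (by linarith)] at h4
          linarith)
        refine hcon F G θ hFc hGc hθc hF01 hG01 hθ01 ?_ ?_ hFG
        · intro v
          by_cases hFv : F v = 0
          · rw [hFv, mul_zero]
          · have h1 := (abs_lt.mp (hFs v hFv)).2
            rw [hθ0 v (by linarith), zero_mul]
        · intro v
          by_cases hGv : G v = 0
          · rw [hGv, mul_zero]
          · have h1 := (abs_lt.mp (hGs v hGv)).1
            rw [hθ1 v (by linarith), one_mul]
      · obtain ⟨θ, hθc, hθ01, hθ0, hθ1⟩ := clamp_desc (lam i - δ) (lam j + δ) (by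
          have h4 := hlam_sep i j 3 (Or.inr hij)
          have h5 : lam j ≤ lam i := by
            rw [hlamdef]
            push_cast
            have : (j:ℝ) ≤ i := by exact_mod_cast le_trans (Nat.le_add_right j 3) hij
            nlinarith
          push_cast at h4
          rw [abs_of_nonneg (by linarith)] at h4
          linarith)
        refine hcon F G θ hFc hGc hθc hF01 hG01 hθ01 ?_ ?_ hFG
        · intro v
          by_cases hFv : F v = 0
          · rw [hFv, mul_zero]
          · have h1 := (abs_lt.mp (hFs v hFv)).1
            rw [hθ0 v (by linarith), zero_mul]
        · intro v
          by_cases hGv : G v = 0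
          · rw [hGv, mul_zero]
          · have h1 := (abs_lt.mp (hGs v hGv)).2
            rw [hθ1 v (by linarith), one_mul]
    -- the matrix elements
    set m : ℕ → ℕ → A := fun i j =>
      w i * k * u j - u i * k * w j + (lam i - lam j) • (u i * k * u j) with hmdef
    have hdform : ∀ i j, m i j = d i * k * u j - u i * k * d j := by
      intro i j
      rw [hmdef]
      simp only []
      rw [hdw i, hdw j]
      simp only [add_mul, mul_add, smul_mul_assoc, mul_smul_comm, sub_smul]
      abel
    have hsplit : h*k - k*h
        = ∑ i ∈ Finset.range (n+1), ∑ j ∈ Finset.range (n+1), m i j := by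
      have hk_eq : k = ∑ i ∈ Finset.range (n+1), ∑ j ∈ Finset.range (n+1), u i * k * u j := by
        calc k = (∑ i ∈ Finset.range (n+1), u i) * k * (∑ j ∈ Finset.range (n+1), u j) := by
              rw [hone, one_mul, mul_one]
          _ = (∑ i ∈ Finset.range (n+1), u i * k) * (∑ j ∈ Finset.range (n+1), u j) := by
              rw [Finset.sum_mul]
          _ = ∑ i ∈ Finset.range (n+1), ∑ j ∈ Finset.range (n+1), u i * k * u j :=
              Finset.sum_mul_sum _ _ _ _
      have e1 : ∀ i j, h * (u i * k * u j) = d i * k * u j := by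
        intro i j
        rw [← mul_assoc, ← mul_assoc, hdu i]
      have e2 : ∀ i j, (u i * k * u j) * h = u i * k * d j := by
        intro i j
        rw [mul_assoc, hud j]
      calc h*k - k*h
          = h * (∑ i ∈ Finset.range (n+1), ∑ j ∈ Finset.range (n+1), u i * k * u j)
            - (∑ i ∈ Finset.range (n+1), ∑ j ∈ Finset.range (n+1), u i * k * u j) * h := by
            rw [← hk_eq]
        _ = ∑ i ∈ Finset.range (n+1), ∑ j ∈ Finset.range (n+1),
              (d i * k * u j - u i * k * d j) := by
            rw [Finset.mul_sum, Finset.sum_mul, ← Finset.sum_sub_distrib]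
            refine Finset.sum_congr rfl fun i _ => ?_
            rw [Finset.mul_sum, Finset.sum_mul, ← Finset.sum_sub_distrib]
            refine Finset.sum_congr rfl fun j _ => ?_
            rw [e1 i j, e2 i j]
        _ = ∑ i ∈ Finset.range (n+1), ∑ j ∈ Finset.range (n+1), m i j :=
            Finset.sum_congr rfl fun i _ => Finset.sum_congr rfl fun j _ => (hdform i j).symm
    -- far vanishing of m
    have hf01 : ∀ i' v, 0 ≤ f i' v ∧ f i' v ≤ 1 := fun i' v =>
      ⟨tent_nonneg _ _ _, tent_le_one hδ _ _⟩
    have hm_far : ∀ i j, ¬(i ≤ j + 2 ∧ j ≤ i + 2) → m i j = 0 := by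
      intro i j hfar
      have hij : i+3 ≤ j ∨ j+3 ≤ i := by omega
      have hDp01 : ∀ i' v, 0 ≤ max (Dp i' v) 0 ∧ max (Dp i' v) 0 ≤ 1 := by
        intro i' v
        refine ⟨le_max_right _ _, max_le ?_ zero_le_one⟩
        have h2 := abs_le.mp (hDabs i' v)
        linarith [h2.2]
      have hDm01 : ∀ i' v, 0 ≤ max (-(Dp i' v)) 0 ∧ max (-(Dp i' v)) 0 ≤ 1 := by
        intro i' v
        refine ⟨le_max_right _ _, max_le ?_ zero_le_one⟩
        have h2 := abs_le.mp (hDabs i' v)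
        linarith [h2.1]
      have hw_split : ∀ i', w i'
          = cfc (fun v => max (Dp i' v) 0) h - cfc (fun v => max (-(Dp i' v)) 0) h := by
        intro i'
        rw [hwdef, ← cfc_sub (fun v => max (Dp i' v) 0) (fun v => max (-(Dp i' v)) 0) h
          (((hDc i').max continuous_const).continuousOn)
          (((hDc i').neg.max continuous_const).continuousOn)]
        exact cfc_congr fun v _ => (max_zero_sub_max_neg_zero_eq_self (Dp i' v)).symm
      have hsp : ∀ i' v, max (Dp i' v) 0 ≠ 0 → |v - lam i'| < δ := by
        intro i' v hv
        apply hDsupp i' v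
        intro h0
        apply hv
        rw [h0]
        simp
      have hsm : ∀ i' v, max (-(Dp i' v)) 0 ≠ 0 → |v - lam i'| < δ := by
        intro i' v hv
        apply hDsupp i' v
        intro h0
        apply hv
        rw [h0]
        simp
      have t1 : w i * k * u j = 0 := by
        rw [hw_split i, sub_mul, sub_mul]
        rw [hvanish _ (f j) i j hij ((hDc i).max continuous_const) (hfc j)
            (fun v => hDp01 i v) (fun v => hf01 j v) (hsp i) (hfsupp j),
          hvanish (fun v => max (-(Dp i v)) 0) (f j) i j hij ((hDc i).neg.max continuous_const) (hfc j)
            (fun v => hDm01 i v) (fun v => hf01 j v) (hsm i) (hfsupp j)]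
        simp
      have t2 : u i * k * w j = 0 := by
        rw [hw_split j, mul_sub]
        rw [show u i * k * (cfc (fun v => max (Dp j v) 0) h)
            = u i * k * cfc (fun v => max (Dp j v) 0) h from rfl]
        rw [hvanish (f i) _ i j hij (hfc i) ((hDc j).max continuous_const)
            (fun v => hf01 i v) (fun v => hDp01 j v) (hfsupp i) (hsp j),
          hvanish (f i) (fun v => max (-(Dp j v)) 0) i j hij (hfc i) ((hDc j).neg.max continuous_const)
            (fun v => hf01 i v) (fun v => hDm01 j v) (hfsupp i) (hsm j)]
        simp
      have t3 : u i * k * u j = 0 :=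
        hvanish (f i) (f j) i j hij (hfc i) (hfc j) (fun v => hf01 i v) (fun v => hf01 j v)
          (hfsupp i) (hfsupp j)
      rw [hmdef]
      simp only []
      rw [t1, t2, t3]
      simp
    -- uniform norm bound
    have norm_triple' : ∀ (a₁ a₂ a₃ : A), ‖a₁ * a₂ * a₃‖ ≤ ‖a₁‖*‖a₂‖*‖a₃‖ := fun a₁ a₂ a₃ =>
      le_trans (norm_mul_le _ _) (by gcongr; exact norm_mul_le _ _)
    have hm_bd : ∀ i j, ‖m i j‖ ≤ 4*δ*‖k‖ := by
      intro i j
      by_cases hfar : ¬(i ≤ j + 2 ∧ j ≤ i + 2)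
      · rw [hm_far i j hfar, norm_zero]
        positivity
      · push_neg at hfar
        have hlam2 : |lam i - lam j| ≤ 2*δ := by
          have e : lam i - lam j = ((i:ℝ) - j)*δ := by rw [hlamdef]; push_cast; ring
          rw [e, abs_mul, abs_of_pos hδ]
          have h2 : |(i:ℝ) - j| ≤ 2 := by
            rw [abs_le]
            constructor
            · have h3 : (j:ℝ) ≤ i + 2 := by exact_mod_cast hfar.2
              linarith
            · have h3 : (i:ℝ) ≤ j + 2 := by exact_mod_cast hfar.1
              linarith
          nlinarith
        have b1 : ‖w i * k * u j‖ ≤ δ * ‖k‖ := by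
          calc ‖w i * k * u j‖ ≤ ‖w i‖*‖k‖*‖u j‖ := norm_triple' _ _ _
            _ ≤ δ*‖k‖*1 :=
                mul_le_mul (mul_le_mul (hw_norm i) (le_refl ‖k‖) (norm_nonneg k) hδ.le)
                  (hu_norm j) (norm_nonneg _) (by positivity)
            _ = δ*‖k‖ := mul_one _
        have b2 : ‖u i * k * w j‖ ≤ δ * ‖k‖ := by
          calc ‖u i * k * w j‖ ≤ ‖u i‖*‖k‖*‖w j‖ := norm_triple' _ _ _
            _ ≤ 1*‖k‖*δ :=
                mul_le_mul (mul_le_mul (hu_norm i) (le_refl ‖k‖) (norm_nonneg k) zero_le_one)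
                  (hw_norm j) (norm_nonneg _) (by positivity)
            _ = δ*‖k‖ := by ring
        have b3 : ‖(lam i - lam j) • (u i * k * u j)‖ ≤ 2*δ*‖k‖ := by
          rw [norm_smul, Real.norm_eq_abs]
          have b4 : ‖u i * k * u j‖ ≤ ‖k‖ := by
            calc ‖u i * k * u j‖ ≤ ‖u i‖*‖k‖*‖u j‖ := norm_triple' _ _ _
              _ ≤ 1*‖k‖*1 :=
                  mul_le_mul (mul_le_mul (hu_norm i) (le_refl ‖k‖) (norm_nonneg k) zero_le_one)
                    (hu_norm j) (norm_nonneg _) (by positivity)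
              _ = ‖k‖ := by ring
          calc |lam i - lam j| * ‖u i * k * u j‖ ≤ (2*δ) * ‖k‖ :=
              mul_le_mul hlam2 b4 (norm_nonneg _) (by positivity)
            _ = 2*δ*‖k‖ := by ring
        rw [hmdef]
        simp only []
        calc ‖w i * k * u j - u i * k * w j + (lam i - lam j) • (u i * k * u j)‖
            ≤ ‖w i * k * u j - u i * k * w j‖ + ‖(lam i - lam j) • (u i * k * u j)‖ :=
              norm_add_le _ _
          _ ≤ (‖w i * k * u j‖ + ‖u i * k * w j‖) + ‖(lam i - lam j) • (u i * k * u j)‖ := by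
              gcongr
              exact norm_sub_le _ _
          _ ≤ (δ*‖k‖ + δ*‖k‖) + 2*δ*‖k‖ := by gcongr
          _ = 4*δ*‖k‖ := by ring
    -- orthogonality in j
    have hprod0 : ∀ (F G : ℝ → ℝ) (j j' : ℕ), ¬(j ≤ j'+1 ∧ j' ≤ j+1) →
        Continuous F → Continuous G →
        (∀ v, F v ≠ 0 → |v - lam j| < δ) → (∀ v, G v ≠ 0 → |v - lam j'| < δ) →
        cfc F h * cfc G h = 0 := by
      intro F G j j' hjj hFc hGc hFs hGs
      rw [← cfc_mul F G h hFc.continuousOn hGc.continuousOn]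
      have hsep : j + 2 ≤ j' ∨ j' + 2 ≤ j := by omega
      have e : (fun v => F v * G v) = (fun _ => (0:ℝ)) := by
        funext v
        by_cases hFv : F v = 0
        · simp [hFv]
        · have h1 := hFs v hFv
          have hGv : G v = 0 := by
            by_contra hGv
            have h2 := hGs v hGv
            have h3 : |lam j - lam j'| < 2*δ := by
              calc |lam j - lam j'| = |(lam j - v) + (v - lam j')| := by ring_nf
                _ ≤ |lam j - v| + |v - lam j'| := abs_add_le _ _
                _ < δ + δ := by
                    rw [abs_sub_comm]
                    exact add_lt_add h1 h2
                _ = 2*δ := by ring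
            have h4 := hlam_sep j j' 2 hsep
            push_cast at h4
            linarith
          simp [hGv]
      rw [e]
      exact cfc_zero ℝ h
    have hmidz : ∀ (E T F' G' : A), F' * G' = 0 → (E * k * F') * (G' * k * T) = 0 := by
      intro E T F' G' hFG
      have e : (E * k * F') * (G' * k * T) = E * k * (F' * G') * k * T := by noncomm_ring
      rw [e, hFG, mul_zero, zero_mul, zero_mul]
    have horth : ∀ i j i' j', ¬(j ≤ j'+1 ∧ j' ≤ j+1) → m i j * star (m i' j') = 0 := by
      intro i j i' j' hjj
      have z1 : u j * u j' = 0 :=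
        hprod0 (f j) (f j') j j' hjj (hfc j) (hfc j') (hfsupp j) (hfsupp j')
      have z2 : u j * d j' = 0 :=
        hprod0 (f j) _ j j' hjj (hfc j) (hidc j') (hfsupp j) (hdsupp j')
      have z3 : d j * u j' = 0 :=
        hprod0 _ (f j') j j' hjj (hidc j) (hfc j') (hdsupp j) (hfsupp j')
      have z4 : d j * d j' = 0 :=
        hprod0 _ _ j j' hjj (hidc j) (hidc j') (hdsupp j) (hdsupp j')
      rw [hdform i j, hdform i' j']
      have hstar2 : star (d i' * k * u j' - u i' * k * d j')
          = u j' * k * d i' - d j' * k * u i' := by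
        rw [star_sub, star_mul, star_mul, star_mul, star_mul,
          (hu_sa j').star_eq, (hd_sa i').star_eq, (hu_sa i').star_eq, (hd_sa j').star_eq,
          hksa.star_eq]
        simp [mul_assoc]
      rw [hstar2]
      have key : (d i * k * u j - u i * k * d j) * (u j' * k * d i' - d j' * k * u i')
          = (d i * k * u j) * (u j' * k * d i') - (d i * k * u j) * (d j' * k * u i')
            - (u i * k * d j) * (u j' * k * d i') + (u i * k * d j) * (d j' * k * u i') := by
        noncomm_ring
      rw [key, hmidz _ _ _ _ z1, hmidz _ _ _ _ z2, hmidz _ _ _ _ z3, hmidz _ _ _ _ z4]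
      simp
    -- counting
    set B : ℝ := 4*δ*‖k‖ with hBdef
    have hB0 : 0 ≤ B := by rw [hBdef]; positivity
    have hterm_bd : ∀ i j i' j', ‖m i j * star (m i' j')‖ ≤ B^2 := by
      intro i j i' j'
      calc ‖m i j * star (m i' j')‖ ≤ ‖m i j‖ * ‖star (m i' j')‖ := norm_mul_le _ _
        _ = ‖m i j‖ * ‖m i' j'‖ := by rw [norm_star]
        _ ≤ B * B := mul_le_mul (hm_bd i j) (hm_bd i' j') (norm_nonneg _) hB0
        _ = B^2 := (sq B).symm
    have hDD : ‖h*k - k*h‖^2 ≤ ∑ i ∈ Finset.range (n+1), ∑ i' ∈ Finset.range (n+1),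
        ∑ j ∈ Finset.range (n+1), ∑ j' ∈ Finset.range (n+1), ‖m i j * star (m i' j')‖ := by
      have e0 : ‖h*k - k*h‖^2 = ‖(h*k - k*h) * star (h*k - k*h)‖ := by
        rw [CStarRing.norm_self_mul_star, sq]
      rw [e0, hsplit]
      have e1 : (∑ i ∈ Finset.range (n+1), ∑ j ∈ Finset.range (n+1), m i j)
          * star (∑ i ∈ Finset.range (n+1), ∑ j ∈ Finset.range (n+1), m i j)
          = ∑ i ∈ Finset.range (n+1), ∑ i' ∈ Finset.range (n+1),
              ∑ j ∈ Finset.range (n+1), ∑ j' ∈ Finset.range (n+1), m i j * star (m i' j') := by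
        rw [star_sum]
        simp only [star_sum]
        rw [Finset.sum_mul_sum]
        refine Finset.sum_congr rfl fun i _ => Finset.sum_congr rfl fun i' _ => ?_
        rw [Finset.sum_mul_sum]
      rw [e1]
      calc ‖∑ i ∈ Finset.range (n+1), ∑ i' ∈ Finset.range (n+1),
              ∑ j ∈ Finset.range (n+1), ∑ j' ∈ Finset.range (n+1), m i j * star (m i' j')‖
          ≤ ∑ i ∈ Finset.range (n+1), ‖∑ i' ∈ Finset.range (n+1),
              ∑ j ∈ Finset.range (n+1), ∑ j' ∈ Finset.range (n+1), m i j * star (m i' j')‖ :=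
            norm_sum_le _ _
        _ ≤ ∑ i ∈ Finset.range (n+1), ∑ i' ∈ Finset.range (n+1), ‖∑ j ∈ Finset.range (n+1),
              ∑ j' ∈ Finset.range (n+1), m i j * star (m i' j')‖ :=
            Finset.sum_le_sum fun i _ => norm_sum_le _ _
        _ ≤ ∑ i ∈ Finset.range (n+1), ∑ i' ∈ Finset.range (n+1), ∑ j ∈ Finset.range (n+1),
              ‖∑ j' ∈ Finset.range (n+1), m i j * star (m i' j')‖ :=
            Finset.sum_le_sum fun i _ => Finset.sum_le_sum fun i' _ => norm_sum_le _ _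
        _ ≤ ∑ i ∈ Finset.range (n+1), ∑ i' ∈ Finset.range (n+1), ∑ j ∈ Finset.range (n+1),
              ∑ j' ∈ Finset.range (n+1), ‖m i j * star (m i' j')‖ :=
            Finset.sum_le_sum fun i _ => Finset.sum_le_sum fun i' _ =>
              Finset.sum_le_sum fun j _ => norm_sum_le _ _
    have hin3 : ∀ i i' j, ∑ j' ∈ Finset.range (n+1), ‖m i j * star (m i' j')‖ ≤ 3 * B^2 := by
      intro i i' j
      have h2 := sum_ind_le (n+1) j 1 (B^2) (by positivity)
        (fun j' => ‖m i j * star (m i' j')‖) (fun j' => hterm_bd i j i' j')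
        (fun j' hjj => by
          show ‖m i j * star (m i' j')‖ = 0
          rw [horth i j i' j' (by omega), norm_zero])
      calc ∑ j' ∈ Finset.range (n+1), ‖m i j * star (m i' j')‖ ≤ (2*(1:ℕ)+1 : ℝ) * B^2 := h2
        _ = 3 * B^2 := by norm_num
    have hin2 : ∀ i i', ∑ j ∈ Finset.range (n+1), ∑ j' ∈ Finset.range (n+1),
        ‖m i j * star (m i' j')‖ ≤ 5 * (3*B^2) := by
      intro i i'
      have h2 := sum_ind_le (n+1) i 2 (3*B^2) (by positivity)
        (fun j => ∑ j' ∈ Finset.range (n+1), ‖m i j * star (m i' j')‖)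
        (fun j => hin3 i i' j)
        (fun j hij => by
          apply Finset.sum_eq_zero
          intro j' _
          rw [hm_far i j (by omega), zero_mul, norm_zero])
      calc ∑ j ∈ Finset.range (n+1), ∑ j' ∈ Finset.range (n+1), ‖m i j * star (m i' j')‖
          ≤ (2*(2:ℕ)+1 : ℝ) * (3*B^2) := h2
        _ = 5 * (3*B^2) := by norm_num
    have hin1 : ∀ i, ∑ i' ∈ Finset.range (n+1), ∑ j ∈ Finset.range (n+1),
        ∑ j' ∈ Finset.range (n+1), ‖m i j * star (m i' j')‖ ≤ 11 * (5*(3*B^2)) := by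
      intro i
      have h2 := sum_ind_le (n+1) i 5 (5*(3*B^2)) (by positivity)
        (fun i' => ∑ j ∈ Finset.range (n+1), ∑ j' ∈ Finset.range (n+1),
          ‖m i j * star (m i' j')‖)
        (fun i' => hin2 i i')
        (fun i' hii => by
          apply Finset.sum_eq_zero
          intro j _
          apply Finset.sum_eq_zero
          intro j' _
          by_cases hmj : ¬(i ≤ j+2 ∧ j ≤ i+2)
          · rw [hm_far i j hmj, zero_mul, norm_zero]
          · by_cases hmj' : ¬(i' ≤ j'+2 ∧ j' ≤ i'+2)
            · rw [hm_far i' j' hmj', star_zero, mul_zero, norm_zero]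
            · push_neg at hmj hmj'
              rw [horth i j i' j' (by omega), norm_zero])
      calc ∑ i' ∈ Finset.range (n+1), ∑ j ∈ Finset.range (n+1), ∑ j' ∈ Finset.range (n+1),
            ‖m i j * star (m i' j')‖ ≤ (2*(5:ℕ)+1 : ℝ) * (5*(3*B^2)) := h2
        _ = 11 * (5*(3*B^2)) := by norm_num
    calc ‖h*k - k*h‖^2
        ≤ ∑ i ∈ Finset.range (n+1), ∑ i' ∈ Finset.range (n+1), ∑ j ∈ Finset.range (n+1),
            ∑ j' ∈ Finset.range (n+1), ‖m i j * star (m i' j')‖ := hDD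
      _ ≤ ∑ i ∈ Finset.range (n+1), (11 * (5*(3*B^2))) :=
          Finset.sum_le_sum fun i _ => hin1 i
      _ = (n+1) * (11 * (5*(3*B^2))) := by
          rw [Finset.sum_const, Finset.card_range, nsmul_eq_mul]
          push_cast
          ring
      _ = 10560*K^2*‖k‖^2*(n+1)/n^2 := by
          rw [hBdef, hδdef]
          field_simp
          ring
  -- conclude commutativity from the bound
  have hzero : ‖h*k - k*h‖^2 ≤ 0 := by
    by_contra hpos
    push_neg at hpos
    obtain ⟨n, hn⟩ := exists_nat_gt (max (2*K) (21120*K^2*‖k‖^2 / (‖h*k - k*h‖^2)))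
    have h1 : 2*K ≤ n := le_trans (le_max_left _ _) hn.le
    have h2 := hbound n h1
    have hn0 : (0:ℝ) < n := by linarith
    have hnn : 0 < n := by exact_mod_cast hn0
    have h3 : (n:ℝ)+1 ≤ 2*n := by
      have h3' : (1:ℝ) ≤ n := by exact_mod_cast hnn
      linarith
    have h4 : ‖h*k - k*h‖^2 ≤ 21120*K^2*‖k‖^2/n := by
      calc ‖h*k - k*h‖^2 ≤ 10560*K^2*‖k‖^2*(n+1)/n^2 := h2
        _ ≤ 10560*K^2*‖k‖^2*(2*n)/n^2 := by gcongr
        _ = 21120*K^2*‖k‖^2/n := by field_simp; ring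
    have h5 : 21120*K^2*‖k‖^2 / (‖h*k - k*h‖^2) < n := lt_of_le_of_lt (le_max_right _ _) hn
    rw [div_lt_iff₀ hpos] at h5
    have h7 : 21120*K^2*‖k‖^2/n < ‖h*k-k*h‖^2 := by
      rw [div_lt_iff₀ hn0]
      linarith
    linarith
  have h8 : ‖h*k - k*h‖ = 0 := by
    have h9 : ‖h*k - k*h‖^2 = 0 := le_antisymm hzero (sq_nonneg _)
    exact pow_eq_zero_iff (by norm_num) |>.mp h9
  have h10 := norm_eq_zero.mp h8
  exact sub_eq_zero.mp h10

end Partition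

section OrderHelpers
variable {A : Type*} [CStarAlgebra A] [PartialOrder A] [StarOrderedRing A]

lemma sa_smul (t : ℝ) {a : A} (ha : IsSelfAdjoint a) : IsSelfAdjoint (t • a) := by
  rw [IsSelfAdjoint, star_smul, star_trivial, ha.star_eq]

lemma exp_selfAdjoint {a : A} (ha : IsSelfAdjoint a) : IsSelfAdjoint (exp a) := by
  rw [IsSelfAdjoint, NormedSpace.star_exp, ha.star_eq]

lemma exp_nonneg_of_selfAdjoint {a : A} (ha : IsSelfAdjoint a) : 0 ≤ exp a := by
  have h2 : a = (1/2 : ℝ) • a + (1/2 : ℝ) • a := by rw [← add_smul]; norm_num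
  have hc : Commute ((1/2 : ℝ) • a) ((1/2 : ℝ) • a) := Commute.refl _
  have hsa : IsSelfAdjoint ((1/2 : ℝ) • a) := sa_smul _ ha
  calc (0:A) ≤ star (exp ((1/2:ℝ) • a)) * exp ((1/2:ℝ) • a) := star_mul_self_nonneg _
  _ = exp a := by
      let +nondep : NormedAlgebra ℚ A := .restrictScalars ℚ ℂ A
      rw [NormedSpace.star_exp, hsa.star_eq, ← NormedSpace.exp_add_of_commute hc, ← h2]

lemma pow_nonneg' {d : A} (hd : 0 ≤ d) : ∀ n : ℕ, 0 ≤ d ^ (n + 1) := by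
  intro n
  induction n using Nat.strong_induction_on with
  | _ n ih =>
    match n with
    | 0 => simpa using hd
    | 1 => simpa [pow_two, (IsSelfAdjoint.of_nonneg hd).star_eq] using star_mul_self_nonneg d
    | (m+2) =>
      have h1 : d ^ (m + 3) = star d * d ^ (m+1) * d := by
        rw [(IsSelfAdjoint.of_nonneg hd).star_eq]
        rw [show m + 3 = 1 + (m+1) + 1 by ring, pow_add, pow_add, pow_one]
      rw [h1]
      exact star_left_conjugate_nonneg (ih m (by omega)) d

lemma exp_sub_one_nonneg {d : A} (hd : 0 ≤ d) : 0 ≤ exp d - 1 := by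
  have hsum : Summable (fun n : ℕ => ((n.factorial : ℂ))⁻¹ • d ^ n) :=
    NormedSpace.expSeries_summable' (𝕂 := ℂ) d
  have h0 : exp d = ∑' n : ℕ, ((n.factorial : ℂ))⁻¹ • d ^ n := by
    rw [NormedSpace.exp_eq_tsum (𝕂 := ℂ)]
  rw [h0, hsum.tsum_eq_zero_add]
  simp only [pow_zero, Nat.factorial_zero, Nat.cast_one, inv_one, one_smul,
    add_sub_cancel_left]
  refine tsum_nonneg fun n => ?_
  have h1 : (((n+1).factorial : ℂ))⁻¹ • d ^ (n+1)
      = ((((n+1).factorial : ℝ))⁻¹ : ℝ) • d ^ (n+1) := by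
    rw [show (((n+1).factorial:ℂ))⁻¹ = ((((n+1).factorial:ℝ)⁻¹ : ℝ) : ℂ) by push_cast; ring,
      Complex.coe_smul]
  rw [h1]
  exact smul_nonneg (by positivity) (pow_nonneg' hd n)

lemma mul_nonneg_of_comm (comm : ∀ a b : A, a * b = b * a) {p q : A}
    (hp : 0 ≤ p) (hq : 0 ≤ q) : 0 ≤ p * q := by
  have h1 : p * q = star (CFC.sqrt p) * q * CFC.sqrt p := by
    rw [(IsSelfAdjoint.of_nonneg (CFC.sqrt_nonneg (a := p))).star_eq,
      mul_assoc, comm q _, ← mul_assoc, CFC.sqrt_mul_sqrt_self p hp]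
  rw [h1]; exact star_left_conjugate_nonneg hq _

example (comm : ∀ a b : A, a * b = b * a) {a b : A}
    (ha : IsSelfAdjoint a) (hq : 0 ≤ exp (b-a) - 1) (hp : 0 ≤ exp a)
    (hsplit : exp b = exp a * exp (b - a)) :
    exp a ≤ exp b := by
  have key : 0 ≤ exp a * (exp (b - a) - 1) := mul_nonneg_of_comm comm hp hq
  have h2 : exp b - exp a = exp a * (exp (b-a) - 1) := by
    rw [hsplit, mul_sub, mul_one]
  rw [← sub_nonneg, h2]; exact key

lemma cs_corner {P x y : A} (hP : 0 ≤ P) (hx : IsSelfAdjoint x) (hy : IsSelfAdjoint y) :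
    ‖x * P * y‖^2 ≤ ‖x * P * x‖ * ‖y * P * y‖ := by
  set q := CFC.sqrt P with hq
  have hqq : q * q = P := CFC.sqrt_mul_sqrt_self P hP
  have hqsa : IsSelfAdjoint q := IsSelfAdjoint.of_nonneg (CFC.sqrt_nonneg P)
  have e1 : x * P * y = star (q * x) * (q * y) := by
    rw [star_mul, hqsa.star_eq, hx.star_eq, ← hqq]
    noncomm_ring
  have e2 : ‖q * x‖^2 = ‖x * P * x‖ := by
    rw [sq, ← CStarRing.norm_star_mul_self (x := q * x)]
    congr 1
    rw [star_mul, hqsa.star_eq, hx.star_eq, ← hqq]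
    noncomm_ring
  have e3 : ‖q * y‖^2 = ‖y * P * y‖ := by
    rw [sq, ← CStarRing.norm_star_mul_self (x := q * y)]
    congr 1
    rw [star_mul, hqsa.star_eq, hy.star_eq, ← hqq]
    noncomm_ring
  calc ‖x * P * y‖^2 = ‖star (q * x) * (q * y)‖^2 := by rw [e1]
    _ ≤ (‖star (q * x)‖ * ‖q * y‖)^2 := by
        apply pow_le_pow_left₀ (norm_nonneg _) (norm_mul_le _ _)
    _ = ‖q * x‖^2 * ‖q * y‖^2 := by rw [norm_star]; ring
    _ = ‖x * P * x‖ * ‖y * P * y‖ := by rw [e2, e3]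

lemma sa_add_norm_nonneg [Nontrivial A] {z : A} (hz : IsSelfAdjoint z) : 0 ≤ z + ‖z‖ • (1:A) := by
  have h1 : z + ‖z‖ • (1:A) = cfc (fun v : ℝ => v + ‖z‖) z := by
    rw [cfc_add z _ _ (by fun_prop) (by fun_prop), cfc_id' ℝ z hz]
    congr 1
    have : (fun _ : ℝ => ‖z‖) = (fun _ : ℝ => ‖z‖ • (1:ℝ)) := by funext v; simp
    rw [this, cfc_smul ‖z‖ _ z (by fun_prop), cfc_const_one ℝ z hz]
  rw [h1]
  apply cfc_nonneg
  intro v hv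
  have h2 := spectrum.norm_le_norm_of_mem hv
  rw [Real.norm_eq_abs] at h2
  have := abs_le.mp h2
  linarith [this.1]


lemma forward_dir (comm : ∀ a b : A, a * b = b * a) {a b : A}
    (ha : IsSelfAdjoint a) (hb : IsSelfAdjoint b) (hab : a ≤ b) :
    exp a ≤ exp b := by
  have hd : (0:A) ≤ b - a := sub_nonneg.mpr hab
  have hcomm : Commute a (b - a) := comm a (b - a)
  have hsplit : exp b = exp a * exp (b - a) := by
    let +nondep : NormedAlgebra ℚ A := .restrictScalars ℚ ℂ A
    rw [← NormedSpace.exp_add_of_commute hcomm, add_sub_cancel]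
  have key : 0 ≤ exp a * (exp (b - a) - 1) :=
    mul_nonneg_of_comm comm (exp_nonneg_of_selfAdjoint ha) (exp_sub_one_nonneg hd)
  have h2 : exp b - exp a = exp a * (exp (b-a) - 1) := by
    rw [hsplit, mul_sub, mul_one]
  rw [← sub_nonneg, h2]
  exact key

set_option maxHeartbeats 2000000 in
lemma backward_core
    (H : ∀ a b : A, IsSelfAdjoint a → IsSelfAdjoint b → a ≤ b → exp a ≤ exp b)
    (h k : A) (hh : IsSelfAdjoint h) (hk : IsSelfAdjoint k) : h * k = k * h := by
  by_contra hne
  haveI : Nontrivial A := ⟨⟨h*k, k*h, hne⟩⟩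
  have hk0 : k ≠ 0 := by rintro rfl; simp at hne
  set k' : A := ‖k‖⁻¹ • k with hk'def
  have hk'sa : IsSelfAdjoint k' := sa_smul _ hk
  have hknorm0 : ‖k‖ ≠ 0 := norm_ne_zero_iff.mpr hk0
  have hk'norm : ‖k'‖ ≤ 1 := by
    rw [hk'def, norm_smul, Real.norm_eq_abs, abs_of_nonneg (by positivity),
      inv_mul_cancel₀ hknorm0]
  have hne' : h * k' ≠ k' * h := by
    rw [hk'def, mul_smul_comm, smul_mul_assoc]
    intro hcon
    apply hne
    have h2 := smul_right_injective A (inv_ne_zero hknorm0) hcon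
    exact h2
  obtain ⟨F, G, θ, hFc, hGc, hθc, hF01, hG01, hθ01, hθF, hθG, hFG, hw0⟩ :=
    bump_witness h k' hh hk'sa hne'
  set x : A := cfc (fun v => Real.sqrt (F v)) h with hxdef
  set y : A := cfc (fun v => Real.sqrt (G v)) h with hydef
  set a : A := cfc θ h with hadef
  have hsqFc : Continuous fun v => Real.sqrt (F v) := Real.continuous_sqrt.comp hFc
  have hsqGc : Continuous fun v => Real.sqrt (G v) := Real.continuous_sqrt.comp hGc
  have hxsa : IsSelfAdjoint x := cfc_predicate _ h
  have hysa : IsSelfAdjoint y := cfc_predicate _ h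
  have hasa : IsSelfAdjoint a := cfc_predicate _ h
  have hx2 : x * x = cfc F h := by
    rw [hxdef, ← cfc_mul _ _ h hsqFc.continuousOn hsqFc.continuousOn]
    exact cfc_congr fun v _ => Real.mul_self_sqrt (hF01 v).1
  have hy2 : y * y = cfc G h := by
    rw [hydef, ← cfc_mul _ _ h hsqGc.continuousOn hsqGc.continuousOn]
    exact cfc_congr fun v _ => Real.mul_self_sqrt (hG01 v).1
  have hθF0 : ∀ v, Real.sqrt (F v) * θ v = 0 := by
    intro v
    rcases mul_eq_zero.mp (hθF v) with h1 | h1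
    · rw [h1, mul_zero]
    · rw [h1, Real.sqrt_zero, zero_mul]
  have hxa : x * a = 0 := by
    rw [hxdef, hadef, ← cfc_mul _ _ h hsqFc.continuousOn hθc.continuousOn]
    rw [show (fun v => Real.sqrt (F v) * θ v) = (fun _ => (0:ℝ)) from funext hθF0]
    exact cfc_zero ℝ h
  have hax : a * x = 0 := by
    rw [hxdef, hadef, ← cfc_mul _ _ h hθc.continuousOn hsqFc.continuousOn]
    rw [show (fun v => θ v * Real.sqrt (F v)) = (fun _ => (0:ℝ)) from
      funext fun v => by rw [mul_comm]; exact hθF0 v]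
    exact cfc_zero ℝ h
  have hay : a * y = y := by
    rw [hydef, hadef, ← cfc_mul _ _ h hθc.continuousOn hsqGc.continuousOn]
    apply cfc_congr
    intro v _
    show θ v * Real.sqrt (G v) = Real.sqrt (G v)
    by_cases hGv : G v = 0
    · rw [hGv, Real.sqrt_zero, mul_zero]
    · have h1 : θ v = 1 := by
        have h2 := hθG v
        have h3 : (θ v - 1) * G v = 0 := by rw [sub_mul, h2, one_mul, sub_self]
        rcases mul_eq_zero.mp h3 with h4 | h4
        · linarith
        · exact absurd h4 hGv
      rw [h1, one_mul]
  have hxy : x * y = 0 := by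
    rw [hxdef, hydef, ← cfc_mul _ _ h hsqFc.continuousOn hsqGc.continuousOn]
    rw [show (fun v => Real.sqrt (F v) * Real.sqrt (G v)) = (fun _ => (0:ℝ)) from
      funext fun v => by
        rcases mul_eq_zero.mp (hFG v) with h1 | h1 <;> rw [h1, Real.sqrt_zero]
        · rw [zero_mul]
        · rw [mul_zero]]
    exact cfc_zero ℝ h
  have hnx : ‖x‖ ≤ 1 := by
    apply norm_cfc_le zero_le_one
    intro v _
    rw [Real.norm_eq_abs, abs_of_nonneg (Real.sqrt_nonneg _)]
    rw [show (1:ℝ) = Real.sqrt 1 by rw [Real.sqrt_one]]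
    exact Real.sqrt_le_sqrt (hF01 v).2
  have hny : ‖y‖ ≤ 1 := by
    apply norm_cfc_le zero_le_one
    intro v _
    rw [Real.norm_eq_abs, abs_of_nonneg (Real.sqrt_nonneg _)]
    rw [show (1:ℝ) = Real.sqrt 1 by rw [Real.sqrt_one]]
    exact Real.sqrt_le_sqrt (hG01 v).2
  have hna : ‖a‖ ≤ 1 := by
    apply norm_cfc_le zero_le_one
    intro v _
    rw [Real.norm_eq_abs, abs_of_nonneg (hθ01 v).1]
    exact (hθ01 v).2
  -- build c
  set wel : A := x * k' * y with hweldef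
  have hwel1 : ‖wel‖ ≤ 1 := by
    calc ‖wel‖ ≤ ‖x‖*‖k'‖*‖y‖ := norm_triple _ _ _
      _ ≤ 1*1*1 := by
          apply mul_le_mul (mul_le_mul hnx hk'norm (norm_nonneg _) zero_le_one) hny
            (norm_nonneg _) (by positivity)
      _ = 1 := by norm_num
  have hzsa : IsSelfAdjoint (wel + star wel) := by
    rw [IsSelfAdjoint, star_add, star_star, add_comm]
  set c : A := (wel + star wel) + ‖wel + star wel‖ • (1:A) with hcdef
  have hcsa : IsSelfAdjoint c := by
    rw [hcdef]
    exact hzsa.add (sa_smul _ (by rw [IsSelfAdjoint, star_one] : IsSelfAdjoint (1:A)))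
  have hc0 : 0 ≤ c := sa_add_norm_nonneg hzsa
  have hcnorm : ‖c‖ ≤ 4 := by
    have h1 : ‖wel + star wel‖ ≤ 2 := by
      calc ‖wel + star wel‖ ≤ ‖wel‖ + ‖star wel‖ := norm_add_le _ _
        _ = ‖wel‖ + ‖wel‖ := by rw [norm_star]
        _ ≤ 2 := by linarith
    calc ‖c‖ ≤ ‖wel + star wel‖ + ‖‖wel + star wel‖ • (1:A)‖ := norm_add_le _ _
      _ = ‖wel + star wel‖ + ‖wel + star wel‖ * ‖(1:A)‖ := by
          rw [norm_smul, Real.norm_eq_abs, abs_of_nonneg (norm_nonneg _)]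
      _ ≤ 2 + 2*1 := by
          rw [norm_one]
          linarith
      _ = 4 := by norm_num
  -- x c y is the nonzero corner
  have hstarw : star wel = y * k' * x := by
    rw [hweldef, star_mul, star_mul, hxsa.star_eq, hysa.star_eq, hk'sa.star_eq, mul_assoc]
  have hxcy : x * c * y = cfc F h * k' * cfc G h := by
    have e0 : x * c * y = x*wel*y + x*(star wel)*y + x*(‖wel + star wel‖ • (1:A))*y := by
      rw [hcdef, mul_add, mul_add, add_mul, add_mul]
    have e1 : x * wel * y = cfc F h * k' * cfc G h := by
      rw [hweldef, ← hx2, ← hy2]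
      noncomm_ring
    have e2 : x * (y * k' * x) * y = 0 := by
      rw [show x * (y * k' * x) * y = (x*y) * k' * (x*y) by noncomm_ring, hxy]
      simp
    have e3 : ∀ r : ℝ, x * (r • (1:A)) * y = 0 := fun r => by
      rw [mul_smul_comm, smul_mul_assoc, mul_one, hxy, smul_zero]
    rw [e0, e3 _, hstarw, e2, e1]
    simp
  set β : ℝ := ‖x * c * y‖ with hβdef
  have hβ : 0 < β := by
    rw [hβdef, hxcy]
    exact norm_pos_iff.mpr hw0
  have hβ4 : β ≤ 4 := by
    rw [hβdef]
    calc ‖x*c*y‖ ≤ ‖x‖*‖c‖*‖y‖ := norm_triple _ _ _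
      _ ≤ 1*4*1 := by
          apply mul_le_mul (mul_le_mul hnx hcnorm (norm_nonneg _) zero_le_one) hny
            (norm_nonneg _) (by positivity)
      _ = 4 := by norm_num
  -- the main estimate for all t ≥ 1
  have main : ∀ t : ℝ, 1 ≤ t → (Real.exp t - 1)/t * β ≤ 1 + 5 * Real.exp ((t+4)/2) := by
    intro t ht
    set E : ℝ := 16*(1 + Real.exp (t+4)) with hEdef
    have hE16 : 16 ≤ E := by
      rw [hEdef]
      nlinarith [Real.exp_pos (t+4)]
    have hEpos : 0 < E := by linarith
    set s : ℝ := E⁻¹ with hsdef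
    have hs : 0 < s := by positivity
    have hs1 : s ≤ 1 := by
      rw [hsdef]
      rw [inv_le_one_iff₀]
      right; linarith
    have hsE : s * E = 1 := inv_mul_cancel₀ hEpos.ne'
    have ht0 : 0 < t := by linarith
    obtain ⟨b1, b2, b3⟩ := corner_machine a c x y t s ht0 hs hxa hax hay hnx hny hna
    -- H gives positivity of P
    have hP : 0 ≤ exp (t•a + s•c) - exp (t•a) := by
      rw [sub_nonneg]
      apply H
      · exact sa_smul t hasa
      · exact (sa_smul t hasa).add (sa_smul s hcsa)
      · exact le_add_of_nonneg_right (smul_nonneg hs.le hc0)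
    have hcs := cs_corner hP hxsa hysa
    -- numeric bounds
    have hR : t + s*‖c‖ ≤ t + 4 := by
      have : s*‖c‖ ≤ 1*4 :=
        mul_le_mul hs1 hcnorm (norm_nonneg _) zero_le_one
      linarith
    have hexpR : Real.exp (t + s*‖c‖) ≤ Real.exp (t+4) := Real.exp_le_exp.mpr hR
    have hc2 : ‖c‖^2 ≤ 16 := by nlinarith [norm_nonneg c]
    have hcErr : s * ‖c‖^2 * (1 + Real.exp (t + s*‖c‖)) ≤ 1 := by
      calc s * ‖c‖^2 * (1 + Real.exp (t + s*‖c‖)) ≤ s * 16 * (1 + Real.exp (t+4)) := by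
            apply mul_le_mul
            · exact mul_le_mul_of_nonneg_left hc2 hs.le
            · linarith
            · positivity
            · exact mul_nonneg hs.le (by norm_num)
        _ = s * E := by rw [hEdef]; ring
        _ = 1 := hsE
    have hb1' : ‖x * (exp (t•a + s•c) - exp (t•a)) * x‖ ≤ s * 5 := by
      calc ‖x * (exp (t•a + s•c) - exp (t•a)) * x‖
          ≤ s * (‖c‖ + s * ‖c‖^2 * (1 + Real.exp (t + s*‖c‖))) := b1
        _ ≤ s * (4 + 1) := by
            apply mul_le_mul_of_nonneg_left _ hs.le
            linarith
        _ = s * 5 := by norm_num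
    have hb2' : ‖y * (exp (t•a + s•c) - exp (t•a)) * y‖ ≤ s * (4 * Real.exp (t+4)) := by
      calc ‖y * (exp (t•a + s•c) - exp (t•a)) * y‖
          ≤ s * (‖c‖ * Real.exp (t + s*‖c‖)) := b2
        _ ≤ s * (4 * Real.exp (t+4)) := by
            apply mul_le_mul_of_nonneg_left _ hs.le
            apply mul_le_mul hcnorm hexpR (Real.exp_pos _).le (by norm_num)
    have hb3' : s * ((Real.exp t - 1)/t * β - 1)
        ≤ ‖x * (exp (t•a + s•c) - exp (t•a)) * y‖ := by
      refine le_trans ?_ b3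
      apply mul_le_mul_of_nonneg_left _ hs.le
      have := hcErr
      linarith
    -- combine
    by_cases hσ : (Real.exp t - 1)/t * β - 1 ≤ 0
    · have h5 : (0:ℝ) ≤ 5 * Real.exp ((t+4)/2) := by positivity
      linarith
    · push_neg at hσ
      have hsq : (s * ((Real.exp t - 1)/t * β - 1))^2 ≤ s^2 * (5 * (4 * Real.exp (t+4))) := by
        calc (s * ((Real.exp t - 1)/t * β - 1))^2
            ≤ ‖x * (exp (t•a + s•c) - exp (t•a)) * y‖^2 := by
              apply pow_le_pow_left₀ (by nlinarith) hb3'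
          _ ≤ ‖x * (exp (t•a + s•c) - exp (t•a)) * x‖
              * ‖y * (exp (t•a + s•c) - exp (t•a)) * y‖ := hcs
          _ ≤ (s*5) * (s*(4*Real.exp (t+4))) := by
              apply mul_le_mul hb1' hb2' (norm_nonneg _) (by positivity)
          _ = s^2 * (5 * (4 * Real.exp (t+4))) := by ring
      have hsq2 : ((Real.exp t - 1)/t * β - 1)^2 ≤ 20 * Real.exp (t+4) := by
        have hs2 : (0:ℝ) < s^2 := by positivity
        have e1 : (s * ((Real.exp t - 1)/t * β - 1))^2
            = s^2 * ((Real.exp t - 1)/t * β - 1)^2 := by ring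
        rw [e1] at hsq
        have := (mul_le_mul_iff_right₀ hs2).mp hsq
        linarith
      have hfin : (Real.exp t - 1)/t * β - 1 ≤ 5 * Real.exp ((t+4)/2) := by
        have h6 : (5 * Real.exp ((t+4)/2))^2 = 25 * Real.exp (t+4) := by
          rw [mul_pow, sq (Real.exp ((t+4)/2)), ← Real.exp_add,
            show (t+4)/2 + (t+4)/2 = t+4 by ring]
          norm_num
        have h7 : ((Real.exp t - 1)/t * β - 1)^2 ≤ (5 * Real.exp ((t+4)/2))^2 := by
          rw [h6]
          nlinarith [Real.exp_pos (t+4)]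
        calc (Real.exp t - 1)/t * β - 1
            = |(Real.exp t - 1)/t * β - 1| := (abs_of_pos hσ).symm
          _ = Real.sqrt (((Real.exp t - 1)/t * β - 1)^2) := (Real.sqrt_sq_eq_abs _).symm
          _ ≤ Real.sqrt ((5 * Real.exp ((t+4)/2))^2) := Real.sqrt_le_sqrt h7
          _ = 5 * Real.exp ((t+4)/2) := Real.sqrt_sq (by positivity)
      linarith
  -- endgame: contradiction for large t
  set T : ℝ := max 1 (1312/β + 1) with hTdef
  have hT1 : 1 ≤ T := le_max_left _ _
  have hTbig : 1312/β + 1 ≤ T := le_max_right _ _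
  have h1 := main T hT1
  have hexpT : Real.exp T - 1 ≥ Real.exp T / 2 := by
    have h2 : (2:ℝ) ≤ Real.exp 1 := by
      have := Real.add_one_le_exp 1
      linarith
    have h3 : Real.exp 1 ≤ Real.exp T := Real.exp_le_exp.mpr hT1
    linarith
  have hsplit : Real.exp ((T+4)/2) ≤ 8 * Real.exp (T/2) := by
    rw [show (T+4)/2 = T/2 + 2 by ring, Real.exp_add]
    have h2 : Real.exp 2 ≤ 8 := by
      have h3 : Real.exp 2 = (Real.exp 1)^2 := by
        rw [sq, ← Real.exp_add]
        norm_num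
      have h4 : Real.exp 1 ≤ 2.7182818286 := Real.exp_one_lt_d9.le
      rw [h3]
      nlinarith [Real.exp_pos 1]
    nlinarith [Real.exp_pos (T/2)]
  have hlow : Real.exp (T/2) ≥ T^2/16 := by
    have h2 : Real.exp (T/2) = (Real.exp (T/4))^2 := by
      rw [sq, ← Real.exp_add, show T/4 + T/4 = T/2 by ring]
    have h3 := Real.add_one_le_exp (T/4)
    rw [h2]
    nlinarith [hT1]
  have hET : Real.exp T = (Real.exp (T/2))^2 := by
    rw [sq, ← Real.exp_add, show T/2 + T/2 = T by ring]
  -- from h1: (e^T/(2T)) β ≤ 1 + 40 e^{T/2}  ≤ 41 e^{T/2}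
  have h4 : Real.exp T / (2*T) * β ≤ 41 * Real.exp (T/2) := by
    have h5 : (Real.exp T - 1)/T * β ≥ Real.exp T/(2*T) * β := by
      apply mul_le_mul_of_nonneg_right _ hβ.le
      rw [div_le_div_iff₀ (by linarith) (by linarith)]
      nlinarith
    have h6 : 1 + 5 * Real.exp ((T+4)/2) ≤ 41 * Real.exp (T/2) := by
      have h7 : (1:ℝ) ≤ Real.exp (T/2) := by
        rw [show (1:ℝ) = Real.exp 0 by rw [Real.exp_zero]]
        apply Real.exp_le_exp.mpr
        linarith
      nlinarith [hsplit]
    linarith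
  -- hence e^{T/2} β ≤ 82 T, but e^{T/2} ≥ T²/16 → T ≤ 1312/β, contradiction
  have h8 : Real.exp (T/2) * β ≤ 82 * T := by
    rw [hET] at h4
    have h9 : (Real.exp (T/2))^2 * β ≤ 82 * T * Real.exp (T/2) := by
      have h10 : (0:ℝ) < 2*T := by linarith
      rw [div_mul_eq_mul_div, div_le_iff₀ h10] at h4
      nlinarith [Real.exp_pos (T/2)]
    nlinarith [Real.exp_pos (T/2)]
  have h11 : T^2/16 * β ≤ 82 * T := by
    nlinarith [hlow, hβ]
  have h12 : T ≤ 1312/β := by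
    rw [le_div_iff₀ hβ]
    nlinarith [hT1]
  linarith

end OrderHelpers

/-- (Wu) A unital C*-algebra is commutative if and only if the exponential function is
monotone on the self-adjoint elements. -/
theorem commutative_iff_exp_monotone
    {A : Type*} [CStarAlgebra A] [PartialOrder A] [StarOrderedRing A] :
    (∀ a b : A, a * b = b * a) ↔
      (∀ a b : A, IsSelfAdjoint a → IsSelfAdjoint b → a ≤ b →
        NormedSpace.exp a ≤ NormedSpace.exp b) := by
  constructor
  · intro comm a b ha hb hab
    exact forward_dir comm ha hb hab
  · intro H a b
    have hsa : ∀ h k : A, IsSelfAdjoint h → IsSelfAdjoint k → Commute h k := fun h k hh hk =>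
      backward_core H h k hh hk
    have ea := realPart_add_I_smul_imaginaryPart a
    have eb := realPart_add_I_smul_imaginaryPart b
    have c1 : Commute ((ℜ a : A)) ((ℜ b : A)) := hsa _ _ (ℜ a).2 (ℜ b).2
    have c2 : Commute ((ℜ a : A)) ((ℑ b : A)) := hsa _ _ (ℜ a).2 (ℑ b).2
    have c3 : Commute ((ℑ a : A)) ((ℜ b : A)) := hsa _ _ (ℑ a).2 (ℜ b).2
    have c4 : Commute ((ℑ a : A)) ((ℑ b : A)) := hsa _ _ (ℑ a).2 (ℑ b).2
    have : Commute a b := by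
      rw [← ea, ← eb]
      exact Commute.add_left
        (Commute.add_right c1 (c2.smul_right Complex.I))
        (Commute.add_right (c3.smul_left Complex.I) ((c4.smul_left Complex.I).smul_right Complex.I))
    exact this
end
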